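/- arXiv:1607.00658 — 4 statements merged into one kernel-verified Lean document; each statement's English description precedes it below -/
import Mathlib

section
/- Let G = (V,E) be a graph and G' the graph obtained from G by adding a universal vertex v* adjacent to all of V and two leaves ℓ₁, ℓ₂ adjacent only to v*. If G' has a connected zero forcing set of size at most k + 2, then G has a zero forcing set of size at most k. -/
/-- A vertex is (eventually) forced, starting from the initially colored set `S`,
under the zero forcing color change rule: a colored vertex all of whose other
neighbors are colored forces its remaining neighbor. -/
inductive SimpleGraph.Forced {V : Type*} (G : SimpleGraph V) (S : Set V) : V → Prop
  | init (v : V) (hv : v ∈ S) : SimpleGraph.Forced G S v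
  | force (u v : V) (hu : SimpleGraph.Forced G S u) (huv : G.Adj u v)
      (hrest : ∀ w, G.Adj u w → w ≠ v → SimpleGraph.Forced G S w) :
      SimpleGraph.Forced G S v

/-- `S` is a zero forcing set of `G`. -/
def SimpleGraph.IsZeroForcingSet {V : Type*} (G : SimpleGraph V) (S : Set V) : Prop :=
  ∀ v, G.Forced S v

/-- `S` is a connected zero forcing set of `G`. -/
def SimpleGraph.IsConnectedZFS {V : Type*} (G : SimpleGraph V) (S : Set V) : Prop :=
  G.IsZeroForcingSet S ∧ (G.induce S).Connected

/-- The zero forcing number `Z(G)`. -/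
noncomputable def SimpleGraph.zfNumber {V : Type*} (G : SimpleGraph V) : ℕ :=
  sInf {n | ∃ S : Set V, G.IsZeroForcingSet S ∧ S.ncard = n}

/-- The connected zero forcing number `Z_c(G)`. -/
noncomputable def SimpleGraph.czfNumber {V : Type*} (G : SimpleGraph V) : ℕ :=
  sInf {n | ∃ S : Set V, G.IsConnectedZFS S ∧ S.ncard = n}

/-- `P` is (the vertex set of) a connected component of `G − X`. -/
def SimpleGraph.IsCompOfDel {V : Type*} (G : SimpleGraph V) (X P : Set V) : Prop :=
  P.Nonempty ∧ Disjoint P X ∧ (G.induce P).Connected ∧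
    ∀ u ∈ P, ∀ w, G.Adj u w → w ∉ X → w ∈ P

/-- The induced subgraph `G[P]` is a path graph. -/
def SimpleGraph.IsPathGraphOn {V : Type*} (G : SimpleGraph V) (P : Set V) : Prop :=
  P.Nonempty ∧ (G.induce P).Connected ∧
    (∀ v ∈ P, (G.neighborSet v ∩ P).ncard ≤ 2) ∧
    ∃ v ∈ P, (G.neighborSet v ∩ P).ncard ≤ 1

/-- `P` is a pendant path attached to `v`: a path component of `G − v`,
one of whose ends (a base) is adjacent to `v`. -/
def SimpleGraph.IsPendantPath {V : Type*} (G : SimpleGraph V) (v : V) (P : Set V) : Prop :=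
  G.IsCompOfDel {v} P ∧ G.IsPathGraphOn P ∧
    ∃ b ∈ P, G.Adj v b ∧ (G.neighborSet b ∩ P).ncard ≤ 1

/-- `v` is a cut vertex of `G`. -/
def SimpleGraph.IsCutVertex {V : Type*} (G : SimpleGraph V) (v : V) : Prop :=
  ¬ (G.induce {v}ᶜ).Connected

/-- `G[B]` is connected and has no cut vertices. -/
def SimpleGraph.IsBiconnectedSet {V : Type*} (G : SimpleGraph V) (B : Set V) : Prop :=
  (G.induce B).Connected ∧
    ∀ v ∈ B, (B \ {v}).Nonempty → (G.induce (B \ {v})).Connected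

/-- `B` is (the vertex set of) a block of `G`: a maximal subgraph with no cut vertices. -/
def SimpleGraph.IsBlock {V : Type*} (G : SimpleGraph V) (B : Set V) : Prop :=
  G.IsBiconnectedSet B ∧ ∀ B', B ⊆ B' → G.IsBiconnectedSet B' → B' = B

/-- The induced subgraph `G[C]` is a cycle. -/
def SimpleGraph.IsCycleGraphOn {V : Type*} (G : SimpleGraph V) (C : Set V) : Prop :=
  3 ≤ C.ncard ∧ (G.induce C).Connected ∧ ∀ v ∈ C, (G.neighborSet v ∩ C).ncard = 2

/-- `D` is a (possibly empty) segment of the cycle `G[C]`: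
a proper set of consecutive vertices along the cycle. -/
def SimpleGraph.IsSegmentOf {V : Type*} (G : SimpleGraph V) (C D : Set V) : Prop :=
  D ⊆ C ∧ (D = ∅ ∨ ((G.induce D).Connected ∧ D ≠ C))

/-- The minimum degree of the induced subgraph `G[B]`. -/
noncomputable def SimpleGraph.minDegOn {V : Type*} (G : SimpleGraph V) (B : Set V) : ℕ :=
  sInf ((fun v => (G.neighborSet v ∩ B).ncard) '' B)

/-- `G − v` has at least three connected components. -/
def SimpleGraph.DelHasThreeComps {V : Type*} (G : SimpleGraph V) (v : V) : Prop :=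
  ∃ P₁ P₂ P₃ : Set V, G.IsCompOfDel {v} P₁ ∧ G.IsCompOfDel {v} P₂ ∧ G.IsCompOfDel {v} P₃ ∧
    Disjoint P₁ P₂ ∧ Disjoint P₁ P₃ ∧ Disjoint P₂ P₃

/-- `G − v` has exactly two connected components. -/
def SimpleGraph.DelHasTwoComps {V : Type*} (G : SimpleGraph V) (v : V) : Prop :=
  ∃ P₁ P₂ : Set V, G.IsCompOfDel {v} P₁ ∧ G.IsCompOfDel {v} P₂ ∧
    Disjoint P₁ P₂ ∧ P₁ ∪ P₂ = {v}ᶜ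


/-- The graph `G'` obtained from `G` by adding a universal vertex `v* = Sum.inr 0`
adjacent to all of `V`, and two leaves `ℓ₁ = Sum.inr 1`, `ℓ₂ = Sum.inr 2` adjacent
only to `v*`. -/
def augGraph {V : Type*} (G : SimpleGraph V) : SimpleGraph (V ⊕ Fin 3) :=
  SimpleGraph.fromRel (fun a b =>
    match a, b with
    | Sum.inl u, Sum.inl w => G.Adj u w
    | Sum.inl _, Sum.inr i => i = 0
    | Sum.inr i, Sum.inl _ => i = 0
    | Sum.inr i, Sum.inr j => i = 0 ∨ j = 0)



open Sum

variable {V : Type} {G : SimpleGraph V}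

lemma aug_adj_inl_inl {u w : V} : (augGraph G).Adj (inl u) (inl w) ↔ G.Adj u w := by
  constructor
  · rintro ⟨hne, h | h⟩
    · exact h
    · exact h.symm
  · intro h
    exact ⟨by simp [h.ne], Or.inl h⟩

lemma aug_adj_inl_inr {u : V} {i : Fin 3} : (augGraph G).Adj (inl u) (inr i) ↔ i = 0 := by
  constructor
  · rintro ⟨hne, h | h⟩ <;> exact h
  · rintro rfl
    exact ⟨by simp, Or.inl rfl⟩

lemma aug_adj_inr_inr {i j : Fin 3} : (augGraph G).Adj (inr i) (inr j) ↔ i ≠ j ∧ (i = 0 ∨ j = 0) := by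
  constructor
  · rintro ⟨hne, h | h⟩
    · exact ⟨by simpa using hne, h⟩
    · exact ⟨by simpa using hne, h.symm⟩
  · rintro ⟨hne, h⟩
    exact ⟨by simpa using hne, Or.inl h⟩

lemma pend_aux {W : Type*} (H : SimpleGraph W) (S : Set W) (x y z : W)
    (hxy : x ≠ y) (hxz : H.Adj x z) (hyz : H.Adj y z)
    (hx : ∀ w, H.Adj x w → w = z) (hy : ∀ w, H.Adj y w → w = z)
    (hxS : x ∉ S) (hyS : y ∉ S) : ¬ H.Forced S x := by
  have key : ∀ v, H.Forced S v → v ≠ x ∧ v ≠ y := by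
    intro v hv
    induction hv with
    | init v hv =>
      constructor <;> rintro rfl
      · exact hxS hv
      · exact hyS hv
    | force u v hu huv hrest ih ihr =>
      constructor <;> rintro rfl
      · have hu0 : u = z := hx u huv.symm
        subst hu0
        exact (ihr y hyz.symm hxy.symm).2 rfl
      · have hu0 : u = z := hy u huv.symm
        subst hu0
        exact (ihr x hxz.symm hxy).1 rfl
  intro hf
  exact (key x hf).1 rfl

lemma nbr_in_S {W : Type*} (H : SimpleGraph W) (S : Set W) (hconn : (H.induce S).Connected)
    (x y : W) (hx : x ∈ S) (hy : y ∈ S) (hne : x ≠ y) : ∃ z ∈ S, H.Adj x z := by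
  obtain ⟨w⟩ := hconn.preconnected ⟨x, hx⟩ ⟨y, hy⟩
  cases w with
  | nil => exact absurd rfl hne
  | @cons _ b _ h p => exact ⟨b.1, b.2, h⟩

lemma ncard_split [Fintype V] (S' : Set (V ⊕ Fin 3)) :
    S'.ncard = (inl ⁻¹' S' : Set V).ncard + (inr ⁻¹' S' : Set (Fin 3)).ncard := by
  have heq : S' = inl '' (inl ⁻¹' S') ∪ inr '' (inr ⁻¹' S') := by
    ext x
    cases x <;> simp
  have hdisj : Disjoint (inl '' (inl ⁻¹' S') : Set (V ⊕ Fin 3)) (inr '' (inr ⁻¹' S')) := by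
    rw [Set.disjoint_left]
    rintro a ⟨u, -, rfl⟩ ⟨i, -, h⟩
    exact (inr_ne_inl h).elim
  have := Set.ncard_union_eq hdisj (Set.toFinite _) (Set.toFinite _)
  rw [← heq, Set.ncard_image_of_injective _ inl_injective,
    Set.ncard_image_of_injective _ inr_injective] at this
  exact this

lemma lemB (S' : Set (V ⊕ Fin 3)) (b : Fin 3) (hb0 : b ≠ 0) (hb : inr b ∉ S')
    (hforce : (augGraph G).IsZeroForcingSet S') :
    G.IsZeroForcingSet (inl ⁻¹' S') := by
  set T := (inl ⁻¹' S' : Set V) with hT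
  have key : ∀ x, (augGraph G).Forced S' x →
      (∀ u, x = inl u → G.Forced T u) ∧ (x = inr b → ∀ u, G.Forced T u) := by
    intro x hx
    induction hx with
    | init v hv =>
      refine ⟨?_, ?_⟩
      · rintro u rfl; exact .init u hv
      · rintro rfl; exact absurd hv hb
    | force u v hu huv hrest ih ihr =>
      refine ⟨?_, ?_⟩
      · rintro t rfl
        match u, huv with
        | inl w, huv =>
          have hadj : G.Adj w t := aug_adj_inl_inl.mp huv
          refine .force w t (ih.1 w rfl) hadj ?_
          intro s hs hst
          exact (ihr (inl s) (aug_adj_inl_inl.mpr hs) (by simpa using hst)).1 s rfl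
        | inr i, huv =>
          have hi : i = 0 := aug_adj_inl_inr.mp huv.symm
          subst hi
          have h2 := (ihr (inr b) (aug_adj_inr_inr.mpr ⟨Ne.symm hb0, Or.inl rfl⟩)
            (by simp)).2 rfl
          exact h2 t
      · rintro rfl
        match u, huv with
        | inl w, huv => exact absurd (aug_adj_inl_inr.mp huv) hb0
        | inr j, huv =>
          have hj : j = 0 := by
            rcases (aug_adj_inr_inr.mp huv) with ⟨hne, h | h⟩
            · exact h
            · exact absurd h hb0
          subst hj
          intro t
          exact (ihr (inl t) (aug_adj_inl_inr.mpr rfl).symm (by simp)).1 t rfl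
  intro v
  exact (key (inl v) (hforce (inl v))).1 v rfl

lemma lemA (S' : Set (V ⊕ Fin 3)) (u₀ : V)
    (hiso : ∀ u, (∀ w, ¬ G.Adj u w) → inl u ∉ S' → u = u₀)
    (hforce : (augGraph G).IsZeroForcingSet S') :
    G.IsZeroForcingSet (insert u₀ (inl ⁻¹' S')) := by
  set T := insert u₀ (inl ⁻¹' S' : Set V) with hT
  have key : ∀ x, (augGraph G).Forced S' x → ∀ t, x = inl t → G.Forced T t := by
    intro x hx
    induction hx with
    | init v hv =>
      rintro t rfl
      exact .init t (Set.mem_insert_iff.mpr (Or.inr hv))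
    | force u v hu huv hrest ih ihr =>
      rintro t rfl
      match u, huv with
      | inl w, huv =>
        exact .force w t (ih w rfl) (aug_adj_inl_inl.mp huv)
          (fun s hs hst => ihr (inl s) (aug_adj_inl_inl.mpr hs) (by simpa using hst) s rfl)
      | inr i, huv =>
        have hi : i = 0 := aug_adj_inl_inr.mp huv.symm
        subst hi
        by_cases ht0 : t = u₀
        · exact .init t (by rw [hT, ht0]; exact Set.mem_insert _ _)
        have hall : ∀ s, s ≠ t → G.Forced T s := fun s hst =>
          ihr (inl s) (aug_adj_inl_inr.mpr rfl).symm (by simpa using hst) s rfl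
        by_cases hiso' : ∀ w, ¬ G.Adj t w
        · by_cases htS : inl t ∈ S'
          · exact .init t (Set.mem_insert_iff.mpr (Or.inr htS))
          · exact absurd (hiso t hiso' htS) ht0
        · push_neg at hiso'
          obtain ⟨w, hw⟩ := hiso'
          exact .force w t (hall w hw.ne') hw.symm (fun s hs hst => hall s hst)
  intro v
  exact key (inl v) (hforce (inl v)) v rfl

lemma leafnbr (b : Fin 3) (hb : b ≠ 0) :
    ∀ w, (augGraph G).Adj (inr b) w → w = inr (0 : Fin 3) := by
  intro w hw
  match w, hw with
  | inl u, hw => exact absurd (aug_adj_inl_inr.mp hw.symm) hb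
  | inr j, hw =>
    rcases aug_adj_inr_inr.mp hw with ⟨hne, h | h⟩
    · exact absurd h hb
    · rw [h]

lemma isonbr {u : V} (hu : ∀ w, ¬ G.Adj u w) :
    ∀ w, (augGraph G).Adj (inl u) w → w = inr (0 : Fin 3) := by
  intro w hw
  match w, hw with
  | inl t, hw => exact absurd (aug_adj_inl_inl.mp hw) (hu t)
  | inr j, hw => rw [aug_adj_inl_inr.mp hw]

lemma caseB_card [Fintype V] (S' : Set (V ⊕ Fin 3)) (hconn : ((augGraph G).induce S').Connected)
    (a : Fin 3) (ha0 : a ≠ 0) (ha : inr a ∈ S') {k : ℕ} (hcard : S'.ncard ≤ k + 2) :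
    (inl ⁻¹' S' : Set V).ncard ≤ k := by
  by_cases hT : (inl ⁻¹' S' : Set V) = ∅
  · simp [hT]
  · obtain ⟨u, hu⟩ := Set.nonempty_iff_ne_empty.mpr hT
    obtain ⟨z, hz, hadj⟩ := nbr_in_S _ S' hconn (inr a) (inl u) ha hu (by simp)
    have hz0 : z = inr (0 : Fin 3) := leafnbr a ha0 z hadj
    subst hz0
    have hsub : ({0, a} : Set (Fin 3)) ⊆ inr ⁻¹' S' := by
      rintro i (rfl | rfl) <;> assumption
    have h2 : 2 ≤ (inr ⁻¹' S' : Set (Fin 3)).ncard := by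
      calc 2 = ({0, a} : Set (Fin 3)).ncard := (Set.ncard_pair (Ne.symm ha0)).symm
        _ ≤ _ := Set.ncard_le_ncard hsub (Set.toFinite _)
    have := ncard_split S'
    omega



/-- If `G'` has a connected zero forcing set of size at most `k + 2`, then `G` has a
zero forcing set of size at most `k`. -/
theorem stmt13 {V : Type} [Fintype V] (G : SimpleGraph V) (k : ℕ)
    (h : ∃ S' : Set (V ⊕ Fin 3), (augGraph G).IsConnectedZFS S' ∧ S'.ncard ≤ k + 2) :
    ∃ S : Set V, G.IsZeroForcingSet S ∧ S.ncard ≤ k := by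
  obtain ⟨S', ⟨hforce, hconn⟩, hcard⟩ := h
  cases isEmpty_or_nonempty V with
  | inl hV =>
    exact ⟨∅, fun v => (hV.false v).elim, by simp⟩
  | inr hV =>
    by_cases h1 : inr 1 ∈ S' <;> by_cases h2 : inr 2 ∈ S'
    · -- case A: both leaves present
      have h0 : inr (0 : Fin 3) ∈ S' := by
        obtain ⟨z, hz, hadj⟩ := nbr_in_S _ S' hconn (inr 1) (inr 2) h1 h2 (by simp)
        have hz0 := leafnbr 1 (by decide) z hadj
        rwa [hz0] at hz
      have huniv : (inr ⁻¹' S' : Set (Fin 3)) = Set.univ := by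
        ext i
        simp only [Set.mem_univ, iff_true, Set.mem_preimage]
        fin_cases i <;> assumption
      have h3 : (inr ⁻¹' S' : Set (Fin 3)).ncard = 3 := by
        rw [huniv, Set.ncard_univ]
        simp
      have hsplit := ncard_split S'
      have hstep : ∀ u₀ : V, (∀ u, (∀ w, ¬ G.Adj u w) → inl u ∉ S' → u = u₀) →
          ∃ S : Set V, G.IsZeroForcingSet S ∧ S.ncard ≤ k := by
        intro u₀ hiso
        refine ⟨insert u₀ (inl ⁻¹' S'), lemA S' u₀ hiso hforce, ?_⟩
        have := Set.ncard_insert_le u₀ (inl ⁻¹' S' : Set V)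
        omega
      by_cases hex : ∃ u, (∀ w, ¬ G.Adj u w) ∧ inl u ∉ S'
      · obtain ⟨u₀, hu₀iso, hu₀S⟩ := hex
        refine hstep u₀ ?_
        intro u hu huS
        by_contra hne
        exact pend_aux (augGraph G) S' (inl u) (inl u₀) (inr 0) (by simpa using hne)
          (aug_adj_inl_inr.mpr rfl) (aug_adj_inl_inr.mpr rfl) (isonbr hu) (isonbr hu₀iso)
          huS hu₀S (hforce _)
      · exact hstep (Classical.arbitrary V)
          (fun u hu huS => absurd ⟨u, hu, huS⟩ hex)
    · -- leaf 1 present, leaf 2 missing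
      exact ⟨inl ⁻¹' S', lemB S' 2 (by decide) h2 hforce,
        caseB_card S' hconn 1 (by decide) h1 hcard⟩
    · -- leaf 2 present, leaf 1 missing
      exact ⟨inl ⁻¹' S', lemB S' 1 (by decide) h1 hforce,
        caseB_card S' hconn 2 (by decide) h2 hcard⟩
    · -- both leaves missing: impossible
      exact absurd (hforce (inr 1))
        (pend_aux (augGraph G) S' (inr 1) (inr 2) (inr 0) (by simp)
          (aug_adj_inr_inr.mpr ⟨by decide, Or.inr rfl⟩)
          (aug_adj_inr_inr.mpr ⟨by decide, Or.inr rfl⟩)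
          (leafnbr 1 (by decide)) (leafnbr 2 (by decide)) h1 h2)
end

section
/- Let G be a connected graph and C the vertex set of a block of G such that G[C] is a cycle. Then for any connected zero forcing set R of G, the set C \ R of cycle vertices excluded from R forms a single (possibly empty) segment, i.e., the excluded vertices are consecutive along the cycle. -/
/-! ### Auxiliary machinery -/

set_option linter.unusedSectionVars false

section Aux

open SimpleGraph

variable {V : Type} {G : SimpleGraph V}

/-- Reachability within a set, via walks of `G` whose support stays in `S`. -/
def RIn (G : SimpleGraph V) (S : Set V) (a b : V) : Prop :=
  ∃ w : G.Walk a b, ∀ x ∈ w.support, x ∈ S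

namespace RIn

lemma refl {S : Set V} {a : V} (ha : a ∈ S) : RIn G S a a :=
  ⟨Walk.nil, by simpa using ha⟩

lemma symm {S : Set V} {a b : V} (h : RIn G S a b) : RIn G S b a := by
  obtain ⟨w, hw⟩ := h
  exact ⟨w.reverse, by simpa using hw⟩

lemma trans {S : Set V} {a b c : V} (h : RIn G S a b) (h' : RIn G S b c) : RIn G S a c := by
  obtain ⟨w, hw⟩ := h; obtain ⟨w', hw'⟩ := h'
  refine ⟨w.append w', fun x hx => ?_⟩
  rw [Walk.mem_support_append_iff] at hx
  exact hx.elim (hw x) (hw' x)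

lemma mono {S T : Set V} (hST : S ⊆ T) {a b : V} (h : RIn G S a b) : RIn G T a b := by
  obtain ⟨w, hw⟩ := h; exact ⟨w, fun x hx => hST (hw x hx)⟩

lemma left_mem {S : Set V} {a b : V} (h : RIn G S a b) : a ∈ S := by
  obtain ⟨w, hw⟩ := h; exact hw a w.start_mem_support

lemma right_mem {S : Set V} {a b : V} (h : RIn G S a b) : b ∈ S := by
  obtain ⟨w, hw⟩ := h; exact hw b w.end_mem_support

lemma adj {S : Set V} {a b : V} (hab : G.Adj a b) (ha : a ∈ S) (hb : b ∈ S) : RIn G S a b :=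
  ⟨Walk.cons hab Walk.nil, by simp [ha, hb]⟩

lemma cons {S : Set V} {a b c : V} (hab : G.Adj a b) (ha : a ∈ S) (h : RIn G S b c) :
    RIn G S a c := (adj hab ha h.left_mem).trans h

end RIn

lemma rin_connected_iff {s : Set V} :
    (G.induce s).Connected ↔ s.Nonempty ∧ ∀ a ∈ s, ∀ b ∈ s, RIn G s a b := by
  rw [connected_induce_iff, Subgraph.connected_iff_forall_exists_walk_subgraph]
  simp only [Subgraph.induce_verts, Subgraph.verts_top]
  constructor
  · rintro ⟨hne, h⟩
    refine ⟨hne, fun a ha b hb => ?_⟩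
    obtain ⟨p, hp⟩ := h ha hb
    exact ⟨p, fun x hx => by
      have := hp.1 (by rw [Walk.mem_verts_toSubgraph]; exact hx)
      simpa using this⟩
  · rintro ⟨hne, h⟩
    refine ⟨hne, fun {a b} ha hb => ?_⟩
    obtain ⟨p, hp⟩ := h a ha b hb
    refine ⟨p, ⟨?_, ?_⟩⟩
    · intro x hx
      rw [Walk.mem_verts_toSubgraph] at hx
      simpa using hp x hx
    · intro x y hxy
      have hx := p.toSubgraph.edge_vert hxy
      have hy := p.toSubgraph.edge_vert hxy.symm
      rw [Walk.mem_verts_toSubgraph] at hx hy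
      simp only [Subgraph.induce_adj, Subgraph.top_adj]
      exact ⟨hp x hx, hp y hy, hxy.adj_sub⟩

/-- key "no ear" lemma from block maximality -/
lemma ear_lemma {C : Set V} (hB : G.IsBlock C) (hC3 : 3 ≤ C.ncard)
    {a c u w : V} (ha : a ∈ C) (hc : c ∈ C) (hau : G.Adj a u) (hwc : G.Adj w c)
    (huw : RIn G Cᶜ u w) : a = c := by
  classical
  by_contra hne
  obtain ⟨p0, hp0⟩ := huw
  set p : G.Walk u w := p0.bypass with hpdef
  have hpath : p.IsPath := p0.bypass_isPath
  have hpsupp : ∀ x ∈ p.support, x ∉ C := fun x hx => hp0 x (p0.support_bypass_subset hx)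
  set B' : Set V := C ∪ {x | x ∈ p.support} with hB'def
  have hCB' : C ⊆ B' := Set.subset_union_left
  have haB' : a ∈ B' := hCB' ha
  have hcB' : c ∈ B' := hCB' hc
  have hCpair : ∀ x ∈ C, ∀ y ∈ C, RIn G C x y := (rin_connected_iff.1 hB.1.1).2
  -- every x in B' reaches a within B'
  have hreach : ∀ x ∈ B', RIn G B' x a := by
    intro x hx
    rcases hx with hx | hx
    · exact (hCpair x hx a ha).mono hCB'
    · have t := p.takeUntil x hx
      refine RIn.trans ⟨(p.takeUntil x hx).reverse, fun y hy => ?_⟩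
        ((RIn.adj hau.symm (Or.inr ?_) haB').symm.symm)
      · right
        simp only [Walk.support_reverse, List.mem_reverse] at hy
        exact p.support_takeUntil_subset hx hy
      · exact p.start_mem_support
  have hconn : (G.induce B').Connected := by
    refine rin_connected_iff.2 ⟨⟨a, haB'⟩, fun x hx y hy => ?_⟩
    exact (hreach x hx).trans (hreach y hy).symm
  -- deletion connectivity
  have hdel : ∀ v ∈ B', (B' \ {v}).Nonempty → (G.induce (B' \ {v})).Connected := by
    intro v _ hne'
    -- C minus v is pairwise reachable
    have hCC : ∀ x ∈ C \ {v}, ∀ y ∈ C \ {v}, RIn G (C \ {v}) x y := by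
      by_cases hvC : v ∈ C
      · have hCCne : (C \ {v}).Nonempty := by
          obtain ⟨b, hb, hbv⟩ := Set.exists_ne_of_one_lt_ncard (by omega : 1 < C.ncard) v
          exact ⟨b, hb, by simpa using hbv⟩
        exact (rin_connected_iff.1 (hB.1.2 v hvC hCCne)).2
      · have : C \ {v} = C := by
          ext z; simp only [Set.mem_diff, Set.mem_singleton_iff, and_iff_left_iff_imp]
          rintro hz rfl; exact hvC hz
        rw [this]
        exact hCpair
    have hCsub : C \ {v} ⊆ B' \ {v} := Set.diff_subset_diff_left hCB'
    -- every x in B' \ {v} reaches some z in C \ {v} within B' \ {v}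
    have hz : ∀ x ∈ B' \ {v}, ∃ z ∈ C \ {v}, RIn G (B' \ {v}) x z := by
      rintro x ⟨hx, hxv⟩
      rw [Set.mem_singleton_iff] at hxv
      rcases hx with hxC | hxs
      · exact ⟨x, ⟨hxC, hxv⟩, RIn.refl ⟨Or.inl hxC, hxv⟩⟩
      · -- x on the path
        have hxc : x ≠ c := fun h => hpsupp x hxs (h ▸ hc)
        have hxa : x ≠ a := fun h => hpsupp x hxs (h ▸ ha)
        by_cases hv1 : v ∈ (p.takeUntil x hxs).support ∨ v = a
        · -- use dropUntil to w then edge to c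
          have hvd : v ∉ (p.dropUntil x hxs).support := by
            rcases hv1 with hv1 | rfl
            · -- nodup argument
              have hnd : p.support.Nodup := hpath.support_nodup
              have hsplit : ((p.takeUntil x hxs).append (p.dropUntil x hxs)) = p :=
                p.take_spec hxs
              have hs2 := congrArg Walk.support hsplit
              rw [Walk.support_append] at hs2
              rw [← hs2] at hnd
              have hdisj := List.disjoint_of_nodup_append hnd
              intro hvd
              rw [Walk.support_eq_cons] at hvd
              rcases List.mem_cons.1 hvd with rfl | hvd'
              · exact hxv rfl
              · exact hdisj hv1 hvd'
            · intro hvd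
              exact hpsupp _ (p.support_dropUntil_subset hxs hvd) ha
          have hvc : v ≠ c := by
            rcases hv1 with hv1 | rfl
            · intro h; exact hpsupp _ (p.support_takeUntil_subset hxs (h ▸ hv1)) hc
            · exact hne
          have hvc' : c ∉ ({v} : Set V) := by simpa using fun h => hvc h.symm
          refine ⟨c, ⟨hc, hvc'⟩, RIn.trans ⟨p.dropUntil x hxs, fun y hy => ?_⟩
            (RIn.adj hwc (⟨Or.inr (p.support_dropUntil_subset hxs
              (Walk.end_mem_support _)), ?_⟩) ⟨Or.inl hc, hvc'⟩)⟩
          · exact ⟨Or.inr (p.support_dropUntil_subset hxs hy), fun h => hvd (h ▸ hy)⟩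
          · intro h
            rw [Set.mem_singleton_iff] at h
            exact hvd (h ▸ Walk.end_mem_support _)
        · push_neg at hv1
          obtain ⟨hvt, hva⟩ := hv1
          have hav : a ∉ ({v} : Set V) := by simpa using fun h => hva h.symm
          refine ⟨a, ⟨ha, hav⟩,
            RIn.trans ⟨(p.takeUntil x hxs).reverse, fun y hy => ?_⟩
            (RIn.adj hau.symm ⟨Or.inr (p.support_takeUntil_subset hxs
              (by simpa using Walk.start_mem_support _)), ?_⟩
              ⟨Or.inl ha, hav⟩)⟩
          · simp only [Walk.support_reverse, List.mem_reverse] at hy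
            exact ⟨Or.inr (p.support_takeUntil_subset hxs hy), fun h => hvt (h ▸ hy)⟩
          · intro h
            rw [Set.mem_singleton_iff] at h
            exact hvt (h ▸ Walk.start_mem_support _)
    refine rin_connected_iff.2 ⟨hne', fun x hx y hy => ?_⟩
    obtain ⟨zx, hzx, hrx⟩ := hz x hx
    obtain ⟨zy, hzy, hry⟩ := hz y hy
    exact (hrx.trans (((hCC zx hzx zy hzy)).mono hCsub)).trans hry.symm
  have hBB : B' = C := hB.2 B' hCB' ⟨hconn, hdel⟩
  have : u ∈ B' := Or.inr p.start_mem_support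
  rw [hBB] at this
  exact hp0 u p0.start_mem_support this


section Counting

variable [DecidableEq V] [DecidableRel G.Adj]

/-- count of ordered edges from A to B -/
def bE (G : SimpleGraph V) [DecidableRel G.Adj] (A B : Finset V) : ℕ :=
  ∑ v ∈ A, (B.filter (G.Adj v)).card

lemma bE_eq_sum (A B : Finset V) :
    bE G A B = ∑ p ∈ A ×ˢ B, if G.Adj p.1 p.2 then 1 else 0 := by
  rw [Finset.sum_product]
  unfold bE
  refine Finset.sum_congr rfl fun v _ => ?_
  exact Finset.card_filter _ _

lemma bE_symm (A B : Finset V) : bE G A B = bE G B A := by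
  rw [bE_eq_sum, bE_eq_sum, Finset.sum_product, Finset.sum_comm]
  simp only [Finset.sum_product]
  congr 1; ext v; congr 1; ext u
  simp [G.adj_comm]

lemma bE_union_left {A A' B : Finset V} (h : Disjoint A A') :
    bE G (A ∪ A') B = bE G A B + bE G A' B := Finset.sum_union h

lemma bE_union_right {A B B' : Finset V} (h : Disjoint B B') :
    bE G A (B ∪ B') = bE G A B + bE G A B' := by
  unfold bE
  rw [← Finset.sum_add_distrib]
  congr 1; ext v
  rw [Finset.filter_union, Finset.card_union_of_disjoint (Finset.disjoint_filter_filter h)]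

lemma bE_even_diag (A : Finset V) : Even (bE G A A) := by
  have h : ((bE G A A : ℕ) : ZMod 2) = 0 := by
    rw [bE_eq_sum, Nat.cast_sum]
    refine Finset.sum_involution (fun a _ => Prod.swap a) ?_ ?_ ?_ ?_
    · intro a _
      by_cases h : G.Adj a.1 a.2
      · have h' : G.Adj a.2 a.1 := h.symm
        simp only [Prod.swap, h, h', if_true]
        decide
      · have h' : ¬ G.Adj a.2 a.1 := fun hh => h hh.symm
        simp [Prod.swap, h, h']
    · intro a _ ha he
      have hadj : G.Adj a.1 a.2 := by
        by_contra hc; simp [hc] at ha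
      have h1 : a.1 = a.2 := by
        have := congrArg Prod.fst he
        simpa using this.symm
      exact hadj.ne h1
    · intro a ha
      simp only [Finset.mem_product] at ha ⊢
      exact ⟨ha.2, ha.1⟩
    · intro a ha
      exact Prod.swap_swap a
  rw [Nat.even_iff]
  have := (ZMod.natCast_eq_zero_iff _ 2).1 h
  omega

lemma conn_bound : ∀ (n : ℕ) (A : Finset V), A.card ≤ n →
    (∀ a ∈ A, ∀ b ∈ A, RIn G ↑A a b) → 2 * (A.card - 1) ≤ bE G A A := by
  intro n
  induction n with
  | zero => intro A hcard _; interval_cases h : A.card <;> simp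
  | succ n ih =>
    intro A hcard hconn
    by_cases h1 : A.card ≤ 1
    · interval_cases h : A.card <;> simp
    push_neg at h1
    have hAne : A.Nonempty := Finset.card_pos.1 (by omega)
    obtain ⟨a, haA⟩ := hAne
    -- distance function
    set WS : V → Set ℕ := fun y => {m | ∃ w : G.Walk a y, (∀ s ∈ w.support, s ∈ A) ∧ w.length = m}
      with hWSdef
    have hWSne : ∀ y ∈ A, (WS y).Nonempty := by
      intro y hy
      obtain ⟨w, hw⟩ := hconn a haA y hy
      exact ⟨w.length, w, fun s hs => by exact_mod_cast hw s hs, rfl⟩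
    set d : V → ℕ := fun y => sInf (WS y) with hddef
    have hmin : ∀ y ∈ A, ∃ w : G.Walk a y, (∀ s ∈ w.support, s ∈ A) ∧ w.length = d y :=
      fun y hy => Nat.sInf_mem (hWSne y hy)
    have hd_le : ∀ y, ∀ w : G.Walk a y, (∀ s ∈ w.support, s ∈ A) → d y ≤ w.length :=
      fun y w hw => Nat.sInf_le ⟨w, hw, rfl⟩
    have hda : d a = 0 := Nat.le_zero.1 (hd_le a Walk.nil (by simpa using haA))
    obtain ⟨x, hxA, hmax⟩ := A.exists_max_image d ⟨a, haA⟩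
    have hdx : 1 ≤ d x := by
      obtain ⟨z, hzA, hza⟩ := Finset.exists_mem_ne h1 a
      have h1z : 1 ≤ d z := by
        by_contra h
        obtain ⟨w, _, hwl⟩ := hmin z hzA
        exact hza (Walk.eq_of_length_eq_zero (by omega : w.length = 0)).symm
      exact le_trans h1z (hmax z hzA)
    have hxa : x ≠ a := fun h => by rw [h, hda] at hdx; omega
    set A' := A.erase x with hA'def
    have haA' : a ∈ A' := Finset.mem_erase.2 ⟨hxa.symm, haA⟩
    -- minimal walks avoid x
    have hkey : ∀ y ∈ A', ∀ w : G.Walk a y, (∀ s ∈ w.support, s ∈ A) → w.length = d y →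
        x ∉ w.support := by
      intro y hy w hw hwl hx'
      have hyx : y ≠ x := (Finset.mem_erase.1 hy).1
      have hl1 : d x ≤ (w.takeUntil x hx').length :=
        hd_le x _ (fun s hs => hw s (w.support_takeUntil_subset hx' hs))
      have hsplit := congrArg Walk.length (w.take_spec hx')
      rw [Walk.length_append] at hsplit
      have hl2 : 1 ≤ (w.dropUntil x hx').length := by
        by_contra h
        exact hyx (Walk.eq_of_length_eq_zero (by omega : (w.dropUntil x hx').length = 0)).symm
      have := hmax y (Finset.mem_of_mem_erase hy)
      omega
    have hconn' : ∀ y ∈ A', ∀ z ∈ A', RIn G ↑A' y z := by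
      have hto : ∀ y ∈ A', RIn G ↑A' y a := by
        intro y hy
        obtain ⟨w, hw, hwl⟩ := hmin y (Finset.mem_of_mem_erase hy)
        have hx' := hkey y hy w hw hwl
        refine ⟨w.reverse, fun s hs => ?_⟩
        rw [Walk.support_reverse, List.mem_reverse] at hs
        have : s ∈ A := hw s hs
        refine Finset.mem_coe.2 ?_
        rw [hA'def, Finset.mem_erase]
        exact ⟨fun h => hx' (h ▸ hs), this⟩
      intro y hy z hz
      exact (hto y hy).trans (hto z hz).symm
    -- find neighbor of x in A'
    obtain ⟨wx, hwx, hwxl⟩ := hmin x hxA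
    obtain ⟨y2, hady2, p', hp'⟩ := Walk.exists_eq_cons_of_ne hxa wx.reverse
    have hy2A : y2 ∈ A := by
      have : y2 ∈ wx.reverse.support := by rw [hp']; simp
      rw [Walk.support_reverse, List.mem_reverse] at this
      exact hwx y2 this
    have hy2x : y2 ≠ x := hady2.ne'
    have hy2A' : y2 ∈ A' := Finset.mem_erase.2 ⟨hy2x, hy2A⟩
    -- split the count
    have hsplitA : A = {x} ∪ A' := by
      rw [hA'def]
      ext z
      simp only [Finset.mem_union, Finset.mem_singleton, Finset.mem_erase]
      constructor
      · intro hz; rcases eq_or_ne z x with rfl | hzx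
        · exact Or.inl rfl
        · exact Or.inr ⟨hzx, hz⟩
      · rintro (rfl | ⟨_, hz⟩); exacts [hxA, hz]
    have hdisj : Disjoint ({x} : Finset V) A' :=
      Finset.disjoint_singleton_left.2 (Finset.notMem_erase x A)
    have e1 : bE G A A = bE G {x} A + (bE G A' {x} + bE G A' A') := by
      calc bE G A A = bE G ({x} ∪ A') A := by rw [← hsplitA]
        _ = bE G {x} A + bE G A' A := bE_union_left hdisj
        _ = bE G {x} A + bE G A' ({x} ∪ A') := by rw [← hsplitA]
        _ = bE G {x} A + (bE G A' {x} + bE G A' A') := by rw [bE_union_right hdisj]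
    have e2 : 1 ≤ bE G ({x} : Finset V) A := by
      have : y2 ∈ A.filter (G.Adj x) := Finset.mem_filter.2 ⟨hy2A, hady2⟩
      have := Finset.card_pos.2 ⟨y2, this⟩
      simp only [bE, Finset.sum_singleton]
      omega
    have e3 : 1 ≤ bE G A' ({x} : Finset V) := by
      have hterm : 1 ≤ (({x} : Finset V).filter (G.Adj y2)).card :=
        Finset.card_pos.2 ⟨x, Finset.mem_filter.2 ⟨Finset.mem_singleton_self x, hady2.symm⟩⟩
      calc 1 ≤ (({x} : Finset V).filter (G.Adj y2)).card := hterm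
        _ ≤ bE G A' ({x} : Finset V) :=
          Finset.single_le_sum (f := fun v => (({x} : Finset V).filter (G.Adj v)).card)
            (fun i _ => Nat.zero_le _) hy2A'
    have e4 : 2 * (A'.card - 1) ≤ bE G A' A' := by
      refine ih A' ?_ hconn'
      rw [hA'def, Finset.card_erase_of_mem hxA]; omega
    have hcardA' : A'.card = A.card - 1 := by rw [hA'def, Finset.card_erase_of_mem hxA]
    rw [e1]
    rw [hcardA'] at e4
    omega

lemma cross_edge_aux : ∀ {x y : V} (w : G.Walk x y) (S T : Set V),
    (∀ v ∈ w.support, v ∈ S ∪ T) → x ∈ S → y ∈ T → Disjoint S T →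
    ∃ v u, v ∈ S ∧ u ∈ T ∧ G.Adj v u := by
  intro x y w
  induction w with
  | nil =>
    intro S T _ hx hy hd
    exact absurd hy (Set.disjoint_left.1 hd hx)
  | @cons x y' y h w ih =>
    intro S T hsup hx hy hd
    by_cases hy' : y' ∈ S
    · exact ih S T (fun v hv => hsup v (by simp [hv])) hy' hy hd
    · have : y' ∈ S ∪ T := hsup y' (by simp)
      exact ⟨x, y', hx, this.resolve_left hy', h⟩

lemma cross_edge {Cf : Finset V}
    (hCpair : ∀ x ∈ Cf, ∀ y ∈ Cf, RIn G ↑Cf x y) {S : Finset V} (hS : S ⊆ Cf)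
    (hSne : S.Nonempty) (hSne' : (Cf \ S).Nonempty) : 1 ≤ bE G S (Cf \ S) := by
  obtain ⟨s, hs⟩ := hSne
  obtain ⟨t, ht⟩ := hSne'
  obtain ⟨w, hw⟩ := hCpair s (hS hs) t (Finset.mem_sdiff.1 ht).1
  obtain ⟨v, u, hv, hu, hadj⟩ := cross_edge_aux w ↑S ↑(Cf \ S)
    (fun x hx => by
      have hxC : x ∈ Cf := by exact_mod_cast hw x hx
      by_cases hxS : x ∈ S
      · exact Or.inl (by exact_mod_cast hxS)
      · exact Or.inr (by simp [Finset.mem_sdiff, hxC, hxS]))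
    (by exact_mod_cast hs) (by exact_mod_cast ht)
    (by simp only [Finset.disjoint_coe]; exact Finset.disjoint_sdiff)
  calc 1 ≤ ((Cf \ S).filter (G.Adj v)).card :=
        Finset.card_pos.2 ⟨u, Finset.mem_filter.2 ⟨by exact_mod_cast hu, hadj⟩⟩
    _ ≤ bE G S (Cf \ S) :=
        Finset.single_le_sum (f := fun v => ((Cf \ S).filter (G.Adj v)).card)
          (fun i _ => Nat.zero_le _) (by exact_mod_cast hv)

set_option maxHeartbeats 1000000 in
lemma cycle_compl [Fintype V] {C : Set V} (hC3 : 3 ≤ C.ncard)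
    (hCconn : ∀ x ∈ C, ∀ y ∈ C, RIn G C x y)
    (hdeg : ∀ v ∈ C, (G.neighborSet v ∩ C).ncard = 2)
    {A : Set V} (hAC : A ⊆ C) (hAne : A.Nonempty)
    (hApair : ∀ a ∈ A, ∀ b ∈ A, RIn G A a b) (hBne : (C \ A).Nonempty) :
    ∀ x ∈ C \ A, ∀ y ∈ C \ A, RIn G (C \ A) x y := by
  intro b0 hb0 b1 hb1
  by_contra hnr
  set B : Set V := C \ A with hBdef
  set B1 : Set V := {x ∈ B | RIn G B b0 x} with hB1def
  set B2 : Set V := B \ B1 with hB2def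
  have hb0B1 : b0 ∈ B1 := ⟨hb0, RIn.refl hb0⟩
  have hb1B2 : b1 ∈ B2 := ⟨hb1, fun h => hnr h.2⟩
  have hnoadj : ∀ x ∈ B1, ∀ y ∈ B2, ¬ G.Adj x y := by
    rintro x ⟨hxB, hxr⟩ y ⟨hyB, hyn⟩ hadj
    exact hyn ⟨hyB, hxr.trans (RIn.adj hadj hxB hyB)⟩
  -- move to Finsets
  classical
  set Cf := C.toFinset with hCf
  set Af := A.toFinset with hAf
  set B1f := B1.toFinset with hB1f
  set B2f := B2.toFinset with hB2f
  set Bf := B.toFinset with hBf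
  have hmemC : ∀ x, x ∈ Cf ↔ x ∈ C := fun x => Set.mem_toFinset
  have hmemA : ∀ x, x ∈ Af ↔ x ∈ A := fun x => Set.mem_toFinset
  have hmemB1 : ∀ x, x ∈ B1f ↔ x ∈ B1 := fun x => Set.mem_toFinset
  have hmemB2 : ∀ x, x ∈ B2f ↔ x ∈ B2 := fun x => Set.mem_toFinset
  have hmemB : ∀ x, x ∈ Bf ↔ x ∈ B := fun x => Set.mem_toFinset
  have mB1 : ∀ x, x ∈ B1 ↔ (x ∈ C ∧ x ∉ A) ∧ RIn G B b0 x := by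
    intro x
    simp only [hB1def, Set.mem_setOf_eq, hBdef, Set.mem_diff]
  have mB2 : ∀ x, x ∈ B2 ↔ (x ∈ C ∧ x ∉ A) ∧ ¬ x ∈ B1 := by
    intro x
    simp only [hB2def, Set.mem_diff, hBdef]
  have hAfC : Af ⊆ Cf := fun x hx => (hmemC x).2 (hAC ((hmemA x).1 hx))
  have hdegF : ∀ v ∈ Cf, (Cf.filter (G.Adj v)).card = 2 := by
    intro v hv
    have h := hdeg v ((hmemC v).1 hv)
    have : G.neighborSet v ∩ C = ↑(Cf.filter (G.Adj v)) := by
      ext u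
      simp only [Set.mem_inter_iff, mem_neighborSet, Finset.coe_filter, Set.mem_setOf_eq,
        hmemC]
      tauto
    rw [this, Set.ncard_coe_finset] at h
    exact h
  -- generic: for S ⊆ Cf, 2 * S.card = bE G S S + bE G S (Cf \ S)
  have hsplit : ∀ S : Finset V, S ⊆ Cf → 2 * S.card = bE G S S + bE G S (Cf \ S) := by
    intro S hS
    have hU : S ∪ (Cf \ S) = Cf := Finset.union_sdiff_of_subset hS
    have hd : Disjoint S (Cf \ S) := Finset.disjoint_sdiff
    calc 2 * S.card = ∑ v ∈ S, 2 := by rw [Finset.sum_const, smul_eq_mul, mul_comm]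
      _ = ∑ v ∈ S, (Cf.filter (G.Adj v)).card :=
          Finset.sum_congr rfl (fun v hv => (hdegF v (hS hv)).symm)
      _ = bE G S Cf := rfl
      _ = bE G S (S ∪ (Cf \ S)) := by rw [hU]
      _ = bE G S S + bE G S (Cf \ S) := bE_union_right hd
  -- A side: boundary at most 2
  have hAfne : Af.Nonempty := ⟨hAne.choose, (hmemA _).2 hAne.choose_spec⟩
  have hApairF : ∀ a ∈ Af, ∀ b ∈ Af, RIn G ↑Af a b := by
    intro a ha b hb
    have := hApair a ((hmemA a).1 ha) b ((hmemA b).1 hb)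
    refine this.mono ?_
    intro z hz
    exact Finset.mem_coe.2 ((hmemA z).2 hz)
  have hAbound := conn_bound Af.card Af le_rfl hApairF
  have hAle2 : bE G Af (Cf \ Af) ≤ 2 := by
    have := hsplit Af hAfC
    have hc1 : 1 ≤ Af.card := Finset.card_pos.2 hAfne
    omega
  -- B side
  have hCpairF : ∀ x ∈ Cf, ∀ y ∈ Cf, RIn G ↑Cf x y := by
    intro x hx y hy
    refine (hCconn x ((hmemC x).1 hx) y ((hmemC y).1 hy)).mono ?_
    intro z hz; exact Finset.mem_coe.2 ((hmemC z).2 hz)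
  have hBige : ∀ Sf : Finset V, Sf ⊆ Cf → Sf.Nonempty → (Cf \ Sf).Nonempty →
      2 ≤ bE G Sf (Cf \ Sf) := by
    intro Sf hS hne hne'
    have h1 := cross_edge hCpairF hS hne hne'
    have h2 := hsplit Sf hS
    obtain ⟨k, hk⟩ := bE_even_diag (G := G) Sf
    omega
  have hB1sub : B1f ⊆ Cf := fun x hx => (hmemC x).2 ((mB1 x).1 ((hmemB1 x).1 hx)).1.1
  have hB2sub : B2f ⊆ Cf := fun x hx => (hmemC x).2 ((mB2 x).1 ((hmemB2 x).1 hx)).1.1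
  have hB1ne : B1f.Nonempty := ⟨b0, (hmemB1 b0).2 hb0B1⟩
  have hB2ne : B2f.Nonempty := ⟨b1, (hmemB2 b1).2 hb1B2⟩
  have haAf : Af.Nonempty := hAfne
  obtain ⟨a0, ha0⟩ := hAfne
  have hnotB1 : a0 ∉ B1f := by
    intro h
    exact ((mB1 a0).1 ((hmemB1 a0).1 h)).1.2 ((hmemA a0).1 ha0)
  have hnotB2 : a0 ∉ B2f := by
    intro h
    exact ((mB2 a0).1 ((hmemB2 a0).1 h)).1.2 ((hmemA a0).1 ha0)
  have hcompl1 : (Cf \ B1f).Nonempty := ⟨a0, Finset.mem_sdiff.2 ⟨hAfC ha0, hnotB1⟩⟩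
  have hcompl2 : (Cf \ B2f).Nonempty := ⟨a0, Finset.mem_sdiff.2 ⟨hAfC ha0, hnotB2⟩⟩
  -- decompose Cf \ Bi = Af ∪ Bj
  have hpart1 : Cf \ B1f = Af ∪ B2f := by
    ext x
    rw [Finset.mem_sdiff, Finset.mem_union, hmemC, hmemA, hmemB1, hmemB2, mB2]
    constructor
    · rintro ⟨hxC, hx1⟩
      by_cases hxA : x ∈ A
      · exact Or.inl hxA
      · exact Or.inr ⟨⟨hxC, hxA⟩, hx1⟩
    · rintro (hxA | ⟨⟨hxC, hxA⟩, hx1⟩)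
      · refine ⟨hAC hxA, fun h => ?_⟩
        exact (((mB1 x).1 h).1.2) hxA
      · exact ⟨hxC, hx1⟩
  have hpart2 : Cf \ B2f = Af ∪ B1f := by
    ext x
    rw [Finset.mem_sdiff, Finset.mem_union, hmemC, hmemA, hmemB1, hmemB2, mB2]
    constructor
    · rintro ⟨hxC, hx2⟩
      by_cases hxA : x ∈ A
      · exact Or.inl hxA
      · by_cases hx1 : x ∈ B1
        · exact Or.inr hx1
        · exact absurd ⟨⟨hxC, hxA⟩, hx1⟩ hx2
    · rintro (hxA | hx1)
      · refine ⟨hAC hxA, fun h => h.1.2 hxA⟩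
      · have h1 := (mB1 x).1 hx1
        exact ⟨h1.1.1, fun h => h.2 hx1⟩
  have hdisj1 : Disjoint Af B2f := by
    rw [Finset.disjoint_left]
    intro x hx h2
    exact ((mB2 x).1 ((hmemB2 x).1 h2)).1.2 ((hmemA x).1 hx)
  have hdisj2 : Disjoint Af B1f := by
    rw [Finset.disjoint_left]
    intro x hx h1
    exact ((mB1 x).1 ((hmemB1 x).1 h1)).1.2 ((hmemA x).1 hx)
  have hzero12 : bE G B1f B2f = 0 := by
    refine Finset.sum_eq_zero fun v hv => ?_
    rw [Finset.card_eq_zero, Finset.filter_eq_empty_iff]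
    intro u hu
    exact hnoadj v ((hmemB1 v).1 hv) u ((hmemB2 u).1 hu)
  have hzero21 : bE G B2f B1f = 0 := by
    refine Finset.sum_eq_zero fun v hv => ?_
    rw [Finset.card_eq_zero, Finset.filter_eq_empty_iff]
    intro u hu
    exact fun h => hnoadj u ((hmemB1 u).1 hu) v ((hmemB2 v).1 hv) h.symm
  have h1 := hBige B1f hB1sub hB1ne hcompl1
  have h2 := hBige B2f hB2sub hB2ne hcompl2
  rw [hpart1, bE_union_right hdisj1, hzero12] at h1
  rw [hpart2, bE_union_right hdisj2, hzero21] at h2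
  have hBdisj : Disjoint B1f B2f := by
    rw [Finset.disjoint_left]
    intro x hx h2'
    exact ((hmemB2 x).1 h2').2 ((hmemB1 x).1 hx)
  have hBunion : B1f ∪ B2f = Bf := by
    ext x
    rw [Finset.mem_union, hmemB1, hmemB2, hmemB, mB2]
    constructor
    · rintro (hx1 | ⟨hxB, _⟩)
      · exact ((mB1 x).1 hx1).1
      · exact hxB
    · intro hxB
      by_cases hx1 : x ∈ B1
      · exact Or.inl hx1
      · exact Or.inr ⟨hxB, hx1⟩
  have hBfeq : Bf = Cf \ Af := by
    ext x
    rw [hmemB, Finset.mem_sdiff, hmemC, hmemA, hBdef, Set.mem_diff]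
  have hsum : bE G B1f Af + bE G B2f Af = bE G Af (Cf \ Af) := by
    rw [← bE_union_left hBdisj, hBunion, bE_symm, hBfeq]
  omega


end Counting

section steps
variable {C R : Set V} (hC3 : 3 ≤ C.ncard)
  (hdeg : ∀ v ∈ C, (G.neighborSet v ∩ C).ncard = 2)
  (hear : ∀ {a c u w : V}, a ∈ C → c ∈ C → G.Adj a u → G.Adj w c → RIn G Cᶜ u w → a = c)

include hear in
/-- Step 1: a connected ZFS meets the cycle. -/
lemma step1 (hdeg : ∀ v ∈ C, (G.neighborSet v ∩ C).ncard = 2) (hC3 : 3 ≤ C.ncard)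
    (hzfs : ∀ v, G.Forced R v) (hconn : (G.induce R).Connected) : (R ∩ C).Nonempty := by
  by_contra hR
  rw [Set.not_nonempty_iff_eq_empty] at hR
  have hRC : ∀ r ∈ R, r ∈ Cᶜ := fun r hr hrC => (Set.eq_empty_iff_forall_notMem.1 hR r) ⟨hr, hrC⟩
  obtain ⟨hRne, hRpair⟩ := rin_connected_iff.1 hconn
  obtain ⟨r₀, hr₀⟩ := hRne
  set K : Set V := {x | RIn G Cᶜ r₀ x} with hK
  have hRK : ∀ r ∈ R, r ∈ K := fun r hr => (hRpair r₀ hr₀ r hr).mono (fun z hz => hRC z hz)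
  have hKC : ∀ k ∈ K, k ∉ C := fun k hk => hk.right_mem
  set N : Set V := {c | c ∈ C ∧ ∃ k ∈ K, G.Adj k c} with hN
  have hNsub : ∀ c₁ ∈ N, ∀ c₂ ∈ N, c₁ = c₂ := by
    rintro c₁ ⟨hc₁, k₁, hk₁, ha₁⟩ c₂ ⟨hc₂, k₂, hk₂, ha₂⟩
    exact hear hc₁ hc₂ ha₁.symm ha₂ ((hk₁.symm).trans hk₂)
  have hInv : ∀ v, G.Forced R v → v ∈ K ∪ N := by
    intro v hv
    induction hv with
    | init v hv => exact Or.inl (hRK v hv)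
    | force u v hu huv hrest ihu ihrest =>
      rcases ihu with huK | huN
      · by_cases hvC : v ∈ C
        · exact Or.inr ⟨hvC, u, huK, huv⟩
        · exact Or.inl (huK.trans (RIn.adj huv (hKC u huK) hvC))
      · exfalso
        have huC := huN.1
        obtain ⟨c₁, c₂, hcc, hset⟩ := Set.ncard_eq_two.1 (hdeg u huC)
        have hc₁ : c₁ ∈ G.neighborSet u ∩ C := by rw [hset]; exact Set.mem_insert _ _
        have hc₂ : c₂ ∈ G.neighborSet u ∩ C := by rw [hset]; exact Set.mem_insert_iff.2 (Or.inr rfl)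
        have key : ∀ c', c' ∈ G.neighborSet u ∩ C → c' = v := by
          rintro c' ⟨hadj, hc'C⟩
          by_contra hc'v
          rcases ihrest c' hadj hc'v with hK' | hN'
          · exact hKC c' hK' hc'C
          · have := hNsub c' hN' u huN
            exact G.irrefl (this ▸ hadj)
        exact hcc ((key c₁ hc₁).trans (key c₂ hc₂).symm)
  obtain ⟨c₀, hc₀C, hc₀N⟩ : ∃ c₀, c₀ ∈ C ∧ c₀ ∉ N := by
    by_contra h
    push_neg at h
    obtain ⟨x, hxC⟩ : C.Nonempty := Set.nonempty_of_ncard_ne_zero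
      (show C.ncard ≠ 0 by omega)
    obtain ⟨y, hyC, hyx⟩ := Set.exists_ne_of_one_lt_ncard (show 1 < C.ncard by omega) x
    exact hyx (hNsub y (h y hyC) x (h x hxC))
  rcases hInv c₀ (hzfs c₀) with h | h
  · exact hKC c₀ h hc₀C
  · exact hc₀N h

include hear in
/-- Step 2a walk projection -/
lemma step2a_aux : ∀ {x b : V} (w : G.Walk x b), (∀ s ∈ w.support, s ∈ R) → b ∈ C →
    ((x ∈ C → RIn G (C ∩ R) x b) ∧
     (x ∉ C → ∀ a, a ∈ C ∩ R → (∃ u, G.Adj a u ∧ RIn G Cᶜ u x) → RIn G (C ∩ R) a b)) := by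
  intro x b w
  induction w with
  | nil =>
    intro hsup hb
    refine ⟨fun hx => RIn.refl ⟨hb, hsup _ (by simp)⟩, fun hx => absurd hb hx⟩
  | @cons x y b hxy w ih =>
    intro hsup hb
    have hsup' : ∀ s ∈ w.support, s ∈ R := fun s hs => hsup s (by simp [hs])
    have hxR : x ∈ R := hsup x (by simp)
    obtain ⟨ih1, ih2⟩ := ih hsup' hb
    constructor
    · intro hxC
      by_cases hyC : y ∈ C
      · exact RIn.cons hxy ⟨hxC, hxR⟩ (ih1 hyC)
      · exact ih2 hyC x ⟨hxC, hxR⟩ ⟨y, hxy, RIn.refl hyC⟩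
    · rintro hxC a haCR ⟨u, hau, hux⟩
      by_cases hyC : y ∈ C
      · have hay : a = y := hear haCR.1 hyC hau hxy hux
        subst hay
        exact ih1 hyC
      · exact ih2 hyC a haCR ⟨u, hau, hux.trans (RIn.adj hxy hxC hyC)⟩


end steps
end Aux

/-- For a cycle block `C` of a connected graph `G`, the cycle vertices excluded from a
connected forcing set form a single (possibly empty) segment of the cycle. -/
theorem stmt14 {V : Type} [Fintype V] (G : SimpleGraph V) (hG : G.Connected)
    (C : Set V) (hB : G.IsBlock C) (hC : G.IsCycleGraphOn C) :
    ∀ R : Set V, G.IsConnectedZFS R → G.IsSegmentOf C (C \ R) := by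
  classical
  intro R hR
  obtain ⟨hzfs, hconn⟩ := hR
  obtain ⟨hC3, hCco, hdeg⟩ := hC
  have hear : ∀ {a c u w : V}, a ∈ C → c ∈ C → G.Adj a u → G.Adj w c → RIn G Cᶜ u w → a = c :=
    fun ha hc hau hwc huw => ear_lemma hB hC3 ha hc hau hwc huw
  refine ⟨Set.diff_subset, ?_⟩
  rcases Set.eq_empty_or_nonempty (C \ R) with hE | hNE
  · exact Or.inl hE
  right
  have hRC : (R ∩ C).Nonempty := step1 hear hdeg hC3 hzfs hconn
  constructor
  · -- connectivity of the complement segment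
    letI : DecidableRel G.Adj := Classical.decRel _
    have hCpair := (rin_connected_iff.1 hCco).2
    have hApair : ∀ a ∈ C ∩ R, ∀ b ∈ C ∩ R, RIn G (C ∩ R) a b := by
      intro a ha b hb
      obtain ⟨w, hw⟩ := (rin_connected_iff.1 hconn).2 a ha.2 b hb.2
      exact (step2a_aux hear w hw hb.1).1 ha.1
    have hCA : C \ (C ∩ R) = C \ R := by
      ext x
      simp only [Set.mem_diff, Set.mem_inter_iff, not_and]
      tauto
    obtain ⟨c, hcR, hcC⟩ := hRC
    have hANe : (C ∩ R).Nonempty := ⟨c, hcC, hcR⟩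
    have hBNe : (C \ (C ∩ R)).Nonempty := by rw [hCA]; exact hNE
    have hpair := cycle_compl hC3 hCpair hdeg Set.inter_subset_left hANe hApair hBNe
    rw [hCA] at hpair
    exact rin_connected_iff.2 ⟨hNE, hpair⟩
  · -- the complement is not the whole cycle
    obtain ⟨c, hcR, hcC⟩ := hRC
    intro hEq
    have : c ∈ C \ R := hEq.symm ▸ hcC
    exact this.2 hcR
end

section
/- Let G be a connected graph and C the vertex set of a block of G such that G[C] is a cycle. If R is a connected zero forcing set of G and the vertices of C excluded from R form a segment of C, then this segment contains at most two cut vertices of G, each of which has exactly two components in G − v, one of which is a pendant path attached to v. -/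
namespace ZFAux
set_option linter.unusedSectionVars false
open Set
attribute [local instance] Classical.propDecidable

variable {V : Type} [Fintype V]

/-- adjacency within a set -/
def adjIn (G : SimpleGraph V) (S : Set V) (a b : V) : Prop := a ∈ S ∧ b ∈ S ∧ G.Adj a b

lemma adjIn_symm (G : SimpleGraph V) (S : Set V) : Symmetric (adjIn G S) :=
  fun _ _ ⟨ha, hb, h⟩ => ⟨hb, ha, h.symm⟩

/-- chain connectivity within a set -/
def chainIn (G : SimpleGraph V) (S : Set V) (a b : V) : Prop :=
  Relation.ReflTransGen (adjIn G S) a b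

lemma chainIn_symm (G : SimpleGraph V) (S : Set V) {a b : V} (h : chainIn G S a b) :
    chainIn G S b a := by
  haveI : Std.Symm (adjIn G S) := ⟨fun x y hxy => adjIn_symm G S hxy⟩
  exact (Relation.ReflTransGen.stdSymm (r := adjIn G S)).symm _ _ h

lemma chainIn_mono (G : SimpleGraph V) {S T : Set V} (hST : S ⊆ T) {a b : V}
    (h : chainIn G S a b) : chainIn G T a b := by
  induction h with
  | refl => exact Relation.ReflTransGen.refl
  | tail _ hstep ih => exact ih.tail ⟨hST hstep.1, hST hstep.2.1, hstep.2.2⟩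

lemma chainIn_mem (G : SimpleGraph V) {S : Set V} {a b : V} (ha : a ∈ S)
    (h : chainIn G S a b) : b ∈ S := by
  induction h with
  | refl => exact ha
  | tail _ hstep _ => exact hstep.2.1

lemma connected_induce_of (G : SimpleGraph V) (S : Set V) (hne : S.Nonempty)
    (h : ∀ a ∈ S, ∀ b ∈ S, chainIn G S a b) : (G.induce S).Connected := by
  haveI : Nonempty S := hne.to_subtype
  refine ⟨fun a b => ?_⟩
  have key : ∀ x y : V, chainIn G S x y → ∀ (hx : x ∈ S) (hy : y ∈ S),
      (G.induce S).Reachable ⟨x, hx⟩ ⟨y, hy⟩ := by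
    intro x y hxy
    induction hxy with
    | refl => intro hx hy; rfl
    | tail _ hstep ih =>
      intro hx hy
      exact (ih hx hstep.1).trans (SimpleGraph.Adj.reachable (by exact hstep.2.2))
  exact key a b (h a a.2 b b.2) a.2 b.2

lemma chainIn_of_connected (G : SimpleGraph V) (S : Set V)
    (h : (G.induce S).Connected) : ∀ a ∈ S, ∀ b ∈ S, chainIn G S a b := by
  intro a ha b hb
  obtain ⟨p⟩ := h.preconnected ⟨a, ha⟩ ⟨b, hb⟩
  have key : ∀ (x y : S) (_ : (G.induce S).Walk x y), chainIn G S x y := by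
    intro x y p
    induction p with
    | nil => exact Relation.ReflTransGen.refl
    | @cons u w y huw _ ih =>
      exact Relation.ReflTransGen.head ⟨u.2, w.2, huw⟩ ih
  exact key _ _ p


/-- color sets at each step of the zero forcing process -/
def Fset (G : SimpleGraph V) (R : Set V) : ℕ → Set V
  | 0 => R
  | (n+1) => Fset G R n ∪
      {x | ∃ u ∈ Fset G R n, G.Adj u x ∧ ∀ w, G.Adj u w → w ≠ x → w ∈ Fset G R n}

lemma Fset_mono (G : SimpleGraph V) (R : Set V) {m n : ℕ} (h : m ≤ n) :
    Fset G R m ⊆ Fset G R n := by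
  induction n with
  | zero => simp_all
  | succ n ih =>
    rcases Nat.lt_or_ge m (n+1) with h' | h'
    · exact (ih (Nat.lt_succ_iff.mp h')).trans (by intro x hx; exact Or.inl hx)
    · have : m = n + 1 := le_antisymm h h'
      subst this; exact subset_rfl

lemma forced_exists_mem (G : SimpleGraph V) (R : Set V) {x : V}
    (hx : G.Forced R x) : ∃ n, x ∈ Fset G R n := by
  classical
  induction hx with
  | init v hv => exact ⟨0, hv⟩
  | force u v hu huv hrest ihu ihrest =>
    obtain ⟨nu, hnu⟩ := ihu
    set g : V → ℕ := fun w => if h : ∃ n, w ∈ Fset G R n then Nat.find h else 0 with hg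
    set N := max nu (Finset.univ.sup g) with hN
    refine ⟨N + 1, Or.inr ⟨u, Fset_mono G R (le_max_left _ _) hnu, huv, ?_⟩⟩
    intro w hw hwv
    have hex : ∃ n, w ∈ Fset G R n := ihrest w hw hwv
    have h1 : w ∈ Fset G R (g w) := by
      simp only [hg, dif_pos hex]; exact Nat.find_spec hex
    exact Fset_mono G R (le_trans (Finset.le_sup (Finset.mem_univ w)) (le_max_right _ _)) h1

variable (G : SimpleGraph V) (R : Set V)

/-- time at which a vertex gets forced -/
noncomputable def ftime (x : V) : ℕ :=
  if h : ∃ n, x ∈ Fset G R n then Nat.find h else 0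

lemma mem_Fset_ftime {x : V} (hx : G.Forced R x) : x ∈ Fset G R (ftime G R x) := by
  have h := forced_exists_mem G R hx
  simp only [ftime, dif_pos h]
  exact Nat.find_spec h

lemma ftime_le {x : V} {n : ℕ} (h : x ∈ Fset G R n) : ftime G R x ≤ n := by
  have hex : ∃ m, x ∈ Fset G R m := ⟨n, h⟩
  simp only [ftime, dif_pos hex]
  exact Nat.find_le h

lemma ftime_eq_zero {x : V} (hx : x ∈ R) : ftime G R x = 0 :=
  Nat.le_zero.mp (ftime_le G R (show x ∈ Fset G R 0 from hx))

lemma ftime_pos {x : V} (hx : G.Forced R x) (hxR : x ∉ R) : 1 ≤ ftime G R x := by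
  by_contra h
  have h0 : ftime G R x = 0 := by omega
  have := mem_Fset_ftime G R hx
  rw [h0] at this
  exact hxR this

lemma exists_forcer {x : V} (hx : G.Forced R x) (hxR : x ∉ R) :
    ∃ u, G.Adj u x ∧ u ∈ Fset G R (ftime G R x - 1) ∧
      ∀ w, G.Adj u w → w ≠ x → w ∈ Fset G R (ftime G R x - 1) := by
  have h1 : 1 ≤ ftime G R x := ftime_pos G R hx hxR
  have hmem := mem_Fset_ftime G R hx
  obtain ⟨m, hm⟩ : ∃ m, ftime G R x = m + 1 := ⟨ftime G R x - 1, by omega⟩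
  rw [hm] at hmem
  have hnot : x ∉ Fset G R m := by
    intro hc
    have := ftime_le G R hc
    omega
  rcases hmem with h | ⟨u, hu, hadj, hrest⟩
  · exact absurd h hnot
  · refine ⟨u, hadj, ?_, ?_⟩
    · rwa [hm, Nat.add_sub_cancel]
    · rw [hm, Nat.add_sub_cancel]; exact hrest

/-- the vertex that forced `x` -/
noncomputable def forcer (x : V) : V :=
  if h : ∃ u, G.Adj u x ∧ u ∈ Fset G R (ftime G R x - 1) ∧
      ∀ w, G.Adj u w → w ≠ x → w ∈ Fset G R (ftime G R x - 1) then h.choose else x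

lemma forcer_spec {x : V} (hx : G.Forced R x) (hxR : x ∉ R) :
    G.Adj (forcer G R x) x ∧ forcer G R x ∈ Fset G R (ftime G R x - 1) ∧
      ∀ w, G.Adj (forcer G R x) w → w ≠ x → w ∈ Fset G R (ftime G R x - 1) := by
  have h := exists_forcer G R hx hxR
  simp only [forcer, dif_pos h]
  exact h.choose_spec

lemma forcer_adj {x : V} (hx : G.Forced R x) (hxR : x ∉ R) :
    G.Adj (forcer G R x) x := (forcer_spec G R hx hxR).1

lemma ftime_forcer_lt {x : V} (hx : G.Forced R x) (hxR : x ∉ R) :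
    ftime G R (forcer G R x) < ftime G R x := by
  have h1 := ftime_pos G R hx hxR
  have h2 := ftime_le G R (forcer_spec G R hx hxR).2.1
  omega

lemma forcer_rule {x w : V} (hx : G.Forced R x) (hxR : x ∉ R)
    (hw : G.Adj (forcer G R x) w) (hwx : w ≠ x) :
    ftime G R w < ftime G R x := by
  have h1 := ftime_pos G R hx hxR
  have h2 := ftime_le G R ((forcer_spec G R hx hxR).2.2 w hw hwx)
  omega

lemma forcer_injective {x y : V} (hx : G.Forced R x) (hxR : x ∉ R)
    (hy : G.Forced R y) (hyR : y ∉ R) (hxy : forcer G R x = forcer G R y) : x = y := by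
  by_contra hne
  have h1 : ftime G R y < ftime G R x := by
    refine forcer_rule G R hx hxR ?_ (Ne.symm hne)
    rw [hxy]; exact forcer_adj G R hy hyR
  have h2 : ftime G R x < ftime G R y := by
    refine forcer_rule G R hy hyR ?_ hne
    rw [← hxy]; exact forcer_adj G R hx hxR
  omega


section Master

variable (G : SimpleGraph V) (R : Set V)

/-- Master structure lemma: a nonempty region `X` avoiding the forcing set `R`,
closed under adjacency except towards `v`, must be an induced path attached to `v`
at its first-forced vertex. -/
lemma master {X : Set V} {v : V}
    (hZF : ∀ x, G.Forced R x)
    (hXR : ∀ x ∈ X, x ∉ R) (hvX : v ∉ X)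
    (hclosed : ∀ u ∈ X, ∀ w, G.Adj u w → w ≠ v → w ∈ X)
    (hne : X.Nonempty) :
    ∃ b ∈ X, G.Adj v b ∧ (∀ y ∈ X, G.Adj v y → y = b) ∧
      forcer G R b = v ∧
      (∀ p ∈ X, ftime G R b ≤ ftime G R p) ∧
      ftime G R v < ftime G R b ∧
      (G.induce X).Connected ∧
      (∀ x ∈ X, (G.neighborSet x ∩ X).ncard ≤ 2) ∧
      (G.neighborSet b ∩ X).ncard ≤ 1 := by
  classical
  -- minimal-time vertex of X
  obtain ⟨b, hbX, hbmin⟩ := Set.exists_min_image X (ftime G R) (Set.toFinite X) hne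
  have hbR : b ∉ R := hXR b hbX
  have hbF : G.Forced R b := hZF b
  -- the forcer of b is v
  have hforcer_b : forcer G R b = v := by
    by_contra hvb
    have hmem : forcer G R b ∈ X :=
      hclosed b hbX (forcer G R b) (forcer_adj G R hbF hbR).symm hvb
    have := hbmin _ hmem
    have := ftime_forcer_lt G R hbF hbR
    omega
  have hvb : G.Adj v b := by rw [← hforcer_b]; exact forcer_adj G R hbF hbR
  -- v's only neighbor in X is b
  have huniq : ∀ y ∈ X, G.Adj v y → y = b := by
    intro y hyX hvy
    by_contra hyb
    have : ftime G R y < ftime G R b := by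
      have := forcer_rule G R hbF hbR (x := b) (w := y) (by rw [hforcer_b]; exact hvy) hyb
      exact this
    have := hbmin y hyX
    omega
  -- each x in X other than b is forced from within X
  have hforcer_mem : ∀ x ∈ X, x ≠ b → forcer G R x ∈ X := by
    intro x hxX hxb
    have hxR := hXR x hxX
    have hxF := hZF x
    by_contra hmem
    have hfv : forcer G R x = v := by
      by_contra hfv
      exact hmem (hclosed x hxX _ (forcer_adj G R hxF hxR).symm hfv)
    -- then v is adjacent to x, so x = b, contradiction
    have : G.Adj v x := by rw [← hfv]; exact forcer_adj G R hxF hxR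
    exact hxb (huniq x hxX this)
  -- the forcing-order relation on X
  set Stp : V → V → Prop := fun p q => q ∈ X ∧ forcer G R q = p with hStp
  set le' : V → V → Prop := fun p q => Relation.ReflTransGen Stp p q with hle'
  have hstep_time : ∀ {p q}, Stp p q → ftime G R p < ftime G R q := by
    intro p q hpq
    have := ftime_forcer_lt G R (hZF q) (hXR q hpq.1)
    rw [hpq.2] at this; exact this
  have hle_time : ∀ {p q}, le' p q → p = q ∨ ftime G R p < ftime G R q := by
    intro p q h
    induction h with
    | refl => exact Or.inl rfl
    | tail _ hstep ih =>
      rcases ih with rfl | ih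
      · exact Or.inr (hstep_time hstep)
      · exact Or.inr (lt_trans ih (hstep_time hstep))
  -- b reaches everything in X
  have hbreach : ∀ n, ∀ x ∈ X, ftime G R x = n → le' b x := by
    intro n
    induction n using Nat.strong_induction_on with
    | _ n ih =>
      intro x hxX hxn
      by_cases hxb : x = b
      · subst hxb; exact Relation.ReflTransGen.refl
      · have hu : forcer G R x ∈ X := hforcer_mem x hxX hxb
        have ht : ftime G R (forcer G R x) < n := by
          rw [← hxn]; exact ftime_forcer_lt G R (hZF x) (hXR x hxX)
        exact (ih _ ht _ hu rfl).tail ⟨hxX, rfl⟩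
  -- totality of le' on X
  have htotal : ∀ n, ∀ y ∈ X, ftime G R y = n → ∀ x ∈ X, le' x y ∨ le' y x := by
    intro n
    induction n using Nat.strong_induction_on with
    | _ n ih =>
      intro y hyX hyn x hxX
      by_cases hyb : y = b
      · subst hyb; exact Or.inr (hbreach _ x hxX rfl)
      · have huX : forcer G R y ∈ X := hforcer_mem y hyX hyb
        have ht : ftime G R (forcer G R y) < n := by
          rw [← hyn]; exact ftime_forcer_lt G R (hZF y) (hXR y hyX)
        rcases ih _ ht _ huX rfl x hxX with h | h
        · exact Or.inl (h.tail ⟨hyX, rfl⟩)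
        · -- le' (forcer y) x : either forcer y = x, or first step must go to y
          rcases Relation.ReflTransGen.cases_head h with rfl | ⟨c, hc, hcx⟩
          · exact Or.inl (Relation.ReflTransGen.single ⟨hyX, rfl⟩)
          · have hcy : c = y := by
              have := forcer_injective G R (hZF c) (hXR c hc.1) (hZF y) (hXR y hyX)
                (by rw [hc.2])
              exact this
            subst hcy; exact Or.inr hcx
  -- chord-freeness
  have hchord : ∀ x ∈ X, ∀ w ∈ X, G.Adj x w →
      forcer G R x = w ∨ forcer G R w = x := by
    have key : ∀ x ∈ X, ∀ w ∈ X, G.Adj x w → le' x w → forcer G R w = x := by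
      intro x hxX w hwX hadj hxw
      rcases Relation.ReflTransGen.cases_head hxw with rfl | ⟨c, hc, hcw⟩
      · exact absurd hadj (G.irrefl)
      · -- forcer c = x; if c = w done, else w was forced before c: contradiction
        by_cases hcweq : c = w
        · rw [← hcweq]; exact hc.2
        · exfalso
          have h1 : ftime G R c < ftime G R w := by
            rcases hle_time hcw with rfl | h; · exact absurd rfl hcweq
            · exact h
          have h2 : ftime G R w < ftime G R c := by
            have := forcer_rule G R (hZF c) (hXR c hc.1) (x := c) (w := w)
              (by rw [hc.2]; exact hadj) (Ne.symm hcweq)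
            exact this
          omega
    intro x hxX w hwX hadj
    rcases htotal _ x hxX rfl w hwX with h | h
    · exact Or.inl (key w hwX x hxX hadj.symm h)
    · exact Or.inr (key x hxX w hwX hadj h)
  -- degree bounds
  have hdeg : ∀ x ∈ X, (G.neighborSet x ∩ X).ncard ≤ 2 := by
    intro x hxX
    by_cases hz : ∃ z ∈ X, forcer G R z = x
    · obtain ⟨z, hzX, hzf⟩ := hz
      have hsub : G.neighborSet x ∩ X ⊆ {forcer G R x, z} := by
        intro w ⟨hw1, hw2⟩
        rcases hchord x hxX w hw2 hw1 with h | h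
        · exact Or.inl h.symm
        · right
          exact forcer_injective G R (hZF w) (hXR w hw2) (hZF z) (hXR z hzX)
            (by rw [h, hzf])
      calc (G.neighborSet x ∩ X).ncard ≤ ({forcer G R x, z} : Set V).ncard :=
            Set.ncard_le_ncard hsub (Set.toFinite _)
        _ ≤ 2 := by
            apply le_trans (Set.ncard_insert_le _ _)
            simp [Set.ncard_singleton]
    · have hsub : G.neighborSet x ∩ X ⊆ {forcer G R x} := by
        intro w ⟨hw1, hw2⟩
        rcases hchord x hxX w hw2 hw1 with h | h
        · exact h.symm
        · exact absurd ⟨w, hw2, h⟩ hz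
      calc (G.neighborSet x ∩ X).ncard ≤ ({forcer G R x} : Set V).ncard :=
            Set.ncard_le_ncard hsub (Set.toFinite _)
        _ ≤ 2 := by simp [Set.ncard_singleton]
  -- degree bound at b
  have hdegb : (G.neighborSet b ∩ X).ncard ≤ 1 := by
    have hss : (G.neighborSet b ∩ X).Subsingleton := by
      intro w hw w' hw'
      have h1 : forcer G R w = b := by
        rcases hchord b hbX w hw.2 hw.1 with h | h
        · rw [hforcer_b] at h; exact absurd h.symm (by intro hh; exact hvX (hh ▸ hw.2))
        · exact h
      have h1' : forcer G R w' = b := by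
        rcases hchord b hbX w' hw'.2 hw'.1 with h | h
        · rw [hforcer_b] at h; exact absurd h.symm (by intro hh; exact hvX (hh ▸ hw'.2))
        · exact h
      exact forcer_injective G R (hZF w) (hXR w hw.2) (hZF w') (hXR w' hw'.2)
        (by rw [h1, h1'])
    exact (Set.ncard_le_one (Set.toFinite _)).mpr hss
  -- connectivity
  have hconn : (G.induce X).Connected := by
    have hchain : ∀ x ∈ X, chainIn G X b x := by
      have key : ∀ {x}, le' b x → x ∈ X ∨ x = b := by
        intro x h
        induction h with
        | refl => exact Or.inr rfl
        | tail _ hstep _ => exact Or.inl hstep.1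
      have key2 : ∀ {x}, le' b x → chainIn G X b x := by
        intro x h
        induction h with
        | refl => exact Relation.ReflTransGen.refl
        | @tail c x hbc hstep ih =>
          have hcX : c ∈ X := by
            rcases key hbc with h | rfl
            · exact h
            · exact hbX
          refine ih.tail ⟨hcX, hstep.1, ?_⟩
          have := forcer_adj G R (hZF x) (hXR x hstep.1)
          rw [hstep.2] at this; exact this
      intro x hxX
      exact key2 (hbreach _ x hxX rfl)
    refine connected_induce_of G X hne ?_
    intro a ha b' hb'
    exact (chainIn_symm G X (hchain a ha)).trans (hchain b' hb')
  have hvtime : ftime G R v < ftime G R b := by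
    have h1 := ftime_pos G R hbF hbR
    have h2 : v ∈ Fset G R (ftime G R b - 1) := by
      rw [← hforcer_b]; exact (forcer_spec G R hbF hbR).2.1
    have := ftime_le G R h2
    omega
  exact ⟨b, hbX, hvb, huniq, hforcer_b, fun p hp => hbmin p hp, hvtime, hconn, hdeg, hdegb⟩

end Master

section Lists

variable (G : SimpleGraph V)

lemma reachable_of_chainIn {S : Set V} {a b : V} (h : chainIn G S a b)
    (ha : a ∈ S) (hb : b ∈ S) : (G.induce S).Reachable ⟨a, ha⟩ ⟨b, hb⟩ := by
  have key : ∀ x y, chainIn G S x y → ∀ (hx : x ∈ S) (hy : y ∈ S),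
      (G.induce S).Reachable ⟨x, hx⟩ ⟨y, hy⟩ := by
    intro x y hxy
    induction hxy with
    | refl => intro hx hy; rfl
    | tail _ hstep ih =>
      intro hx hy
      exact (ih hx hstep.1).trans (SimpleGraph.Adj.reachable (by exact hstep.2.2))
  exact key a b h ha hb

lemma list_chains_head (h0 : V) (t : List V) (hl : List.Chain' G.Adj (h0 :: t)) :
    ∀ a ∈ h0 :: t, chainIn G {z | z ∈ h0 :: t} h0 a := by
  induction t generalizing h0 with
  | nil =>
    intro a ha
    rcases List.mem_singleton.mp ha with rfl
    exact Relation.ReflTransGen.refl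
  | cons y t ih =>
    intro a ha
    rcases List.mem_cons.mp ha with rfl | ha'
    · exact Relation.ReflTransGen.refl
    · have hadj : G.Adj h0 y := (List.isChain_cons_cons.mp hl).1
      have htail : List.Chain' G.Adj (y :: t) := (List.isChain_cons_cons.mp hl).2
      have := ih y htail a ha'
      have hmono : chainIn G {z | z ∈ y :: t} y a →
          chainIn G {z | z ∈ h0 :: y :: t} y a := by
        apply chainIn_mono
        intro z hz
        exact List.mem_cons_of_mem _ hz
      exact Relation.ReflTransGen.head
        ⟨List.mem_cons_self, List.mem_cons_of_mem _ (List.mem_cons_self), hadj⟩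
        (hmono this)

lemma list_chains (l : List V) (hl : List.Chain' G.Adj l) :
    ∀ a ∈ l, ∀ b ∈ l, chainIn G {z | z ∈ l} a b := by
  intro a ha b hb
  cases l with
  | nil => simp at ha
  | cons h0 t =>
    exact (chainIn_symm G _ (list_chains_head G h0 t hl a ha)).trans
      (list_chains_head G h0 t hl b hb)

lemma split_first (C : Set V) :
    ∀ l : List V, (∃ z ∈ l, z ∈ C) →
      ∃ l1 y l2, l = l1 ++ y :: l2 ∧ y ∈ C ∧ ∀ z ∈ l1, z ∉ C := by
  intro l
  induction l with
  | nil => rintro ⟨z, hz, -⟩; simp at hz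
  | cons x t ih =>
    intro he
    by_cases hx : x ∈ C
    · exact ⟨[], x, t, rfl, hx, by simp⟩
    · have he' : ∃ z ∈ t, z ∈ C := by
        rcases he with ⟨z, hz, hzC⟩
        rcases List.mem_cons.mp hz with rfl | h
        · exact absurd hzC hx
        · exact ⟨z, h, hzC⟩
      obtain ⟨l1, y, l2, heq, hy, hl1⟩ := ih he'
      refine ⟨x :: l1, y, l2, by rw [heq]; rfl, hy, ?_⟩
      intro z hz
      rcases List.mem_cons.mp hz with rfl | h
      · exact hx
      · exact hl1 z h

lemma connected_of_hub {U : Set V} {h0 : V} (h0U : h0 ∈ U)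
    (h : ∀ a ∈ U, chainIn G U a h0) : (G.induce U).Connected :=
  connected_induce_of G U ⟨h0, h0U⟩
    (fun a ha b hb => (h a ha).trans (chainIn_symm G U (h b hb)))

lemma diff_singleton_nonempty {C : Set V} (h3 : 3 ≤ C.ncard) (w : V) :
    (C \ {w}).Nonempty := by
  rw [Set.diff_nonempty]
  intro hsub
  have := Set.ncard_le_ncard hsub (Set.toFinite _)
  rw [Set.ncard_singleton] at this
  omega

end Lists

section Block

variable (G : SimpleGraph V)

/-- No edge can leave a cycle block towards a vertex that can get back. -/
lemma no_outside_edge {C : Set V} (hB : G.IsBlock C) (hC3 : 3 ≤ C.ncard)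
    {x q : V} (hx : x ∈ C) (hq : q ∉ C) (hadj : G.Adj x q)
    {c0 : V} (hc0 : c0 ∈ C) (hchain : chainIn G {x}ᶜ q c0) : False := by
  classical
  have hqx : q ∈ ({x}ᶜ : Set V) := by
    simp only [Set.mem_compl_iff, Set.mem_singleton_iff]
    intro h; exact hq (h ▸ hx)
  have hc0x : c0 ∈ ({x}ᶜ : Set V) := chainIn_mem G hqx hchain
  obtain ⟨p⟩ := reachable_of_chainIn G hchain hqx hc0x
  set pp := p.bypass with hpp
  set sp := pp.support.map Subtype.val with hsp
  have hchain' : sp.Chain' G.Adj :=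
    List.isChain_map_of_isChain Subtype.val (fun a b h => h) pp.isChain_adj_support
  have hnodup : sp.Nodup := (p.bypass_isPath.support_nodup).map Subtype.val_injective
  have hspS : ∀ z ∈ sp, z ≠ x := by
    intro z hz
    obtain ⟨⟨z', hz'⟩, -, rfl⟩ := List.mem_map.mp hz
    simpa using hz'
  have hc0sp : c0 ∈ sp := List.mem_map.mpr ⟨_, pp.end_mem_support, rfl⟩
  have hheadq : sp.head? = some q := by
    rw [hsp]
    rw [pp.support_eq_cons]
    rfl
  obtain ⟨l1, y, l2, hspeq, hyC, hl1C⟩ := split_first C sp ⟨c0, hc0sp, hc0⟩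
  -- l1 starts with q
  obtain ⟨l1t, rfl⟩ : ∃ l1t, l1 = q :: l1t := by
    cases l1 with
    | nil =>
      exfalso
      rw [hspeq] at hheadq
      simp at hheadq
      exact hq (hheadq ▸ hyC)
    | cons a t =>
      rw [hspeq] at hheadq
      simp at hheadq
      exact ⟨t, by rw [hheadq]⟩
  set A : Set V := {z | z ∈ q :: l1t} with hA
  have hqA : q ∈ A := List.mem_cons_self
  have hsubsp : ∀ z ∈ (q :: l1t), z ∈ sp := by
    intro z hz; rw [hspeq]; exact List.mem_append_left _ hz
  have hAx : ∀ z ∈ A, z ≠ x := fun z hz => hspS z (hsubsp z hz)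
  have hAC : ∀ z ∈ A, z ∉ C := fun z hz => hl1C z hz
  have hxA : x ∉ A := fun h => hAx x h rfl
  have hysp : y ∈ sp := by rw [hspeq]; exact List.mem_append_right _ (List.mem_cons_self)
  have hyx : y ≠ x := hspS y hysp
  have hl1y : List.Chain' G.Adj ((q :: l1t) ++ [y]) := by
    apply hchain'.prefix
    refine ⟨l2, ?_⟩
    rw [hspeq]; simp
  have hl1chain : List.Chain' G.Adj (q :: l1t) :=
    hl1y.prefix ⟨[y], rfl⟩
  have hl1nodup : (q :: l1t).Nodup := by
    refine List.Nodup.sublist ?_ hnodup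
    rw [hspeq]
    exact List.sublist_append_left _ _
  set B' : Set V := C ∪ A with hB'
  have hCB' : C ⊆ B' := Set.subset_union_left
  -- chains within C and C minus a vertex
  have chainsC : ∀ a ∈ C, ∀ b ∈ C, chainIn G C a b :=
    chainIn_of_connected G C hB.1.1
  have chainsCd : ∀ w ∈ C, ∀ a ∈ C \ {w}, ∀ b ∈ C \ {w}, chainIn G (C \ {w}) a b :=
    fun w hw => chainIn_of_connected G _ (hB.1.2 w hw (diff_singleton_nonempty hC3 w))
  have chainsL : ∀ a ∈ (q :: l1t) ++ [y], ∀ b ∈ (q :: l1t) ++ [y],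
      chainIn G {z | z ∈ (q :: l1t) ++ [y]} a b := list_chains G _ hl1y
  -- main connectivity of B'
  have hconnB' : (G.induce B').Connected := by
    refine connected_of_hub G (hCB' hx) ?_
    intro a ha
    rcases ha with haC | haA
    · exact chainIn_mono G hCB' (chainsC a haC x hx)
    · have h1 : chainIn G {z | z ∈ (q :: l1t) ++ [y]} a q :=
        chainsL a (List.mem_append_left _ haA) q (List.mem_append_left _ hqA)
      have hLsub : {z | z ∈ (q :: l1t) ++ [y]} ⊆ B' := by
        intro z hz
        rcases List.mem_append.mp hz with h | h
        · exact Or.inr h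
        · rcases List.mem_singleton.mp h with rfl
          exact Or.inl hyC
      exact (chainIn_mono G hLsub h1).tail ⟨Or.inr hqA, hCB' hx, hadj.symm⟩
  -- biconnectivity of B'
  have hbiconn : G.IsBiconnectedSet B' := by
    refine ⟨hconnB', ?_⟩
    intro w hwB' hne'
    rcases hwB' with hwC | hwA
    · by_cases hwx : w = x
      · subst hwx
        -- hub y
        refine connected_of_hub G (U := B' \ {w}) ⟨Or.inl hyC, by simpa using hyx⟩ ?_
        intro a ⟨haB', hax⟩
        simp only [Set.mem_singleton_iff] at hax
        rcases haB' with haC | haA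
        · have := chainsCd w hwC a ⟨haC, by simpa using hax⟩ y ⟨hyC, by simpa using hyx⟩
          refine chainIn_mono G ?_ this
          intro z ⟨hz1, hz2⟩
          exact ⟨Or.inl hz1, hz2⟩
        · have h1 := chainsL a (List.mem_append_left _ haA) y
            (List.mem_append_right _ (List.mem_cons_self))
          refine chainIn_mono G ?_ h1
          intro z hz
          rcases List.mem_append.mp hz with h | h
          · exact ⟨Or.inr h, by simpa using hAx z h⟩
          · rcases List.mem_singleton.mp h with rfl
            exact ⟨Or.inl hyC, by simpa using hyx⟩
      · -- hub x
        have hwA' : w ∉ A := fun h => hAC w h hwC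
        have hxw : x ≠ w := fun h => hwx h.symm
        refine connected_of_hub G (U := B' \ {w})
          ⟨Or.inl hx, by simpa using hxw⟩ ?_
        intro a ⟨haB', hax⟩
        simp only [Set.mem_singleton_iff] at hax
        rcases haB' with haC | haA
        · have := chainsCd w hwC a ⟨haC, by simpa using hax⟩ x ⟨hx, by simpa using hxw⟩
          refine chainIn_mono G ?_ this
          intro z ⟨hz1, hz2⟩
          exact ⟨Or.inl hz1, hz2⟩
        · have h1 := list_chains G _ hl1chain a haA q hqA
          have hsubU : {z | z ∈ q :: l1t} ⊆ B' \ {w} := by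
            intro z hz
            exact ⟨Or.inr hz, by simpa using (fun h => hwA' (h ▸ hz) : z ≠ w)⟩
          refine (chainIn_mono G hsubU h1).tail
            ⟨hsubU hqA, ⟨Or.inl hx, by simpa using hxw⟩, hadj.symm⟩
    · -- w ∈ A
      have hwC : w ∉ C := hAC w hwA
      have hwx : w ≠ x := hAx w hwA
      have hCU : C ⊆ B' \ {w} := by
        intro z hz
        exact ⟨Or.inl hz, by simpa using (fun h => hwC (h ▸ hz) : z ≠ w)⟩
      refine connected_of_hub G (U := B' \ {w}) (hCU hx) ?_
      intro a ⟨haB', hax⟩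
      simp only [Set.mem_singleton_iff] at hax
      rcases haB' with haC | haA
      · exact chainIn_mono G hCU (chainsC a haC x hx)
      · -- split l1 at w
        obtain ⟨la, lb, hsplit⟩ := List.append_of_mem hwA
        have hmid : w ∉ la ++ lb := by
          have h1 : (q :: l1t).Nodup := hl1nodup
          rw [hsplit] at h1
          exact (List.nodup_cons.mp (List.nodup_middle.mp h1)).1
        have hwla : w ∉ la := fun h => hmid (List.mem_append_left _ h)
        have hwlb : w ∉ lb := fun h => hmid (List.mem_append_right _ h)
        have haA' : a ∈ la ∨ a ∈ lb := by
          have : a ∈ la ++ w :: lb := by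
            have h := haA
            rw [hA, Set.mem_setOf_eq, hsplit] at h
            exact h
          rcases List.mem_append.mp this with h | h
          · exact Or.inl h
          · rcases List.mem_cons.mp h with rfl | h
            · exact absurd rfl hax
            · exact Or.inr h
        rcases haA' with hala | halb
        · -- a in la : go to q then x
          have hlane : la ≠ [] := fun h => by rw [h] at hala; simp at hala
          obtain ⟨la', rfl⟩ : ∃ la', la = q :: la' := by
            cases la with
            | nil => exact absurd rfl hlane
            | cons a0 t0 =>
              have h2 : q :: l1t = a0 :: (t0 ++ w :: lb) := by simpa using hsplit
              injection h2 with h3 h4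
              exact ⟨t0, by rw [h3]⟩
          have hlachain : List.Chain' G.Adj (q :: la') := by
            apply hl1chain.prefix
            exact ⟨w :: lb, hsplit.symm⟩
          have h1 := list_chains G _ hlachain a hala q (List.mem_cons_self)
          have hsubU : {z | z ∈ q :: la'} ⊆ B' \ {w} := by
            intro z hz
            have hzA : z ∈ A := by
              rw [hA, Set.mem_setOf_eq, hsplit]
              exact List.mem_append_left _ hz
            exact ⟨Or.inr hzA, by simpa using (fun h => hwla (h ▸ hz) : z ≠ w)⟩
          exact (chainIn_mono G hsubU h1).tail ⟨hsubU (List.mem_cons_self), hCU hx, hadj.symm⟩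
        · -- a in lb : go to y then x
          have hlbchain : List.Chain' G.Adj (lb ++ [y]) := by
            have h1 : List.Chain' G.Adj ((la ++ (w :: lb)) ++ [y]) := by
              rw [← hsplit]; exact hl1y
            rw [List.append_assoc] at h1
            have h2 := (List.isChain_append.mp h1).2.1
            exact h2.tail
          have h1 := list_chains G _ hlbchain a (List.mem_append_left _ halb) y
            (List.mem_append_right _ (List.mem_cons_self))
          have hsubU : {z | z ∈ lb ++ [y]} ⊆ B' \ {w} := by
            intro z hz
            rcases List.mem_append.mp hz with h | h
            · have hzA : z ∈ A := by
                rw [hA, Set.mem_setOf_eq, hsplit]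
                exact List.mem_append_right _ (List.mem_cons_of_mem _ h)
              exact ⟨Or.inr hzA, by simpa using (fun hh => hwlb (hh ▸ h) : z ≠ w)⟩
            · rcases List.mem_singleton.mp h with rfl
              exact hCU hyC
          exact (chainIn_mono G hsubU h1).trans (chainIn_mono G hCU (chainsC y hyC x hx))
  have := hB.2 B' hCB' hbiconn
  have hqC : q ∈ C := by rw [← this]; exact Or.inr hqA
  exact hq hqC

end Block

section CutStructure

variable (G : SimpleGraph V) (R : Set V)

lemma cut_structure (hZF : ∀ x, G.Forced R x) (hRconn : (G.induce R).Connected)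
    {v : V} (hvR : v ∉ R) (hcut : G.IsCutVertex v) :
    ∃ Q P : Set V, ∃ b : V,
      G.IsCompOfDel {v} Q ∧ G.IsCompOfDel {v} P ∧ Disjoint Q P ∧ Q ∪ P = {v}ᶜ ∧
      R ⊆ Q ∧
      (∀ z, ∀ r ∈ R, chainIn G {v}ᶜ r z → z ∈ Q) ∧
      (∀ z ∈ Q, ∃ r ∈ R, chainIn G {v}ᶜ z r) ∧
      b ∈ P ∧ G.Adj v b ∧ (∀ y ∈ P, G.Adj v y → y = b) ∧ forcer G R b = v ∧
      (∀ p ∈ P, ftime G R b ≤ ftime G R p) ∧ ftime G R v < ftime G R b ∧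
      G.IsPendantPath v P := by
  classical
  obtain ⟨⟨r0, hr0⟩⟩ := hRconn.nonempty
  have hr0v : r0 ∈ ({v}ᶜ : Set V) := by
    simp only [Set.mem_compl_iff, Set.mem_singleton_iff]
    intro h; exact hvR (h ▸ hr0)
  have hRv : R ⊆ ({v}ᶜ : Set V) := by
    intro z hz
    simp only [Set.mem_compl_iff, Set.mem_singleton_iff]
    intro h; exact hvR (h ▸ hz)
  set Q : Set V := {y | chainIn G {v}ᶜ r0 y} with hQ
  have hr0Q : r0 ∈ Q := Relation.ReflTransGen.refl
  have hQsub : Q ⊆ ({v}ᶜ : Set V) := fun y hy => chainIn_mem G hr0v hy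
  have hvQ : v ∉ Q := fun h => by simpa using hQsub h
  have hQclosed : ∀ u ∈ Q, ∀ w, G.Adj u w → w ≠ v → w ∈ Q := by
    intro u hu w hadj hwv
    exact hu.tail ⟨hQsub hu, by simpa using hwv, hadj⟩
  have hRQ : R ⊆ Q := by
    intro r hr
    have := chainIn_of_connected G R hRconn r0 hr0 r hr
    exact chainIn_mono G hRv this
  have hQmax : ∀ z, ∀ r ∈ R, chainIn G {v}ᶜ r z → z ∈ Q := by
    intro z r hr hchain
    exact (hRQ hr).trans hchain
  have hQreach : ∀ z ∈ Q, ∃ r ∈ R, chainIn G {v}ᶜ z r := by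
    intro z hz
    exact ⟨r0, hr0, chainIn_symm G _ hz⟩
  -- connectivity of Q
  have hQup : ∀ y, chainIn G {v}ᶜ r0 y → chainIn G Q r0 y ∧ y ∈ Q := by
    intro y hy
    induction hy with
    | refl => exact ⟨Relation.ReflTransGen.refl, hr0Q⟩
    | @tail c d hrc hstep ih =>
      have hdQ : d ∈ Q := (ih.2).tail hstep
      exact ⟨(ih.1).tail ⟨ih.2, hdQ, hstep.2.2⟩, hdQ⟩
  have hQconn : (G.induce Q).Connected := by
    refine connected_induce_of G Q ⟨r0, hr0Q⟩ ?_
    intro a ha b hb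
    exact (chainIn_symm G Q (hQup a ha).1).trans (hQup b hb).1
  set P : Set V := {v}ᶜ \ Q with hP
  have hvP : v ∉ P := fun h => by simpa using h.1
  have hPR : ∀ x ∈ P, x ∉ R := fun x hx hxR => hx.2 (hRQ hxR)
  have hPclosed : ∀ u ∈ P, ∀ w, G.Adj u w → w ≠ v → w ∈ P := by
    intro u hu w hadj hwv
    refine ⟨by simpa using hwv, ?_⟩
    intro hwQ
    exact hu.2 (hQclosed w hwQ u hadj.symm (by
      intro h
      exact hvP (h ▸ hu)))
  have hPne : P.Nonempty := by
    by_contra hPe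
    apply hcut
    refine connected_induce_of G _ ⟨r0, hr0v⟩ ?_
    intro a ha b hb
    have haQ : a ∈ Q := by
      by_contra h
      exact hPe ⟨a, ha, h⟩
    have hbQ : b ∈ Q := by
      by_contra h
      exact hPe ⟨b, hb, h⟩
    refine chainIn_mono G hQsub ?_
    exact (chainIn_symm G Q (hQup a haQ).1).trans (hQup b hbQ).1
  obtain ⟨b, hbP, hvb, huniq, hforcerb, hbmin, hvtime, hPconn, hdeg, hdegb⟩ :=
    master G R hZF hPR hvP hPclosed hPne
  refine ⟨Q, P, b, ?_, ?_, ?_, ?_, hRQ, hQmax, hQreach, hbP, hvb, huniq, hforcerb,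
    hbmin, hvtime, ?_⟩
  · exact ⟨⟨r0, hr0Q⟩, Set.disjoint_singleton_right.mpr hvQ, hQconn,
      fun u hu w hadj hwv => hQclosed u hu w hadj (by simpa using hwv)⟩
  · exact ⟨hPne, Set.disjoint_singleton_right.mpr hvP, hPconn,
      fun u hu w hadj hwv => hPclosed u hu w hadj (by simpa using hwv)⟩
  · exact Set.disjoint_sdiff_right
  · exact Set.union_diff_cancel hQsub
  · refine ⟨⟨hPne, Set.disjoint_singleton_right.mpr hvP, hPconn,
      fun u hu w hadj hwv => hPclosed u hu w hadj (by simpa using hwv)⟩,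
      ⟨hPne, hPconn, hdeg, ⟨b, hbP, hdegb⟩⟩, ⟨b, hbP, hvb, hdegb⟩⟩

end CutStructure

section Propagate

lemma mem_pair_of_ncard_two {s : Set V} (h : s.ncard = 2) {a b : V}
    (ha : a ∈ s) (hb : b ∈ s) (hab : a ≠ b) : ∀ w ∈ s, w = a ∨ w = b := by
  obtain ⟨p, q, hpq, rfl⟩ := Set.ncard_eq_two.mp h
  intro w hw
  simp only [Set.mem_insert_iff, Set.mem_singleton_iff] at ha hb hw
  rcases ha with rfl | rfl <;> rcases hb with rfl | rfl <;> rcases hw with rfl | rfl <;> tauto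

variable (G : SimpleGraph V) (R : Set V)

lemma propagate (D C : Set V) (hDC : D ⊆ C)
    (hZF : ∀ x, G.Forced R x) (hDR : ∀ x ∈ D, x ∉ R)
    (hC2 : ∀ x ∈ C, (G.neighborSet x ∩ C).ncard = 2)
    (hkey1 : ∀ x ∈ D, ∀ w, G.Adj x w → w ∈ C ∨ ftime G R x < ftime G R w) :
    ∀ (l : List V) (a b : V), List.Chain' G.Adj (a :: b :: l) → (a :: b :: l).Nodup →
      (∀ z ∈ a :: b :: l, z ∈ D) → forcer G R a = b →
      ∃ c ∈ D, forcer G R c = (a :: b :: l).getLast (by simp) := by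
  intro l
  induction l with
  | nil =>
    intro a b _ _ hmem hfab
    exact ⟨a, hmem a (by simp), by simpa using hfab⟩
  | cons d l' ih =>
    intro a b hchain hnodup hmem hfab
    have hbD : b ∈ D := hmem b (by simp)
    have haD : a ∈ D := hmem a (by simp)
    have hbR : b ∉ R := hDR b hbD
    have haR : a ∉ R := hDR a haD
    have hfb_adj : G.Adj b (forcer G R b) := (forcer_adj G R (hZF b) hbR).symm
    have hfbC : forcer G R b ∈ C := by
      rcases hkey1 b hbD _ hfb_adj with h | h
      · exact h
      · have := ftime_forcer_lt G R (hZF b) hbR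
        omega
    have hadj_ab : G.Adj a b := (List.isChain_cons_cons.mp hchain).1
    have hchain2 : List.Chain' G.Adj (b :: d :: l') := (List.isChain_cons_cons.mp hchain).2
    have hadj_bd : G.Adj b d := (List.isChain_cons_cons.mp hchain2).1
    have had : a ≠ d := by
      have h1 : a ∉ b :: d :: l' := (List.nodup_cons.mp hnodup).1
      intro h
      exact h1 (h ▸ (by simp : d ∈ b :: d :: l'))
    have hpairN := mem_pair_of_ncard_two (hC2 b (hDC hbD))
      (show a ∈ G.neighborSet b ∩ C from ⟨hadj_ab.symm, hDC haD⟩)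
      (show d ∈ G.neighborSet b ∩ C from ⟨hadj_bd, hDC (hmem d (by simp))⟩) had
    have hfbd : forcer G R b = d := by
      rcases hpairN _ ⟨hfb_adj, hfbC⟩ with h | h
      · exfalso
        have h1 : ftime G R b < ftime G R a := by
          have := ftime_forcer_lt G R (hZF a) haR
          rw [hfab] at this; exact this
        have h2 : ftime G R a < ftime G R b := by
          have := ftime_forcer_lt G R (hZF b) hbR
          rw [h] at this; exact this
        omega
      · exact h
    have hres := ih b d hchain2 (List.nodup_cons.mp hnodup).2
      (fun z hz => hmem z (List.mem_cons_of_mem _ hz)) hfbd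
    obtain ⟨c, hcD, hc⟩ := hres
    refine ⟨c, hcD, ?_⟩
    rw [hc]
    exact (List.getLast_cons (by simp)).symm

end Propagate
end ZFAux

/-- A segment of a cycle block excluded from a connected forcing set contains at most two
cut vertices of `G`, each of which has exactly two components in `G − v`, one of which is
a pendant path attached to `v`. -/
theorem stmt15 {V : Type} [Fintype V] (G : SimpleGraph V) (hG : G.Connected)
    (C : Set V) (hB : G.IsBlock C) (hC : G.IsCycleGraphOn C)
    (R : Set V) (hR : G.IsConnectedZFS R) (hseg : G.IsSegmentOf C (C \ R)) :
    {v | v ∈ C \ R ∧ G.IsCutVertex v}.ncard ≤ 2 ∧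
    ∀ v ∈ C \ R, G.IsCutVertex v →
      G.DelHasTwoComps v ∧ ∃ P : Set V, G.IsPendantPath v P := by
  classical
  open ZFAux in
  by_cases hDe : C \ R = ∅
  · constructor
    · have he : {v | v ∈ C \ R ∧ G.IsCutVertex v} = ∅ := by
        ext z
        simp only [Set.mem_setOf_eq, Set.mem_empty_iff_false, iff_false, not_and]
        intro hz
        rw [hDe] at hz
        exact absurd hz (Set.notMem_empty z)
      rw [he]; simp
    · intro v hv
      rw [hDe] at hv
      exact absurd hv (Set.notMem_empty v)
  · have hZF : ∀ x, G.Forced R x := hR.1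
    have hRconn := hR.2
    obtain ⟨hDconn, hDC⟩ := hseg.2.resolve_left hDe
    have hC3 := hC.1
    have hC2 := hC.2.2
    -- a vertex of C in R
    obtain ⟨r1, hr1C, hr1R⟩ : ∃ r ∈ C, r ∈ R := by
      by_contra h
      push_neg at h
      apply hDC
      ext z
      exact ⟨fun hz => hz.1, fun hz => ⟨hz, h z hz⟩⟩
    -- structure of each cut vertex of the segment
    have hstruct : ∀ v ∈ C \ R, G.IsCutVertex v →
        ∃ P b, G.DelHasTwoComps v ∧ G.IsPendantPath v P ∧ b ∈ P ∧ b ∉ C ∧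
          forcer G R b = v ∧ (∀ w, G.Adj v w → w ∈ C ∨ w ∈ P) ∧
          (∀ p ∈ P, ftime G R v < ftime G R p) ∧ b ∉ R := by
      intro v hv hcut
      have hvC : v ∈ C := hv.1
      have hvR : v ∉ R := hv.2
      obtain ⟨Q, P, b, hcompQ, hcompP, hdisj, hunion, hRQ, hQmax, hQreach, hbP, hvb,
        huniq, hforcerb, hbmin, hvtime, hpend⟩ := cut_structure G R hZF hRconn hvR hcut
      have hRv : R ⊆ ({v}ᶜ : Set V) := by
        intro z hz
        simp only [Set.mem_compl_iff, Set.mem_singleton_iff]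
        intro h; exact hvR (h ▸ hz)
      have hvP : v ∉ P := by
        intro h
        have := hcompP.2.1
        rw [Set.disjoint_singleton_right] at this
        exact this h
      have hCvQ : ∀ c ∈ C, c ≠ v → c ∈ Q := by
        intro c hcC hcv
        have hr1v : r1 ≠ v := fun h => hvR (h ▸ hr1R)
        have hchain : chainIn G (C \ {v}) r1 c :=
          chainIn_of_connected G _ (hB.1.2 v hvC (diff_singleton_nonempty hC3 v)) r1
            ⟨hr1C, by simpa using hr1v⟩ c ⟨hcC, by simpa using hcv⟩
        refine hQmax c r1 hr1R (chainIn_mono G ?_ hchain)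
        intro z hz
        simpa using hz.2
      have hPC : ∀ p ∈ P, p ∉ C := by
        intro p hp hpC
        have hpv : p ≠ v := fun h => hvP (h ▸ hp)
        exact (Set.disjoint_right.mp hdisj hp) (hCvQ p hpC hpv)
      have hnbr : ∀ w, G.Adj v w → w ∈ C ∨ w ∈ P := by
        intro w hadj
        by_contra h
        push_neg at h
        obtain ⟨hwC, hwP⟩ := h
        have hwv : w ≠ v := fun hh => G.irrefl (hh ▸ hadj)
        have hwQP : w ∈ Q ∪ P := by
          rw [hunion]
          simpa using hwv
        have hwQ : w ∈ Q := by
          rcases hwQP with hq | hp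
          · exact hq
          · exact absurd hp hwP
        obtain ⟨r, hrR, hchain⟩ := hQreach w hwQ
        have hchain2 : chainIn G {v}ᶜ w r1 :=
          hchain.trans (chainIn_mono G hRv
            (chainIn_of_connected G R hRconn r hrR r1 hr1R))
        exact no_outside_edge G hB hC3 hvC hwC hadj hr1C hchain2
      have hbR : b ∉ R := fun h => (Set.disjoint_right.mp hdisj hbP) (hRQ h)
      exact ⟨P, b, ⟨Q, P, hcompQ, hcompP, hdisj, hunion⟩, hpend, hbP, hPC b hbP,
        hforcerb, hnbr, fun p hp => lt_of_lt_of_le hvtime (hbmin p hp), hbR⟩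
    refine ⟨?_, fun v hv hcut => by
      obtain ⟨P, b, h1, h2, -⟩ := hstruct v hv hcut
      exact ⟨h1, P, h2⟩⟩
    -- the counting part
    have hDR : ∀ x ∈ C \ R, x ∉ R := fun x hx => hx.2
    have hDsubC : (C \ R) ⊆ C := Set.diff_subset
    have hkey1 : ∀ x ∈ C \ R, ∀ w, G.Adj x w → w ∈ C ∨ ftime G R x < ftime G R w := by
      intro x hx w hadj
      by_cases hcut : G.IsCutVertex x
      · obtain ⟨P, b, -, -, -, -, -, hnbr, htimes, -⟩ := hstruct x hx hcut
        rcases hnbr w hadj with h | h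
        · exact Or.inl h
        · exact Or.inr (htimes w h)
      · left
        by_contra hwC
        have hconn' : (G.induce ({x}ᶜ : Set V)).Connected := not_not.mp hcut
        have hxC : x ∈ C := hx.1
        have hxR : x ∉ R := hx.2
        have hr1x : r1 ≠ x := fun h => hxR (h ▸ hr1R)
        have hwx : w ≠ x := fun h => G.irrefl (h ▸ hadj)
        have hchain : chainIn G {x}ᶜ w r1 :=
          chainIn_of_connected G _ hconn' w (by simpa using hwx) r1 (by simpa using hr1x)
        exact no_outside_edge G hB hC3 hxC hwC hadj hr1C hchain
    have hkey2 : ∀ x ∈ C \ R, G.IsCutVertex x → ∀ w ∈ C, w ∉ R → forcer G R w ≠ x := by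
      intro x hx hcut w hwC hwR heq
      obtain ⟨P, b, -, -, hbP, hbC, hfb, -, -, hbR⟩ := hstruct x hx hcut
      have : w = b := forcer_injective G R (hZF w) hwR (hZF b) hbR (by rw [heq, hfb])
      exact hbC (this ▸ hwC)
    -- any two distinct cut vertices of the segment are adjacent
    have hpair : ∀ u ∈ C \ R, G.IsCutVertex u → ∀ v ∈ C \ R, G.IsCutVertex v →
        u ≠ v → G.Adj u v := by
      intro u hu hcutu v hv hcutv huv
      by_contra hnadj
      obtain ⟨p⟩ := hDconn.preconnected ⟨u, hu⟩ ⟨v, hv⟩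
      set sp := p.bypass.support.map Subtype.val with hsp
      have hchain' : sp.Chain' G.Adj :=
        List.isChain_map_of_isChain Subtype.val (fun a b h => h) p.bypass.isChain_adj_support
      have hnodup : sp.Nodup := (p.bypass_isPath.support_nodup).map Subtype.val_injective
      have hmemD : ∀ z ∈ sp, z ∈ C \ R := by
        intro z hz
        obtain ⟨⟨z', hz'⟩, -, rfl⟩ := List.mem_map.mp hz
        exact hz'
      have hlastv : sp.getLast? = some v := by
        rw [hsp]
        have h0 : p.bypass.support.getLast? = some (⟨v, hv⟩ : {x // x ∈ C \ R}) := by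
          rw [List.getLast?_eq_getLast (l := p.bypass.support) (by simp), p.bypass.getLast_support]
        rw [List.getLast?_map, h0]
        rfl
      obtain ⟨t, hspt⟩ : ∃ t, sp = u :: t := by
        have : sp.head? = some u := by
          rw [hsp, p.bypass.support_eq_cons]
          rfl
        cases hsp' : sp with
        | nil => rw [hsp'] at this; simp at this
        | cons a t =>
          rw [hsp'] at this
          simp at this
          exact ⟨t, by rw [this]⟩
      obtain ⟨x1, t2, ht⟩ : ∃ x1 t2, t = x1 :: t2 := by
        cases t with
        | nil =>
          exfalso
          apply huv
          have h1 : sp.getLast? = some v := hlastv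
          rw [hspt] at h1
          simpa using h1
        | cons x1 t2 => exact ⟨x1, t2, rfl⟩
      obtain ⟨x2, t3, ht2⟩ : ∃ x2 t3, t2 = x2 :: t3 := by
        cases t2 with
        | nil =>
          exfalso
          apply hnadj
          have hx1v : x1 = v := by
            have h1 : sp.getLast? = some v := hlastv
            rw [hspt, ht] at h1
            simpa using h1
          have : G.Adj u x1 := by
            have h := hchain'
            rw [hspt, ht] at h
            exact (List.isChain_cons_cons.mp h).1
          rwa [hx1v] at this
        | cons x2 t3 => exact ⟨x2, t3, rfl⟩
      rw [ht2] at ht; rw [ht] at hspt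
      -- now sp = u :: x1 :: x2 :: t3
      have hchainsp : List.Chain' G.Adj (u :: x1 :: x2 :: t3) := by rw [← hspt]; exact hchain'
      have hnodupsp : (u :: x1 :: x2 :: t3).Nodup := by rw [← hspt]; exact hnodup
      have hmemsp : ∀ z ∈ u :: x1 :: x2 :: t3, z ∈ C \ R := by
        intro z hz; exact hmemD z (by rw [hspt]; exact hz)
      have hx1D : x1 ∈ C \ R := hmemsp x1 (by simp)
      have hx2D : x2 ∈ C \ R := hmemsp x2 (by simp)
      have hadj_ux1 : G.Adj u x1 := (List.isChain_cons_cons.mp hchainsp).1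
      have hchain2 : List.Chain' G.Adj (x1 :: x2 :: t3) := (List.isChain_cons_cons.mp hchainsp).2
      have hadj_x1x2 : G.Adj x1 x2 := (List.isChain_cons_cons.mp hchain2).1
      have hux2 : u ≠ x2 := by
        have h1 : u ∉ x1 :: x2 :: t3 := (List.nodup_cons.mp hnodupsp).1
        intro h
        exact h1 (h ▸ (by simp : x2 ∈ x1 :: x2 :: t3))
      -- base step : forcer x1 = x2
      have hx1R : x1 ∉ R := hx1D.2
      have hfx1_adj : G.Adj x1 (forcer G R x1) := (forcer_adj G R (hZF x1) hx1R).symm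
      have hfx1C : forcer G R x1 ∈ C := by
        rcases hkey1 x1 hx1D _ hfx1_adj with h | h
        · exact h
        · have := ftime_forcer_lt G R (hZF x1) hx1R
          omega
      have hpairN := mem_pair_of_ncard_two (hC2 x1 hx1D.1)
        (show u ∈ G.neighborSet x1 ∩ C from ⟨hadj_ux1.symm, hu.1⟩)
        (show x2 ∈ G.neighborSet x1 ∩ C from ⟨hadj_x1x2, hx2D.1⟩) hux2
      have hfx1 : forcer G R x1 = x2 := by
        rcases hpairN _ ⟨hfx1_adj, hfx1C⟩ with h | h
        · exact absurd h (hkey2 u hu hcutu x1 hx1D.1 hx1R)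
        · exact h
      obtain ⟨c, hcD, hc⟩ := propagate G R (C \ R) C hDsubC hZF hDR hC2 hkey1 t3 x1 x2
        hchain2 (List.nodup_cons.mp hnodupsp).2
        (fun z hz => hmemsp z (List.mem_cons_of_mem _ hz)) hfx1
      have hlast2 : (x1 :: x2 :: t3).getLast (by simp) = v := by
        have h1 : (u :: x1 :: x2 :: t3).getLast? = some v := by rw [← hspt]; exact hlastv
        rw [List.getLast?_cons_cons] at h1
        rw [List.getLast?_eq_getLast (l := x1 :: x2 :: t3) (by simp)] at h1
        exact Option.some.inj h1
      rw [hlast2] at hc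
      exact hkey2 v hv hcutv c hcD.1 hcD.2 hc
    -- no three distinct cut vertices
    by_contra hcount
    push_neg at hcount
    have h3 : 3 ≤ {v | v ∈ C \ R ∧ G.IsCutVertex v}.ncard := hcount
    obtain ⟨T, hTsub, hT3⟩ := Set.exists_subset_card_eq h3
    obtain ⟨a, b, c, hab, hac, hbc, rfl⟩ := Set.ncard_eq_three.mp hT3
    have haS := hTsub (by simp : a ∈ ({a, b, c} : Set V))
    have hbS := hTsub (by simp : b ∈ ({a, b, c} : Set V))
    have hcS := hTsub (by simp : c ∈ ({a, b, c} : Set V))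
    have hadj_ab : G.Adj a b := hpair a haS.1 haS.2 b hbS.1 hbS.2 hab
    have hadj_ac : G.Adj a c := hpair a haS.1 haS.2 c hcS.1 hcS.2 hac
    have hadj_bc : G.Adj b c := hpair b hbS.1 hbS.2 c hcS.1 hcS.2 hbc
    have haC : a ∈ C := haS.1.1
    have hbC : b ∈ C := hbS.1.1
    have hcC : c ∈ C := hcS.1.1
    have hNa := mem_pair_of_ncard_two (hC2 a haC)
      (show b ∈ G.neighborSet a ∩ C from ⟨hadj_ab, hbC⟩)
      (show c ∈ G.neighborSet a ∩ C from ⟨hadj_ac, hcC⟩) hbc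
    have hNb := mem_pair_of_ncard_two (hC2 b hbC)
      (show a ∈ G.neighborSet b ∩ C from ⟨hadj_ab.symm, haC⟩)
      (show c ∈ G.neighborSet b ∩ C from ⟨hadj_bc, hcC⟩) hac
    have hNc := mem_pair_of_ncard_two (hC2 c hcC)
      (show a ∈ G.neighborSet c ∩ C from ⟨hadj_ac.symm, haC⟩)
      (show b ∈ G.neighborSet c ∩ C from ⟨hadj_bc.symm, hbC⟩) hab
    -- C is covered by {a, b, c}
    have hclo : ∀ z, chainIn G C a z → z ∈ ({a, b, c} : Set V) := by
      intro z hz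
      induction hz with
      | refl => simp
      | @tail p z hp hstep ih =>
        have hzC : z ∈ C := hstep.2.1
        rcases ih with rfl | h
        · rcases hNa z ⟨hstep.2.2, hzC⟩ with rfl | rfl <;> simp
        · rcases h with rfl | rfl
          · rcases hNb z ⟨hstep.2.2, hzC⟩ with rfl | rfl <;> simp
          · rcases hNc z ⟨hstep.2.2, hzC⟩ with rfl | rfl <;> simp
    have hCabc : C ⊆ ({a, b, c} : Set V) := by
      intro z hz
      exact hclo z (chainIn_of_connected G C hC.2.1 a haC z hz)
    apply hDC
    apply Set.Subset.antisymm hDsubC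
    intro z hz
    rcases hCabc hz with rfl | h
    · exact haS.1
    · rcases h with rfl | rfl
      · exact hbS.1
      · exact hcS.1
end

section
/- Let G be a block graph with no pendant paths, and let b be the number of blocks of G that contain at least one non-cut vertex. Then Z_c(G) = n − b, where n is the number of vertices of G. -/
namespace SimpleGraph
variable {V : Type*} {G : SimpleGraph V} {A B S F : Set V} {x y z a b : V}

/-- Reachability staying inside a set `A`. -/
inductive ReachIn (G : SimpleGraph V) (A : Set V) : V → V → Prop
  | refl {x : V} (hx : x ∈ A) : ReachIn G A x x
  | tail {x y z : V} (h : ReachIn G A x y) (hyz : G.Adj y z) (hz : z ∈ A) : ReachIn G A x z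

theorem ReachIn.mem_left (h : G.ReachIn A x y) : x ∈ A := by
  induction h with
  | refl hx => exact hx
  | tail _ _ _ ih => exact ih

theorem ReachIn.mem_right (h : G.ReachIn A x y) : y ∈ A := by
  cases h with
  | refl hx => exact hx
  | tail _ _ hz => exact hz

theorem ReachIn.trans {x y z} (h : G.ReachIn A x y) (h' : G.ReachIn A y z) :
    G.ReachIn A x z := by
  induction h' with
  | refl _ => exact h
  | tail _ hyz hz ih => exact ih.tail hyz hz

theorem ReachIn.single (hx : x ∈ A) (hy : y ∈ A) (hxy : G.Adj x y) : G.ReachIn A x y :=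
  (ReachIn.refl hx).tail hxy hy

theorem ReachIn.symm (h : G.ReachIn A x y) : G.ReachIn A y x := by
  induction h with
  | refl hx => exact .refl hx
  | tail h hyz hz ih => exact (ReachIn.single hz h.mem_right hyz.symm).trans ih

theorem ReachIn.mono (hAB : A ⊆ B) (h : G.ReachIn A x y) : G.ReachIn B x y := by
  induction h with
  | refl hx => exact .refl (hAB hx)
  | tail _ hyz hz ih => exact ih.tail hyz (hAB hz)

/-- Every pair of vertices of `A` is joined inside `A`. -/
def CSet (G : SimpleGraph V) (A : Set V) : Prop :=
  ∀ x ∈ A, ∀ y ∈ A, G.ReachIn A x y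

theorem cset_empty : G.CSet (∅ : Set V) := fun x hx => absurd hx (by simp)

theorem cset_singleton (a : V) : G.CSet {a} := by
  rintro x rfl y rfl
  exact .refl rfl

theorem induce_connected_iff_cset : (G.induce A).Connected ↔ A.Nonempty ∧ G.CSet A := by
  have fwd : ∀ {x' y' : ↥A} (_ : (G.induce A).Walk x' y'), G.ReachIn A x'.1 y'.1 := by
    intro x' y' w
    induction w with
    | nil => exact .refl (Subtype.prop _)
    | cons huv p ih =>
      exact (ReachIn.single (Subtype.prop _) (Subtype.prop _) (by simpa using huv)).trans ih
  have bwd : ∀ {x y}, G.ReachIn A x y →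
      ∀ (hx : x ∈ A) (hy : y ∈ A), (G.induce A).Reachable ⟨x, hx⟩ ⟨y, hy⟩ := by
    intro x y h
    induction h with
    | refl _ => exact fun _ _ => Reachable.refl _
    | tail h hyz hz ih =>
      exact fun hx hy => (ih hx h.mem_right).trans (Adj.reachable (by simpa using hyz))
  constructor
  · intro h
    obtain ⟨⟨a, ha⟩⟩ := h.nonempty
    exact ⟨⟨a, ha⟩, fun x hx y hy => (h.preconnected ⟨x, hx⟩ ⟨y, hy⟩).elim fun w => fwd w⟩
  · rintro ⟨⟨a, ha⟩, h⟩
    have : Nonempty (↥A) := ⟨⟨a, ha⟩⟩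
    refine ⟨fun x y => ?_⟩
    obtain ⟨x, hx⟩ := x; obtain ⟨y, hy⟩ := y
    exact bwd (h x hx y hy) hx hy

theorem CSet.union (hA : G.CSet A) (hB : G.CSet B) (hAB : (A ∩ B).Nonempty) :
    G.CSet (A ∪ B) := by
  obtain ⟨c, hcA, hcB⟩ := hAB
  have key : ∀ x ∈ A ∪ B, G.ReachIn (A ∪ B) x c := by
    rintro x (hx | hx)
    · exact (hA x hx c hcA).mono Set.subset_union_left
    · exact (hB x hx c hcB).mono Set.subset_union_right
  intro x hx y hy
  exact (key x hx).trans (key y hy).symm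

theorem CSet.join (hA : G.CSet A) (hB : G.CSet B) (ha : a ∈ A) (hb : b ∈ B)
    (hab : G.Adj a b) : G.CSet (A ∪ B) := by
  intro x hx y hy
  have key : ∀ x ∈ A ∪ B, G.ReachIn (A ∪ B) x a := by
    rintro x (hx | hx)
    · exact (hA x hx a ha).mono Set.subset_union_left
    · exact ((hB x hx b hb).mono Set.subset_union_right).tail hab.symm (Or.inl ha)
  exact (key x hx).trans (key y hy).symm

theorem cset_support (p : G.Walk a b) : G.CSet {x | x ∈ p.support} := by
  induction p with
  | nil => simpa using cset_singleton _
  | @cons u v w huv p ih =>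
    have : {x | x ∈ (Walk.cons huv p).support} = {u} ∪ {x | x ∈ p.support} := by
      ext z; simp [Set.singleton_union]
    rw [this]
    exact (cset_singleton u).join ih rfl (by simp) huv

/-- The fort obstruction: vertices of a fort disjoint from `S` are never forced. -/
theorem not_forced_of_fort (hFS : ∀ x ∈ F, x ∉ S)
    (hfort : ∀ w, w ∉ F → ∀ y ∈ F, G.Adj w y → ∃ y', y' ∈ F ∧ y' ≠ y ∧ G.Adj w y') :
    ∀ v, G.Forced S v → v ∉ F := by
  intro v hv
  induction hv with
  | init v hv => exact fun hF => hFS v hF hv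
  | force u v hu huv hrest ihu ihrest =>
    intro hvF
    obtain ⟨y', hy'F, hy'v, huy'⟩ := hfort u ihu v hvF huv
    exact ihrest y' huy' hy'v hy'F

end SimpleGraph
namespace SimpleGraph
variable {V : Type*} {G : SimpleGraph V} {A B B' S F : Set V} {u x y z a b w w1 w2 : V}

/-- Closed neighborhood. -/
def clN (G : SimpleGraph V) (x : V) : Set V := insert x (G.neighborSet x)

theorem mem_clN : y ∈ G.clN x ↔ y = x ∨ G.Adj x y := by
  simp [clN, mem_neighborSet]

theorem self_mem_clN : x ∈ G.clN x := mem_clN.mpr (Or.inl rfl)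

theorem cset_of_clique (hA : ∀ u ∈ A, ∀ w ∈ A, u ≠ w → G.Adj u w) : G.CSet A := by
  intro p hp q hq
  rcases eq_or_ne p q with rfl | hne
  · exact .refl hp
  · exact .single hp hq (hA p hp q hq hne)

theorem IsBiconnectedSet.cset (h : G.IsBiconnectedSet B) : G.CSet B :=
  (induce_connected_iff_cset.mp h.1).2

theorem IsBiconnectedSet.nonempty (h : G.IsBiconnectedSet B) : B.Nonempty :=
  (induce_connected_iff_cset.mp h.1).1

theorem IsBiconnectedSet.cset_diff (h : G.IsBiconnectedSet B) (v : V) :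
    G.CSet (B \ {v}) := by
  by_cases hv : v ∈ B
  · rcases Set.eq_empty_or_nonempty (B \ {v}) with he | hne
    · rw [he]; exact cset_empty
    · exact (induce_connected_iff_cset.mp (h.2 v hv hne)).2
  · have : B \ {v} = B := by
      ext t; simp only [Set.mem_diff, Set.mem_singleton_iff]
      exact ⟨fun h => h.1, fun ht => ⟨ht, fun h' => hv (h' ▸ ht)⟩⟩
    rw [this]; exact h.cset

theorem isBiconnectedSet_of_cset (hne : B.Nonempty) (h1 : G.CSet B)
    (h2 : ∀ v ∈ B, G.CSet (B \ {v})) : G.IsBiconnectedSet B := by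
  refine ⟨induce_connected_iff_cset.mpr ⟨hne, h1⟩, fun v hv hne' => ?_⟩
  exact induce_connected_iff_cset.mpr ⟨hne', h2 v hv⟩

theorem isBiconnectedSet_of_clique (hne : B.Nonempty)
    (hA : ∀ u ∈ B, ∀ w ∈ B, u ≠ w → G.Adj u w) : G.IsBiconnectedSet B := by
  refine isBiconnectedSet_of_cset hne (cset_of_clique hA) fun v hv => ?_
  exact cset_of_clique fun p hp q hq hne => hA p hp.1 q hq.1 hne

theorem IsBiconnectedSet.union2 (hB : G.IsBiconnectedSet B) (hB' : G.IsBiconnectedSet B')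
    (hx : x ∈ B ∩ B') (hy : y ∈ B ∩ B') (hxy : x ≠ y) :
    G.IsBiconnectedSet (B ∪ B') := by
  refine isBiconnectedSet_of_cset ⟨x, Or.inl hx.1⟩
    (hB.cset.union hB'.cset ⟨x, hx⟩) fun v hv => ?_
  have hset : (B ∪ B') \ {v} = (B \ {v}) ∪ (B' \ {v}) := by
    ext t; simp only [Set.mem_diff, Set.mem_union, Set.mem_singleton_iff]; tauto
  rw [hset]
  rcases eq_or_ne v x with rfl | hvx
  · exact (hB.cset_diff v).union (hB'.cset_diff v) ⟨y, ⟨hy.1, hxy.symm⟩, ⟨hy.2, hxy.symm⟩⟩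
  · exact (hB.cset_diff v).union (hB'.cset_diff v) ⟨x, ⟨hx.1, hvx.symm⟩, ⟨hx.2, hvx.symm⟩⟩

theorem exists_block_superset [Finite V] (hA : G.IsBiconnectedSet A) :
    ∃ B, G.IsBlock B ∧ A ⊆ B := by
  have hfam : ({C | A ⊆ C ∧ G.IsBiconnectedSet C} : Set (Set V)).Finite := Set.toFinite _
  obtain ⟨D, hD, hDmax⟩ := Set.Finite.exists_maximalFor Set.ncard _ hfam
    ⟨A, subset_rfl, hA⟩
  refine ⟨D, ⟨hD.2, fun B' hsub hB' => ?_⟩, hD.1⟩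
  have hB'mem : B' ∈ {C | A ⊆ C ∧ G.IsBiconnectedSet C} := ⟨hD.1.trans hsub, hB'⟩
  have hcard := hDmax hB'mem (Set.ncard_le_ncard hsub (Set.toFinite _))
  exact (Set.eq_of_subset_of_ncard_le hsub hcard (Set.toFinite _)).symm

/-- Two distinct blocks share at most one vertex. -/
theorem IsBlock.share (hB : G.IsBlock B) (hB' : G.IsBlock B') (hne : B ≠ B')
    (hx : x ∈ B ∩ B') (hy : y ∈ B ∩ B') : x = y := by
  by_contra hxy
  have hu := hB.1.union2 hB'.1 hx hy hxy
  have h1 := hB.2 (B ∪ B') Set.subset_union_left hu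
  have h2 := hB'.2 (B ∪ B') Set.subset_union_right hu
  exact hne (h1.symm.trans h2)

/-- The support of a path with its last vertex removed is still set-connected. -/
theorem cset_support_diff_last : ∀ {a x : V} (q : G.Walk a x), q.IsPath →
    G.CSet ({y | y ∈ q.support} \ {x}) := by
  intro a x q
  induction q with
  | nil =>
    intro _
    convert cset_empty using 1
    ext t; simp
  | cons huv q ih =>
    rename_i u' v' w'
    intro hq
    have hu_not : u' ∉ q.support := by
      have := hq.support_nodup
      simp only [Walk.support_cons] at this
      exact (List.nodup_cons.mp this).1
    have hq' : q.IsPath := hq.of_cons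
    have hux : u' ≠ w' := fun h => hu_not (h ▸ q.end_mem_support)
    rcases eq_or_ne v' w' with rfl | hvw
    · -- q : Walk w' w' is a path, hence nil
      have hsupp : ∀ y ∈ q.support, y = v' := by
        cases q with
        | nil => intro y hy; simpa using hy
        | cons h' q' =>
          exfalso
          have := hq'.support_nodup
          simp only [Walk.support_cons, List.nodup_cons] at this
          exact this.1 q'.end_mem_support
      have hset : ({y | y ∈ (Walk.cons huv q).support} \ {v'}) = {u'} := by
        ext t
        simp only [Walk.support_cons, List.mem_cons, Set.mem_diff, Set.mem_setOf_eq,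
          Set.mem_singleton_iff]
        constructor
        · rintro ⟨h | h, ht⟩
          · exact h
          · exact absurd (hsupp t h) ht
        · rintro rfl; exact ⟨Or.inl rfl, hux⟩
      rw [hset]; exact cset_singleton u'
    · have hvmem : v' ∈ {y | y ∈ q.support} \ {w'} := ⟨q.start_mem_support, hvw⟩
      have hset : ({y | y ∈ (Walk.cons huv q).support} \ {w'}) =
          {u'} ∪ ({y | y ∈ q.support} \ {w'}) := by
        ext t
        simp only [Walk.support_cons, List.mem_cons, Set.mem_diff, Set.mem_setOf_eq,
          Set.mem_union, Set.mem_singleton_iff]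
        constructor
        · rintro ⟨h | h, ht⟩
          · exact Or.inl h
          · exact Or.inr ⟨h, ht⟩
        · rintro (rfl | ⟨h, ht⟩)
          · exact ⟨Or.inl rfl, hux⟩
          · exact ⟨Or.inr h, ht⟩
      rw [hset]
      exact (cset_singleton u').join (ih hq') rfl hvmem huv

theorem cset_support_diff_head (q : G.Walk x b) (hq : q.IsPath) :
    G.CSet ({y | y ∈ q.support} \ {x}) := by
  have := cset_support_diff_last q.reverse hq.reverse
  have hset : ({y | y ∈ q.reverse.support} \ {x}) = ({y | y ∈ q.support} \ {x}) := by
    ext t; simp [Walk.support_reverse]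
  rwa [hset] at this

end SimpleGraph
namespace SimpleGraph
variable {V : Type*} {G : SimpleGraph V} {A B B' S F : Set V} {u x y z a b c w w1 w2 : V}

theorem Walk.IsPath.support_loop {q : G.Walk c c} (h : q.IsPath) : ∀ y ∈ q.support, y = c := by
  cases q with
  | nil => intro y hy; simpa using hy
  | cons h' q' =>
    exfalso
    have := h.support_nodup
    simp only [Walk.support_cons, List.nodup_cons] at this
    exact this.1 q'.end_mem_support

/-- Removing a vertex from a path support splits it into two connected pieces. -/
theorem side {p : G.Walk a b} (hp : p.IsPath) (hx : x ∈ p.support) :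
    ∃ P1 P2 : Set V, {y | y ∈ p.support} \ {x} = P1 ∪ P2 ∧ G.CSet P1 ∧ G.CSet P2 ∧
      (x = a → P1 = ∅) ∧ (x = b → P2 = ∅) ∧
      (x = a ∨ a ∈ P1) ∧ (x = b ∨ b ∈ P2) ∧
      P1 ⊆ {y | y ∈ p.support} ∧ P2 ⊆ {y | y ∈ p.support} := by
  classical
  have hmem : ∀ t, t ∈ p.support ↔ t ∈ (p.takeUntil x hx).support ∨
      t ∈ (p.dropUntil x hx).support := by
    intro t
    conv_lhs => rw [← Walk.take_spec p hx]
    exact Walk.mem_support_append_iff _ _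
  refine ⟨{y | y ∈ (p.takeUntil x hx).support} \ {x},
    {y | y ∈ (p.dropUntil x hx).support} \ {x}, ?_,
    cset_support_diff_last _ (hp.takeUntil hx), cset_support_diff_head _ (hp.dropUntil hx),
    ?_, ?_, ?_, ?_, ?_, ?_⟩
  · ext t
    simp only [Set.mem_diff, Set.mem_setOf_eq, Set.mem_union, Set.mem_singleton_iff, hmem t]
    tauto
  · rintro rfl
    ext t
    simp only [Set.mem_diff, Set.mem_setOf_eq, Set.mem_singleton_iff, Set.mem_empty_iff_false,
      iff_false, not_and, not_not]
    exact fun ht => (hp.takeUntil hx).support_loop t ht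
  · rintro rfl
    ext t
    simp only [Set.mem_diff, Set.mem_setOf_eq, Set.mem_singleton_iff, Set.mem_empty_iff_false,
      iff_false, not_and, not_not]
    exact fun ht => (hp.dropUntil hx).support_loop t ht
  · rcases eq_or_ne x a with rfl | hxa
    · exact Or.inl rfl
    · exact Or.inr ⟨(p.takeUntil x hx).start_mem_support, hxa.symm⟩
  · rcases eq_or_ne x b with rfl | hxb
    · exact Or.inl rfl
    · exact Or.inr ⟨(p.dropUntil x hx).end_mem_support, hxb.symm⟩
  · intro t ht; exact (p.support_takeUntil_subset hx) ht.1
  · intro t ht; exact (p.support_dropUntil_subset hx) ht.1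

theorem CSet.attach (hA : G.CSet A) (hB : G.CSet B) (hu : u ∈ A)
    (h : B = ∅ ∨ ∃ b ∈ B, G.Adj u b) : G.CSet (A ∪ B) := by
  rcases h with rfl | ⟨b, hb, hub⟩
  · rwa [Set.union_empty]
  · exact hA.join hB hu hb hub

/-- A path between two neighbours of `u`, avoiding `u`, together with `u`,
forms a biconnected set. -/
theorem biconn_pathset_insert (hu1 : G.Adj u w1) (hu2 : G.Adj u w2) {p : G.Walk w1 w2}
    (hp : p.IsPath) (hup : u ∉ p.support) :
    G.IsBiconnectedSet (insert u {y | y ∈ p.support}) := by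
  have hins : insert u {y | y ∈ p.support} = {u} ∪ {y | y ∈ p.support} := by
    simp [Set.singleton_union]
  have hXcset : G.CSet (insert u {y | y ∈ p.support}) := by
    rw [hins]
    exact (cset_singleton u).join (cset_support p) rfl p.start_mem_support hu1
  refine isBiconnectedSet_of_cset ⟨u, Set.mem_insert _ _⟩ hXcset ?_
  intro v hv
  rcases eq_or_ne v u with rfl | hvu
  · have : insert v {y | y ∈ p.support} \ {v} = {y | y ∈ p.support} := by
      ext t
      simp only [Set.mem_diff, Set.mem_insert_iff, Set.mem_setOf_eq, Set.mem_singleton_iff]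
      constructor
      · rintro ⟨h, ht⟩
        rcases h with rfl | h
        · exact absurd rfl ht
        · exact h
      · intro ht
        exact ⟨Or.inr ht, fun h => hup (h ▸ ht)⟩
    rw [this]
    exact cset_support p
  · have hvp : v ∈ p.support := by
      rcases hv with rfl | h
      · exact absurd rfl hvu
      · exact h
    obtain ⟨P1, P2, hPsplit, hP1, hP2, hP1e, hP2e, hP1a, hP2a, hP1s, hP2s⟩ := side hp hvp
    have hset : insert u {y | y ∈ p.support} \ {v} = ({u} ∪ P1) ∪ P2 := by
      have : insert u {y | y ∈ p.support} \ {v} =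
          {u} ∪ ({y | y ∈ p.support} \ {v}) := by
        ext t
        simp only [Set.mem_diff, Set.mem_insert_iff, Set.mem_setOf_eq, Set.mem_union,
          Set.mem_singleton_iff]
        constructor
        · rintro ⟨rfl | h, ht⟩
          · exact Or.inl rfl
          · exact Or.inr ⟨h, ht⟩
        · rintro (rfl | ⟨h, ht⟩)
          · exact ⟨Or.inl rfl, hvu.symm⟩
          · exact ⟨Or.inr h, ht⟩
      rw [this, hPsplit, Set.union_assoc]
    rw [hset]
    have hc1 : G.CSet ({u} ∪ P1) := by
      refine (cset_singleton u).attach hP1 rfl ?_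
      rcases hP1a with rfl | hw1
      · exact Or.inl (hP1e rfl)
      · exact Or.inr ⟨w1, hw1, hu1⟩
    refine hc1.attach hP2 (Or.inl rfl) ?_
    rcases hP2a with rfl | hw2
    · exact Or.inl (hP2e rfl)
    · exact Or.inr ⟨w2, hw2, hu2⟩

/-- The inclusion homomorphism from an induced subgraph. -/
def inclHom (G : SimpleGraph V) (A : Set V) : G.induce A →g G :=
  ⟨Subtype.val, fun {a b} h => h⟩

section finite
variable [Fintype V]

theorem noncut_clique (hblock : ∀ B : Set V, G.IsBlock B → ∀ u ∈ B, ∀ w ∈ B, u ≠ w → G.Adj u w)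
    (hu : ¬ G.IsCutVertex u) :
    ∀ a ∈ G.clN u, ∀ b ∈ G.clN u, a ≠ b → G.Adj a b := by
  classical
  have hconn : (G.induce ({u}ᶜ : Set V)).Connected := not_not.mp hu
  intro a ha b hb hab
  rcases mem_clN.mp ha with rfl | hau
  · rcases mem_clN.mp hb with rfl | hbu
    · exact absurd rfl hab
    · exact hbu
  rcases mem_clN.mp hb with rfl | hbu
  · exact hau.symm
  -- both are neighbours of u
  have ha' : a ∈ ({u}ᶜ : Set V) := by simp [hau.ne']
  have hb' : b ∈ ({u}ᶜ : Set V) := by simp [hbu.ne']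
  obtain ⟨w0⟩ := hconn.preconnected ⟨a, ha'⟩ ⟨b, hb'⟩
  set p0 : (G.induce ({u}ᶜ : Set V)).Walk ⟨a, ha'⟩ ⟨b, hb'⟩ := w0.toPath.1
  have hp0 : p0.IsPath := w0.toPath.2
  set p : G.Walk a b := p0.map (inclHom G _)
  have hp : p.IsPath := Walk.map_isPath_of_injective Subtype.val_injective hp0
  have hup : u ∉ p.support := by
    intro h
    replace h : u ∈ p0.support.map (inclHom G _) := by rw [← Walk.support_map]; exact h
    rw [List.mem_map] at h
    obtain ⟨⟨t, ht⟩, _, heq⟩ := h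
    exact ht heq
  obtain ⟨D, hD, hsub⟩ := exists_block_superset (biconn_pathset_insert hau hbu hp hup)
  refine hblock D hD a (hsub (Or.inr p.start_mem_support)) b (hsub (Or.inr p.end_mem_support)) hab

theorem noncut_clN_isBlock
    (hblock : ∀ B : Set V, G.IsBlock B → ∀ u ∈ B, ∀ w ∈ B, u ≠ w → G.Adj u w)
    (hu : ¬ G.IsCutVertex u) : G.IsBlock (G.clN u) := by
  have hclique := noncut_clique hblock hu
  have hbic := isBiconnectedSet_of_clique ⟨u, self_mem_clN⟩ hclique
  obtain ⟨D, hD, hsub⟩ := exists_block_superset hbic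
  have hDsub : D ⊆ G.clN u := by
    intro z hz
    rcases eq_or_ne z u with rfl | hzu
    · exact self_mem_clN
    · exact mem_clN.mpr (Or.inr (hblock D hD u (hsub self_mem_clN) z hz hzu.symm))
  have : D = G.clN u := subset_antisymm hDsub hsub
  exact this ▸ hD

theorem IsBlock.eq_clN_of_noncut (hB : G.IsBlock B)
    (hblock : ∀ B : Set V, G.IsBlock B → ∀ u ∈ B, ∀ w ∈ B, u ≠ w → G.Adj u w)
    (hu : u ∈ B) (hnc : ¬ G.IsCutVertex u) : B = G.clN u := by
  refine (hB.2 (G.clN u) ?_ (isBiconnectedSet_of_clique ⟨u, self_mem_clN⟩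
    (noncut_clique hblock hnc))).symm
  intro z hz
  rcases eq_or_ne z u with rfl | hzu
  · exact self_mem_clN
  · exact mem_clN.mpr (Or.inr (hblock B hB u hu z hz hzu.symm))

end finite
end SimpleGraph
namespace SimpleGraph
section dist
variable {V : Type*} {G : SimpleGraph V} {A B B' S F : Set V} {r u v x y z a b c w w1 w2 : V}

theorem pfact (hG : G.Connected) {p : G.Walk a b} (hlen : p.length = G.dist a b)
    (hy : y ∈ p.support) [DecidableEq V] :
    G.dist a y = (p.takeUntil y hy).length ∧ G.dist y b = (p.dropUntil y hy).length ∧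
      G.dist a y + G.dist y b = G.dist a b := by
  have hsum : (p.takeUntil y hy).length + (p.dropUntil y hy).length = p.length := by
    have := congrArg Walk.length (Walk.take_spec p hy)
    rwa [Walk.length_append] at this
  have h1 : G.dist a y ≤ (p.takeUntil y hy).length := dist_le _
  have h2 : G.dist y b ≤ (p.dropUntil y hy).length := dist_le _
  have h3 : G.dist a b ≤ G.dist a y + G.dist y b := hG.dist_triangle
  omega

theorem pfact' (hG : G.Connected) {p : G.Walk a b} (hlen : p.length = G.dist a b)
    (hy : y ∈ p.support) : G.dist a y + G.dist y b = G.dist a b := by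
  classical
  exact (pfact hG hlen hy).2.2

theorem exists_penult (hG : G.Connected) (hne : G.dist a b ≠ 0) :
    ∃ c, G.Adj c b ∧ G.dist a c + 1 = G.dist a b := by
  obtain ⟨p, hp⟩ := exists_walk_of_dist_ne_zero hne
  rcases hrev : p.reverse with _ | ⟨hadj, q'⟩
  · exfalso
    have : p.reverse.length = 0 := by rw [hrev]; rfl
    rw [Walk.length_reverse] at this
    omega
  · rename_i cc
    have hlen : p.reverse.length = 1 + q'.length := by rw [hrev]; simp [Walk.length_cons]; omega
    rw [Walk.length_reverse, hp] at hlen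
    have hdac : G.dist a cc ≤ q'.reverse.length := dist_le _
    rw [Walk.length_reverse] at hdac
    have hadj' : G.Adj cc b := hadj.symm
    have htri : G.dist a b ≤ G.dist a cc + G.dist cc b := hG.dist_triangle
    have hone : G.dist cc b = 1 := dist_eq_one_iff_adj.mpr hadj'
    exact ⟨cc, hadj', by omega⟩

variable [Fintype V]

/-- Split two geodesics from `r` at their last common vertex. -/
theorem split (hG : G.Connected) {m : ℕ} (hab : a ≠ b)
    (hda : G.dist r a = m) (hdb : G.dist r b = m) :
    ∃ (c : V) (q1 : G.Walk c a) (q2 : G.Walk c b), q1.IsPath ∧ q2.IsPath ∧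
      (∀ y, y ∈ q1.support → y ∈ q2.support → y = c) ∧
      (∀ y ∈ q1.support, G.dist r y ≤ m) ∧ (∀ y ∈ q2.support, G.dist r y ≤ m) ∧
      G.dist r c < m ∧ c ≠ a ∧ c ≠ b := by
  classical
  obtain ⟨p, hp⟩ := hG.exists_walk_length_eq_dist r a
  obtain ⟨q, hq⟩ := hG.exists_walk_length_eq_dist r b
  obtain ⟨c, ⟨hc1, hc2⟩, hcmax⟩ := Set.exists_max_image {y | y ∈ p.support ∧ y ∈ q.support}
    (G.dist r) (Set.toFinite _) ⟨r, p.start_mem_support, q.start_mem_support⟩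
  have hpfa := pfact hG hp hc1
  have hpfb := pfact hG hq hc2
  have hca : c ≠ a := by
    rintro rfl
    have := pfact' hG hq hc2
    rw [hda] at this
    have : G.dist c b = 0 := by omega
    exact hab (hG.dist_eq_zero_iff.mp this)
  have hcb : c ≠ b := by
    rintro rfl
    have := pfact' hG hp hc1
    rw [hdb] at this
    have : G.dist c a = 0 := by omega
    exact hab.symm (hG.dist_eq_zero_iff.mp this)
  refine ⟨c, p.dropUntil c hc1, q.dropUntil c hc2,
    (p.isPath_of_length_eq_dist hp).dropUntil hc1,
    (q.isPath_of_length_eq_dist hq).dropUntil hc2, ?_, ?_, ?_, ?_, hca, hcb⟩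
  · -- disjointness except c
    intro y hy1 hy2
    have hyp : y ∈ p.support := p.support_dropUntil_subset hc1 hy1
    have hyq : y ∈ q.support := q.support_dropUntil_subset hc2 hy2
    have hylec : G.dist r y ≤ G.dist r c := hcmax y ⟨hyp, hyq⟩
    -- dropUntil is a geodesic from c to a
    have hdropgeo : (p.dropUntil c hc1).length = G.dist c a := hpfa.2.1.symm
    have hsub := pfact' hG hdropgeo hy1
    -- dist c y + dist y a = dist c a
    have htri : G.dist r a ≤ G.dist r y + G.dist y a := hG.dist_triangle
    have hsum : G.dist r c + G.dist c a = G.dist r a := hpfa.2.2 ▸ by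
      have := hpfa.2.2; omega
    have : G.dist c y = 0 := by omega
    exact (hG.dist_eq_zero_iff.mp this).symm
  · intro y hy1
    have hyp : y ∈ p.support := p.support_dropUntil_subset hc1 hy1
    have := pfact' hG hp hyp
    omega
  · intro y hy2
    have hyq : y ∈ q.support := q.support_dropUntil_subset hc2 hy2
    have := pfact' hG hq hyq
    omega
  · have := hpfa.2.2
    have hone : G.dist c a ≠ 0 := fun h => hca (hG.dist_eq_zero_iff.mp h)
    omega

end dist
end SimpleGraph
namespace SimpleGraph
section theta
variable {V : Type*} {G : SimpleGraph V} {r u v x y z a b c w : V}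

theorem theta1_aux {q1 : G.Walk c a} {q2 : G.Walk c b} (h1 : q1.IsPath) (h2 : q2.IsPath)
    (hadj : G.Adj a b)
    (hdisj : ∀ y, y ∈ q1.support → y ∈ q2.support → y = c)
    (hv1 : v ∈ q1.support) (hvc : v ≠ c) :
    G.CSet (({y | y ∈ q1.support} ∪ {y | y ∈ q2.support}) \ {v}) := by
  classical
  obtain ⟨P1, P2, hPsplit, hP1, hP2, hP1e, hP2e, hP1a, hP2a, hP1s, hP2s⟩ := side h1 hv1
  have hcP1 : c ∈ P1 := by
    rcases hP1a with h | h
    · exact absurd h hvc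
    · exact h
  have hv2 : v ∉ q2.support := fun h => hvc (hdisj v hv1 h)
  have hseteq : (({y | y ∈ q1.support} ∪ {y | y ∈ q2.support}) \ {v}) =
      ((P1 ∪ {y | y ∈ q2.support}) ∪ P2) := by
    have hm := Set.ext_iff.mp hPsplit
    ext t
    have hmt := hm t
    simp only [Set.mem_diff, Set.mem_union, Set.mem_setOf_eq, Set.mem_singleton_iff] at hmt ⊢
    constructor
    · rintro ⟨ht | ht, htv⟩
      · rcases hmt.mp ⟨ht, htv⟩ with h | h
        · exact Or.inl (Or.inl h)
        · exact Or.inr h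
      · exact Or.inl (Or.inr ht)
    · rintro ((ht | ht) | ht)
      · have := hmt.mpr (Or.inl ht)
        exact ⟨Or.inl this.1, this.2⟩
      · exact ⟨Or.inr ht, fun h => hv2 (h ▸ ht)⟩
      · have := hmt.mpr (Or.inr ht)
        exact ⟨Or.inl this.1, this.2⟩
  rw [hseteq]
  have step1 : G.CSet (P1 ∪ {y | y ∈ q2.support}) :=
    hP1.union (cset_support q2) ⟨c, hcP1, q2.start_mem_support⟩
  refine step1.attach hP2 (Or.inr q2.end_mem_support) ?_
  rcases hP2a with h | h
  · exact Or.inl (hP2e h)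
  · exact Or.inr ⟨a, h, hadj.symm⟩

theorem theta1 {q1 : G.Walk c a} {q2 : G.Walk c b} (h1 : q1.IsPath) (h2 : q2.IsPath)
    (hab : a ≠ b) (hca : c ≠ a) (hcb : c ≠ b) (hadj : G.Adj a b)
    (hdisj : ∀ y, y ∈ q1.support → y ∈ q2.support → y = c) :
    G.IsBiconnectedSet ({y | y ∈ q1.support} ∪ {y | y ∈ q2.support}) := by
  classical
  refine isBiconnectedSet_of_cset ⟨c, Or.inl q1.start_mem_support⟩
    ((cset_support q1).union (cset_support q2)
      ⟨c, q1.start_mem_support, q2.start_mem_support⟩) ?_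
  intro v hv
  rcases eq_or_ne v c with rfl | hvc
  · have hseteq : (({y | y ∈ q1.support} ∪ {y | y ∈ q2.support}) \ {v}) =
        ({y | y ∈ q1.support} \ {v}) ∪ ({y | y ∈ q2.support} \ {v}) := by
      ext t
      simp only [Set.mem_diff, Set.mem_union, Set.mem_setOf_eq, Set.mem_singleton_iff]
      tauto
    rw [hseteq]
    exact (cset_support_diff_head q1 h1).join (cset_support_diff_head q2 h2)
      ⟨q1.end_mem_support, hca.symm⟩ ⟨q2.end_mem_support, hcb.symm⟩ hadj
  · rcases hv with hv1 | hv2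
    · exact theta1_aux h1 h2 hadj hdisj hv1 hvc
    · have := theta1_aux h2 h1 hadj.symm (fun y hy2 hy1 => hdisj y hy1 hy2) hv2 hvc
      rwa [Set.union_comm] at this

theorem theta2_aux {q1 : G.Walk c a} {q2 : G.Walk c b} (h1 : q1.IsPath) (h2 : q2.IsPath)
    (hadj1 : G.Adj a w) (hadj2 : G.Adj b w)
    (hdisj : ∀ y, y ∈ q1.support → y ∈ q2.support → y = c)
    (hw2 : w ∉ q2.support)
    (hv1 : v ∈ q1.support) (hvc : v ≠ c) (hvw : v ≠ w) :
    G.CSet ((({y | y ∈ q1.support} ∪ {y | y ∈ q2.support}) ∪ {w}) \ {v}) := by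
  classical
  obtain ⟨P1, P2, hPsplit, hP1, hP2, hP1e, hP2e, hP1a, hP2a, hP1s, hP2s⟩ := side h1 hv1
  have hcP1 : c ∈ P1 := by
    rcases hP1a with h | h
    · exact absurd h hvc
    · exact h
  have hv2 : v ∉ q2.support := fun h => hvc (hdisj v hv1 h)
  have hseteq : ((({y | y ∈ q1.support} ∪ {y | y ∈ q2.support}) ∪ {w}) \ {v}) =
      (((P1 ∪ {y | y ∈ q2.support}) ∪ {w}) ∪ P2) := by
    have hm := Set.ext_iff.mp hPsplit
    ext t
    have hmt := hm t
    simp only [Set.mem_diff, Set.mem_union, Set.mem_setOf_eq, Set.mem_singleton_iff] at hmt ⊢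
    constructor
    · rintro ⟨(ht | ht) | ht, htv⟩
      · rcases hmt.mp ⟨ht, htv⟩ with h | h
        · exact Or.inl (Or.inl (Or.inl h))
        · exact Or.inr h
      · exact Or.inl (Or.inl (Or.inr ht))
      · exact Or.inl (Or.inr ht)
    · rintro (((ht | ht) | ht) | ht)
      · have := hmt.mpr (Or.inl ht)
        exact ⟨Or.inl (Or.inl this.1), this.2⟩
      · exact ⟨Or.inl (Or.inr ht), fun h => hv2 (h ▸ ht)⟩
      · exact ⟨Or.inr ht, fun h => hvw (h.symm.trans ht)⟩
      · have := hmt.mpr (Or.inr ht)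
        exact ⟨Or.inl (Or.inl this.1), this.2⟩
  rw [hseteq]
  have step1 : G.CSet (P1 ∪ {y | y ∈ q2.support}) :=
    hP1.union (cset_support q2) ⟨c, hcP1, q2.start_mem_support⟩
  have step2 : G.CSet ((P1 ∪ {y | y ∈ q2.support}) ∪ {w}) :=
    step1.attach (cset_singleton w) (Or.inr q2.end_mem_support)
      (Or.inr ⟨w, rfl, hadj2⟩)
  refine step2.attach hP2 (Or.inr rfl) ?_
  rcases hP2a with h | h
  · exact Or.inl (hP2e h)
  · exact Or.inr ⟨a, h, hadj1.symm⟩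

theorem theta2 {q1 : G.Walk c a} {q2 : G.Walk c b} (h1 : q1.IsPath) (h2 : q2.IsPath)
    (hab : a ≠ b) (hca : c ≠ a) (hcb : c ≠ b)
    (hadj1 : G.Adj a w) (hadj2 : G.Adj b w)
    (hw1 : w ∉ q1.support) (hw2 : w ∉ q2.support)
    (hdisj : ∀ y, y ∈ q1.support → y ∈ q2.support → y = c) :
    G.IsBiconnectedSet (({y | y ∈ q1.support} ∪ {y | y ∈ q2.support}) ∪ {w}) := by
  classical
  have hbase : G.CSet ({y | y ∈ q1.support} ∪ {y | y ∈ q2.support}) :=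
    (cset_support q1).union (cset_support q2)
      ⟨c, q1.start_mem_support, q2.start_mem_support⟩
  refine isBiconnectedSet_of_cset ⟨c, Or.inl (Or.inl q1.start_mem_support)⟩
    (hbase.attach (cset_singleton w) (Or.inl q1.end_mem_support) (Or.inr ⟨w, rfl, hadj1⟩)) ?_
  intro v hv
  rcases eq_or_ne v w with rfl | hvw
  · have hseteq : ((({y | y ∈ q1.support} ∪ {y | y ∈ q2.support}) ∪ {v}) \ {v}) =
        {y | y ∈ q1.support} ∪ {y | y ∈ q2.support} := by
      ext t
      simp only [Set.mem_diff, Set.mem_union, Set.mem_setOf_eq, Set.mem_singleton_iff]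
      constructor
      · rintro ⟨(h | h) | h, htv⟩
        · exact Or.inl h
        · exact Or.inr h
        · exact absurd h htv
      · rintro (h | h)
        · exact ⟨Or.inl (Or.inl h), fun he => hw1 (he ▸ h)⟩
        · exact ⟨Or.inl (Or.inr h), fun he => hw2 (he ▸ h)⟩
    rw [hseteq]
    exact hbase
  rcases eq_or_ne v c with rfl | hvc
  · have hseteq : ((({y | y ∈ q1.support} ∪ {y | y ∈ q2.support}) ∪ {w}) \ {v}) =
        ((({y | y ∈ q1.support} \ {v}) ∪ {w}) ∪ ({y | y ∈ q2.support} \ {v})) := by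
      ext t
      simp only [Set.mem_diff, Set.mem_union, Set.mem_setOf_eq, Set.mem_singleton_iff]
      constructor
      · rintro ⟨(h | h) | h, htv⟩
        · exact Or.inl (Or.inl ⟨h, htv⟩)
        · exact Or.inr ⟨h, htv⟩
        · exact Or.inl (Or.inr h)
      · rintro ((⟨h, htv⟩ | h) | ⟨h, htv⟩)
        · exact ⟨Or.inl (Or.inl h), htv⟩
        · exact ⟨Or.inr h, fun he => hvw (he.symm.trans h)⟩
        · exact ⟨Or.inl (Or.inr h), htv⟩
    rw [hseteq]
    have s1 : G.CSet (({y | y ∈ q1.support} \ {v}) ∪ {w}) :=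
      (cset_support_diff_head q1 h1).attach (cset_singleton w)
        ⟨q1.end_mem_support, hca.symm⟩ (Or.inr ⟨w, rfl, hadj1⟩)
    refine s1.attach (cset_support_diff_head q2 h2) (Or.inr rfl) ?_
    exact Or.inr ⟨b, ⟨q2.end_mem_support, hcb.symm⟩, hadj2.symm⟩
  · rcases hv with (hv1 | hv2) | hvw'
    · exact theta2_aux h1 h2 hadj1 hadj2 hdisj hw2 hv1 hvc hvw
    · have := theta2_aux h2 h1 hadj2 hadj1 (fun y hy2 hy1 => hdisj y hy1 hy2) hw1 hv2 hvc hvw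
      rwa [Set.union_comm {y | y ∈ q2.support} {y | y ∈ q1.support}] at this
    · exact absurd hvw' hvw

end theta
end SimpleGraph
namespace SimpleGraph
section gate
variable {V : Type*} [Fintype V] {G : SimpleGraph V} {B B' : Set V} {r g g' u v w x y z : V} {m : ℕ}

/-- Every block has a gate: a vertex strictly closer to `r` than all other
vertices of the block (which are all at distance exactly one more). -/
theorem gate (hG : G.Connected)
    (hblock : ∀ B : Set V, G.IsBlock B → ∀ u ∈ B, ∀ w ∈ B, u ≠ w → G.Adj u w)
    (hB : G.IsBlock B) (r : V) :
    ∃ g ∈ B, ∀ z ∈ B, z ≠ g → G.dist r z = G.dist r g + 1 := by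
  classical
  obtain ⟨g, hgB, hgmin⟩ := Set.exists_min_image B (G.dist r) (Set.toFinite _) hB.1.nonempty
  refine ⟨g, hgB, fun z hzB hzg => ?_⟩
  have hadj : G.Adj g z := hblock B hB g hgB z hzB hzg.symm
  have hone : G.dist g z = 1 := dist_eq_one_iff_adj.mpr hadj
  have hle : G.dist r z ≤ G.dist r g + 1 := by
    have := hG.dist_triangle (u := r) (v := g) (w := z)
    omega
  have hge : G.dist r g ≤ G.dist r z := hgmin z hzB
  by_contra hne
  have heq : G.dist r z = G.dist r g := by omega
  have hmne : G.dist r g ≠ 0 := by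
    intro h0
    have hz0 : G.dist r z = 0 := by omega
    exact hzg ((hG.dist_eq_zero_iff.mp hz0).symm.trans (hG.dist_eq_zero_iff.mp h0))
  obtain ⟨c, q1, q2, h1, h2, hdisj, hb1, hb2, hclt, hca, hcb⟩ :=
    split hG (hzg.symm : g ≠ z) (rfl : G.dist r g = G.dist r g) heq
  have hbic := theta1 h1 h2 hzg.symm hca hcb hadj hdisj
  obtain ⟨D, hD, hsub⟩ := exists_block_superset hbic
  have hDeq : D = B := by
    by_contra hne'
    exact hzg.symm (hD.share hB hne' ⟨hsub (Or.inl q1.end_mem_support), hgB⟩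
      ⟨hsub (Or.inr q2.end_mem_support), hzB⟩)
  have hcB : c ∈ B := hDeq ▸ hsub (Or.inl q1.start_mem_support)
  have := hgmin c hcB
  omega

/-- Two distinct blocks sharing a vertex `w` cannot both have their gates
strictly below `w` at the same level. -/
theorem gate_cross (hG : G.Connected)
    (hblock : ∀ B : Set V, G.IsBlock B → ∀ u ∈ B, ∀ w ∈ B, u ≠ w → G.Adj u w)
    (hB : G.IsBlock B) (hB' : G.IsBlock B') (hBB' : B ≠ B')
    (hgB : g ∈ B) (hg'B' : g' ∈ B') (hwB : w ∈ B) (hwB' : w ∈ B')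
    (hgg' : g ≠ g') (hgw : g ≠ w) (hg'w : g' ≠ w)
    (hdg : G.dist r g = m) (hdg' : G.dist r g' = m) (hdw : G.dist r w = m + 1) : False := by
  classical
  have hadj1 : G.Adj g w := hblock B hB g hgB w hwB hgw
  have hadj2 : G.Adj g' w := hblock B' hB' g' hg'B' w hwB' hg'w
  obtain ⟨c, q1, q2, h1, h2, hdisj, hb1, hb2, hclt, hca, hcb⟩ := split hG hgg' hdg hdg'
  have hw1 : w ∉ q1.support := fun h => by have := hb1 w h; omega
  have hw2 : w ∉ q2.support := fun h => by have := hb2 w h; omega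
  have hbic := theta2 h1 h2 hgg' hca hcb hadj1 hadj2 hw1 hw2 hdisj
  obtain ⟨D, hD, hsub⟩ := exists_block_superset hbic
  have hgD : g ∈ D := hsub (Or.inl (Or.inl q1.end_mem_support))
  have hg'D : g' ∈ D := hsub (Or.inl (Or.inr q2.end_mem_support))
  have hwD : w ∈ D := hsub (Or.inr rfl)
  have hD_B : D = B := by
    by_contra hne'
    exact hgw (hD.share hB hne' ⟨hgD, hgB⟩ ⟨hwD, hwB⟩)
  have hD_B' : D = B' := by
    by_contra hne'
    exact hg'w (hD.share hB' hne' ⟨hg'D, hg'B'⟩ ⟨hwD, hwB'⟩)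
  exact hBB' (hD_B ▸ hD_B')

end gate
end SimpleGraph
namespace SimpleGraph
section upper
variable {V : Type*} [Fintype V] {G : SimpleGraph V} {T : Set V} {r u v w x y z g : V}

theorem pick_nbr_not_pick
    (hblock : ∀ B : Set V, G.IsBlock B → ∀ u ∈ B, ∀ w ∈ B, u ≠ w → G.Adj u w)
    (hT : T ⊆ {v | ¬ G.IsCutVertex v}) (hinj : Set.InjOn G.clN T)
    (hx : x ∈ T) (hw : w ∈ G.clN x) (hwT : w ∈ T) : w = x := by
  have hbx := noncut_clN_isBlock hblock (hT hx)
  have heq := hbx.eq_clN_of_noncut hblock hw (hT hwT)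
  exact hinj hwT hx heq.symm

theorem dist_lt_card (hG : G.Connected) (r x : V) : G.dist r x < Fintype.card V := by
  obtain ⟨p, hp⟩ := hG.exists_walk_length_eq_dist r x
  have := (p.isPath_of_length_eq_dist hp).length_lt
  omega

theorem pick_ne_gate (hG : G.Connected) (hxr : r ≠ x)
    (hgB : g ∈ G.clN x) (hgate : ∀ z ∈ G.clN x, z ≠ g → G.dist r z = G.dist r g + 1) :
    x ≠ g := by
  intro hxg
  have hd0 : G.dist r x ≠ 0 := fun h0 => hxr (hG.dist_eq_zero_iff.mp h0)
  obtain ⟨cc, hcc, hccd⟩ := exists_penult hG hd0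
  have hccx : cc ≠ x := hcc.ne
  have hccB : cc ∈ G.clN x := mem_clN.mpr (Or.inr hcc.symm)
  have := hgate cc hccB (by rw [← hxg]; exact hccx)
  rw [← hxg] at this
  omega

theorem block_has_third (hG : G.Connected)
    (hnp : ∀ (v : V) (P : Set V), ¬ G.IsPendantPath v P)
    (hxnc : ¬ G.IsCutVertex x) (hgB : g ∈ G.clN x) (hgx : g ≠ x)
    (hsmall : ∀ w ∈ G.clN x, w = x ∨ w = g) : False := by
  have hadjxg : G.Adj x g := by
    rcases mem_clN.mp hgB with h | h
    · exact absurd h hgx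
    · exact h
  have hN : G.neighborSet x = {g} := by
    ext t
    simp only [mem_neighborSet, Set.mem_singleton_iff]
    constructor
    · intro h
      rcases hsmall t (mem_clN.mpr (Or.inr h)) with rfl | rfl
      · exact absurd h (G.loopless.irrefl t)
      · rfl
    · rintro rfl; exact hadjxg
  -- {x} is a pendant path attached to g
  refine hnp g {x} ⟨⟨⟨x, rfl⟩, ?_, ?_, ?_⟩, ⟨⟨x, rfl⟩, ?_, ?_, ?_⟩, x, rfl, hadjxg.symm, ?_⟩
  · simp only [Set.disjoint_singleton]
    exact fun h => hgx h.symm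
  · exact induce_connected_iff_cset.mpr ⟨⟨x, rfl⟩, cset_singleton x⟩
  · rintro p rfl z hz hzg
    exfalso
    have : z ∈ G.neighborSet p := hz
    rw [hN] at this
    exact hzg this
  · exact induce_connected_iff_cset.mpr ⟨⟨x, rfl⟩, cset_singleton x⟩
  · rintro p rfl
    have : G.neighborSet p ∩ {p} = ∅ := by
      ext t
      simp only [Set.mem_inter_iff, mem_neighborSet, Set.mem_singleton_iff,
        Set.mem_empty_iff_false, iff_false, not_and]
      rintro h rfl; exact (G.loopless.irrefl t) h
    rw [this]
    simp
  · refine ⟨x, rfl, ?_⟩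
    have : G.neighborSet x ∩ {x} = ∅ := by
      ext t
      simp only [Set.mem_inter_iff, mem_neighborSet, Set.mem_singleton_iff,
        Set.mem_empty_iff_false, iff_false, not_and]
      rintro h rfl; exact (G.loopless.irrefl t) h
    rw [this]
    simp
  · have : G.neighborSet x ∩ {x} = ∅ := by
      ext t
      simp only [Set.mem_inter_iff, mem_neighborSet, Set.mem_singleton_iff,
        Set.mem_empty_iff_false, iff_false, not_and]
      rintro h rfl; exact (G.loopless.irrefl t) h
    rw [this]
    simp

/-- Each representative vertex is eventually forced starting from the complement. -/
theorem forced_pick (hG : G.Connected)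
    (hblock : ∀ B : Set V, G.IsBlock B → ∀ u ∈ B, ∀ w ∈ B, u ≠ w → G.Adj u w)
    (hnp : ∀ (v : V) (P : Set V), ¬ G.IsPendantPath v P)
    (hT : T ⊆ {v | ¬ G.IsCutVertex v}) (hinj : Set.InjOn G.clN T)
    (hr : r ∈ Tᶜ) : ∀ x ∈ T, G.Forced (Tᶜ : Set V) x := by
  classical
  have key : ∀ n : ℕ, ∀ x ∈ T, Fintype.card V - G.dist r x = n → G.Forced (Tᶜ : Set V) x := by
    intro n
    induction n using Nat.strong_induction_on with
    | _ n ih =>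
    intro x hx hn
    have hxnc : ¬ G.IsCutVertex x := hT hx
    have hbx := noncut_clN_isBlock hblock hxnc
    obtain ⟨g, hgB, hgate⟩ := gate hG hblock hbx r
    have hrx : r ≠ x := fun h => hr (h ▸ hx)
    have hxg : x ≠ g := pick_ne_gate hG hrx hgB hgate
    have hdx : G.dist r x = G.dist r g + 1 := hgate x self_mem_clN hxg
    -- find a third vertex w in the block
    have hthird : ∃ w ∈ G.clN x, w ≠ x ∧ w ≠ g := by
      by_contra hc
      push_neg at hc
      exact block_has_third hG hnp hxnc hgB (Ne.symm hxg)
        (fun w hw => by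
          rcases eq_or_ne w x with h | h
          · exact Or.inl h
          · exact Or.inr (hc w hw h))
    obtain ⟨w, hwB, hwx, hwg⟩ := hthird
    have hwT : w ∈ (Tᶜ : Set V) := fun hwT' => hwx (pick_nbr_not_pick hblock hT hinj hx hwB hwT')
    have hadjwx : G.Adj w x := by
      rcases mem_clN.mp hwB with h | h
      · exact absurd h hwx
      · exact h.symm
    refine Forced.force w x (Forced.init w hwT) hadjwx ?_
    intro z hadjwz hzx
    by_cases hzT : z ∈ T
    · -- z is another representative; it lies strictly deeper
      have hznc : ¬ G.IsCutVertex z := hT hzT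
      have hzB' : z ∉ G.clN x := fun hzB =>
        hzx (pick_nbr_not_pick hblock hT hinj hx hzB hzT)
      have hbz := noncut_clN_isBlock hblock hznc
      have hwBz : w ∈ G.clN z := mem_clN.mpr (Or.inr hadjwz.symm)
      have hBne : G.clN x ≠ G.clN z := by
        intro h
        apply hzB'
        rw [h]
        exact self_mem_clN
      obtain ⟨g', hg'B', hgate'⟩ := gate hG hblock hbz r
      have hrz : r ≠ z := fun h => hr (h ▸ hzT)
      have hzg' : z ≠ g' := pick_ne_gate hG hrz hg'B' hgate'
      have hdz : G.dist r z = G.dist r g' + 1 := hgate' z self_mem_clN hzg'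
      have hdw : G.dist r w = G.dist r g + 1 := hgate w hwB hwg
      have hdzx : G.dist r z = G.dist r x + 1 := by
        rcases eq_or_ne w g' with rfl | hwg'
        · omega
        · have hdw' : G.dist r w = G.dist r g' + 1 := hgate' w hwBz hwg'
          exfalso
          rcases eq_or_ne g g' with rfl | hgg'
          · exact hwg (hbx.share hbz hBne ⟨hwB, hwBz⟩ ⟨hgB, hg'B'⟩)
          · exact gate_cross (r := r) (m := G.dist r g) hG hblock hbx hbz hBne hgB hg'B'
              hwB hwBz hgg' (Ne.symm hwg) (Ne.symm hwg') rfl (by omega) (by omega)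
      have hlt : Fintype.card V - G.dist r z < n := by
        have := dist_lt_card hG r x
        omega
      exact ih _ hlt z hzT rfl
    · exact Forced.init z hzT
  intro x hx
  exact key _ x hx rfl

end upper
end SimpleGraph
namespace SimpleGraph
section glue
variable {V : Type*} [Fintype V] {G : SimpleGraph V} {T S : Set V} {r u v w x y z g : V}

theorem cset_compl_T (hG : G.Connected)
    (hblock : ∀ B : Set V, G.IsBlock B → ∀ u ∈ B, ∀ w ∈ B, u ≠ w → G.Adj u w)
    (hT : T ⊆ {v | ¬ G.IsCutVertex v}) (hinj : Set.InjOn G.clN T) :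
    G.CSet (Tᶜ : Set V) := by
  classical
  have main : ∀ n : ℕ, ∀ a b : V, ∀ p : G.Walk a b, p.length ≤ n →
      a ∈ (Tᶜ : Set V) → b ∈ (Tᶜ : Set V) → G.ReachIn (Tᶜ : Set V) a b := by
    intro n
    induction n using Nat.strong_induction_on with
    | _ n ih =>
    intro a b p hlen ha hb
    cases p with
    | nil => exact .refl ha
    | cons h q =>
      rename_i a2
      by_cases ha2 : a2 ∈ T
      · cases q with
        | nil => exact absurd ha2 hb
        | cons h2 q2 =>
          rename_i a3
          have ha3 : a3 ∈ (Tᶜ : Set V) := by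
            intro h3
            have heq := pick_nbr_not_pick hblock hT hinj ha2 (mem_clN.mpr (Or.inr h2)) h3
            exact (G.loopless.irrefl a2) (heq ▸ h2)
          have hlen2 : q2.length + 2 ≤ n := by
            simp only [Walk.length_cons] at hlen
            omega
          rcases eq_or_ne a a3 with rfl | hne
          · exact ih q2.length (by omega) a b q2 le_rfl ha hb
          · have hadj : G.Adj a a3 := noncut_clique hblock (hT ha2) a
              (mem_clN.mpr (Or.inr h.symm)) a3 (mem_clN.mpr (Or.inr h2)) hne
            exact (ReachIn.single ha ha3 hadj).trans
              (ih q2.length (by omega) a3 b q2 le_rfl ha3 hb)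
      · have hlen1 : q.length + 1 ≤ n := by
          simp only [Walk.length_cons] at hlen
          omega
        exact (ReachIn.single ha ha2 h).trans
          (ih q.length (by omega) a2 b q le_rfl ha2 hb)
  intro a ha b hb
  obtain ⟨p⟩ := hG.preconnected a b
  exact main p.length a b p le_rfl ha hb

theorem compl_T_nonempty (hG : G.Connected)
    (hblock : ∀ B : Set V, G.IsBlock B → ∀ u ∈ B, ∀ w ∈ B, u ≠ w → G.Adj u w)
    (hT : T ⊆ {v | ¬ G.IsCutVertex v}) (hinj : Set.InjOn G.clN T) :
    (Tᶜ : Set V).Nonempty := by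
  by_contra hc
  have hall : ∀ v : V, v ∈ T := by
    intro v
    by_contra hv
    exact hc ⟨v, hv⟩
  obtain ⟨v⟩ := hG.nonempty
  by_cases huniq : ∀ u : V, u = v
  · have hcut : G.IsCutVertex v := by
      intro hconn
      obtain ⟨⟨t, ht⟩⟩ := hconn.nonempty
      exact ht (huniq t)
    exact hT (hall v) hcut
  · push_neg at huniq
    obtain ⟨u, hu⟩ := huniq
    obtain ⟨p⟩ := hG.preconnected u v
    cases p with
    | nil => exact hu rfl
    | cons h q =>
      rename_i z
      have := pick_nbr_not_pick hblock hT hinj (hall u) (mem_clN.mpr (Or.inr h)) (hall z)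
      exact (G.loopless.irrefl u) (this ▸ h)

theorem exit_lemma {C : Set V} (hclosure : ∀ p ∈ C, ∀ z, G.Adj p z → z ≠ u → z ∈ C) :
    ∀ (a e : V) (p : G.Walk a e), e ∉ C → a ∈ C → ∃ y ∈ C, G.Adj u y := by
  intro a e p
  induction p with
  | nil => exact fun he ha => absurd ha he
  | cons hadj q ihq =>
    rename_i a1 a2 a3
    intro he ha1
    by_cases h2 : a2 ∈ C
    · exact ihq he h2
    · have ha2u : a2 = u := by
        by_contra hne
        exact h2 (hclosure a1 ha1 a2 hadj hne)
      exact ⟨a1, ha1, ha2u ▸ hadj.symm⟩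

theorem extract_comp (hG : G.Connected) (hS : G.CSet S) (hSne : S.Nonempty)
    (hcut : G.IsCutVertex u) (huS : u ∉ S) :
    ∃ C : Set V, G.IsCompOfDel {u} C ∧ (∀ s ∈ S, s ∉ C) ∧ ∃ y ∈ C, G.Adj u y := by
  classical
  obtain ⟨s0, hs0⟩ := hSne
  have hSsub : S ⊆ ({u}ᶜ : Set V) := by
    intro s hs
    simp only [Set.mem_compl_iff, Set.mem_singleton_iff]
    rintro rfl
    exact huS hs
  have hs0' := hSsub hs0
  have hnc : ¬ G.CSet ({u}ᶜ : Set V) := fun hcs =>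
    hcut (induce_connected_iff_cset.mpr ⟨⟨s0, hs0'⟩, hcs⟩)
  have hbad : ∃ x ∈ ({u}ᶜ : Set V), ∃ y ∈ ({u}ᶜ : Set V), ¬ G.ReachIn {u}ᶜ x y := by
    by_contra hcb
    push_neg at hcb
    exact hnc fun x hx y hy => hcb x hx y hy
  obtain ⟨x0, hx0, y0, hy0, hxy0⟩ := hbad
  have hpick : ∃ t ∈ ({u}ᶜ : Set V), ¬ G.ReachIn {u}ᶜ t s0 := by
    by_cases hx : G.ReachIn {u}ᶜ x0 s0
    · by_cases hy : G.ReachIn {u}ᶜ y0 s0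
      · exact absurd (hx.trans hy.symm) hxy0
      · exact ⟨y0, hy0, hy⟩
    · exact ⟨x0, hx0, hx⟩
  obtain ⟨t, ht, hts0⟩ := hpick
  set C : Set V := {w | G.ReachIn {u}ᶜ t w} with hC
  have htC : t ∈ C := ReachIn.refl ht
  have hSC : ∀ s ∈ S, s ∉ C := by
    intro s hs hsC
    exact hts0 ((hsC : G.ReachIn {u}ᶜ t s).trans ((hS s hs s0 hs0).mono hSsub))
  have hclosure : ∀ p ∈ C, ∀ z, G.Adj p z → z ∉ ({u} : Set V) → z ∈ C := by
    intro p hp z hadj hz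
    exact (hp : G.ReachIn {u}ᶜ t p).tail hadj (by simpa using hz)
  refine ⟨C, ⟨⟨t, htC⟩, ?_, ?_, hclosure⟩, hSC, ?_⟩
  · rw [Set.disjoint_singleton_right]
    intro h
    exact (h : G.ReachIn {u}ᶜ t u).mem_right rfl
  · refine induce_connected_iff_cset.mpr ⟨⟨t, htC⟩, ?_⟩
    have strengthen : ∀ w, G.ReachIn {u}ᶜ t w → G.ReachIn C t w := by
      intro w hw
      induction hw with
      | refl hx => exact .refl (ReachIn.refl hx)
      | tail h hyz hz ih => exact ih.tail hyz (h.tail hyz hz)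
    intro w1 h1 w2 h2
    exact ((strengthen w1 h1).symm).trans (strengthen w2 h2)
  · have hs0nC : s0 ∉ C := hSC s0 hs0
    obtain ⟨p⟩ := hG.preconnected t s0
    have hclo : ∀ p ∈ C, ∀ z, G.Adj p z → z ≠ u → z ∈ C := by
      intro p hp z hadj hz
      exact hclosure p hp z hadj (by simpa using hz)
    exact exit_lemma hclo t s0 p hs0nC htC

end glue
end SimpleGraph
namespace SimpleGraph
section pathlemma
variable {V : Type*} [Fintype V] {G : SimpleGraph V} {S C : Set V} {u v w x y z : V}

theorem cset_remove_deg1 (hC : G.CSet C) {yy y' : V}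
    (huniq : ∀ z ∈ G.neighborSet yy ∩ C, z = y') :
    G.CSet (C \ {yy}) := by
  have main : ∀ a b, G.ReachIn C a b → a ≠ yy →
      (b ≠ yy → G.ReachIn (C \ {yy}) a b) ∧ (b = yy → G.ReachIn (C \ {yy}) a y') := by
    intro a b h ha
    induction h with
    | refl hx =>
      exact ⟨fun _ => .refl ⟨hx, by simpa using ha⟩, fun h => absurd h ha⟩
    | tail h hyz hz ihh =>
      rename_i p b'
      constructor
      · intro hb
        by_cases hp : p = yy
        · subst hp
          have hb'y' : b' = y' := huniq b' ⟨hyz, hz⟩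
          have := ihh.2 rfl
          rwa [hb'y']
        · exact (ihh.1 hp).tail hyz ⟨hz, by simpa using hb⟩
      · intro hb
        have hp : p ≠ yy := hb ▸ hyz.ne
        have hpy' : p = y' := huniq p ⟨hb ▸ hyz.symm, h.mem_right⟩
        exact hpy' ▸ (ihh.1 hp)
  intro a ha b hb
  exact (main a b (hC a ha.1 b hb.1) (by simpa using ha.2)).1 (by simpa using hb.2)

theorem comp_is_path (hZ : G.IsZeroForcingSet S) :
    ∀ n : ℕ, ∀ C : Set V, ∀ u yy : V, C.ncard ≤ n →
      (∀ s ∈ C, s ∉ S) → G.CSet C → C.Nonempty →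
      (∀ p ∈ C, ∀ z, G.Adj p z → z ≠ u → z ∈ C) → u ∉ C → yy ∈ C →
      (∀ z, G.Adj u z → z ∈ C → z = yy) →
      G.IsPathGraphOn C ∧ (G.neighborSet yy ∩ C).ncard ≤ 1 := by
  intro n
  induction n using Nat.strong_induction_on with
  | _ n ih =>
  intro C u yy hn hCS hCset hCne hclo huC hyyC huniq
  -- Step A: the base vertex has at most one neighbour inside C
  have hdeg : (G.neighborSet yy ∩ C).ncard ≤ 1 := by
    by_contra hc
    push_neg at hc
    obtain ⟨z1, hz1, z2, hz2, hz12⟩ := (Set.one_lt_ncard (Set.toFinite _)).mp hc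
    have hz1F : z1 ∈ C \ {yy} := ⟨hz1.2, fun h => (G.loopless.irrefl yy) (by
      rw [Set.mem_singleton_iff] at h
      exact h ▸ hz1.1)⟩
    have hfort := not_forced_of_fort (G := G) (S := S) (F := C \ {yy})
      (fun t ht => hCS t ht.1) ?_ z1 (hZ z1)
    · exact hfort hz1F
    · intro w hw t ht hadj
      by_cases hwyy : w = yy
      · subst hwyy
        rcases eq_or_ne z1 t with rfl | hne
        · refine ⟨z2, ⟨hz2.2, fun h => (G.loopless.irrefl w) (by
            rw [Set.mem_singleton_iff] at h
            exact h ▸ hz2.1)⟩, hz12.symm, hz2.1⟩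
        · exact ⟨z1, hz1F, hne, hz1.1⟩
      · by_cases hwu : w = u
        · subst hwu
          exact absurd (huniq t hadj ht.1) (by simpa using ht.2)
        · exact absurd (⟨hclo t ht.1 w hadj.symm hwu, hwyy⟩ : w ∈ C \ {yy}) hw
  refine ⟨?_, hdeg⟩
  rcases Set.eq_empty_or_nonempty (C \ {yy}) with hCe | hCne'
  · -- C = {yy}
    refine ⟨hCne, induce_connected_iff_cset.mpr ⟨hCne, hCset⟩, ?_, yy, hyyC, hdeg⟩
    intro t ht
    have : t = yy := by
      by_contra hne
      exact (Set.eq_empty_iff_forall_notMem.mp hCe t) ⟨ht, by simpa using hne⟩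
    subst this
    exact hdeg.trans (by norm_num)
  · -- find the unique neighbour y' of yy in C
    have hex : ∃ y', y' ∈ C ∧ G.Adj y' yy := by
      obtain ⟨t, htC, htyy⟩ := hCne'
      have hri := hCset t htC yy hyyC
      cases hri with
      | refl h => simp at htyy
      | tail h hyz hz => exact ⟨_, h.mem_right, hyz⟩
    obtain ⟨y', hy'C, hy'yy⟩ := hex
    have hy'ne : y' ≠ yy := hy'yy.ne
    have huniq' : ∀ z ∈ G.neighborSet yy ∩ C, z = y' := by
      intro t ht
      by_contra hne
      have h2 : 1 < (G.neighborSet yy ∩ C).ncard := by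
        refine (Set.one_lt_ncard (Set.toFinite _)).mpr ⟨t, ht, y', ⟨hy'yy.symm, hy'C⟩, hne⟩
      omega
    have hC'S : ∀ s ∈ C \ {yy}, s ∉ S := fun s hs => hCS s hs.1
    have hC'cset : G.CSet (C \ {yy}) := cset_remove_deg1 hCset huniq'
    have hC'clo : ∀ p ∈ C \ {yy}, ∀ z, G.Adj p z → z ≠ yy → z ∈ C \ {yy} := by
      intro p hp z hadj hz
      have hzC : z ∈ C := by
        by_cases hzu : z = u
        · exfalso
          subst hzu
          exact (by simpa using hp.2 : p ≠ yy) (huniq p hadj.symm hp.1)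
        · exact hclo p hp.1 z hadj hzu
      exact ⟨hzC, by simpa using hz⟩
    have hyyC' : yy ∉ C \ {yy} := fun h => (by simpa using h.2 : yy ≠ yy) rfl
    have hy'C' : y' ∈ C \ {yy} := ⟨hy'C, by simpa using hy'ne⟩
    have huniq2 : ∀ z, G.Adj yy z → z ∈ C \ {yy} → z = y' := fun z hadj hz =>
      huniq' z ⟨hadj, hz.1⟩
    have hcard : (C \ {yy}).ncard < C.ncard :=
      Set.ncard_diff_singleton_lt_of_mem hyyC (Set.toFinite _)
    obtain ⟨hpath', hdeg'⟩ := ih ((C \ {yy}).ncard) (by omega) (C \ {yy}) yy y' le_rfl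
      hC'S hC'cset ⟨y', hy'C'⟩ hC'clo hyyC' hy'C' huniq2
    refine ⟨hCne, induce_connected_iff_cset.mpr ⟨hCne, hCset⟩, ?_, yy, hyyC, hdeg⟩
    intro t ht
    rcases eq_or_ne t yy with rfl | htne
    · exact hdeg.trans (by norm_num)
    · have htC' : t ∈ C \ {yy} := ⟨ht, by simpa using htne⟩
      by_cases hty : G.Adj t yy
      · have hty' : t = y' := huniq' t ⟨hty.symm, ht⟩
        subst hty'
        have hsub : G.neighborSet t ∩ C ⊆ (G.neighborSet t ∩ (C \ {yy})) ∪ {yy} := by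
          rintro s ⟨hs1, hs2⟩
          rcases eq_or_ne s yy with rfl | hsne
          · exact Or.inr rfl
          · exact Or.inl ⟨hs1, hs2, by simpa using hsne⟩
        have h1 := Set.ncard_le_ncard hsub (Set.toFinite _)
        have h2 := Set.ncard_union_le (G.neighborSet t ∩ (C \ {yy})) ({yy} : Set V)
        have h3 : ({yy} : Set V).ncard = 1 := Set.ncard_singleton yy
        omega
      · have heq : G.neighborSet t ∩ C = G.neighborSet t ∩ (C \ {yy}) := by
          ext s
          simp only [Set.mem_inter_iff, mem_neighborSet, Set.mem_diff, Set.mem_singleton_iff]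
          constructor
          · rintro ⟨h1, h2⟩
            refine ⟨h1, h2, ?_⟩
            rintro rfl
            exact hty h1
          · rintro ⟨h1, h2, _⟩
            exact ⟨h1, h2⟩
        rw [heq]
        exact hpath'.2.2.1 t htC'
end pathlemma
end SimpleGraph
/-- For a block graph `G` with no pendant paths, `Z_c(G) = n − b`, where `b` is the number
of blocks containing at least one non-cut vertex. -/
theorem stmt16 {V : Type} [Fintype V] (G : SimpleGraph V) (hG : G.Connected)
    (hblock : ∀ B : Set V, G.IsBlock B → ∀ u ∈ B, ∀ w ∈ B, u ≠ w → G.Adj u w)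
    (hnp : ∀ (v : V) (P : Set V), ¬ G.IsPendantPath v P) :
    G.czfNumber = Fintype.card V -
      {B : Set V | G.IsBlock B ∧ ∃ u ∈ B, ¬ G.IsCutVertex u}.ncard := by
  classical
  have hbeq : {B : Set V | G.IsBlock B ∧ ∃ u ∈ B, ¬ G.IsCutVertex u} =
      G.clN '' {v | ¬ G.IsCutVertex v} := by
    ext B
    constructor
    · rintro ⟨hB, u, huB, hnc⟩
      exact ⟨u, hnc, (hB.eq_clN_of_noncut hblock huB hnc).symm⟩
    · rintro ⟨v, hv, rfl⟩
      exact ⟨SimpleGraph.noncut_clN_isBlock hblock hv, v, SimpleGraph.self_mem_clN, hv⟩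
  -- choose a set of representatives, one non-cut vertex per block
  have hne : Nonempty V := hG.nonempty
  have hreps : ∃ T ⊆ {v | ¬ G.IsCutVertex v}, Set.InjOn G.clN T ∧
      G.clN '' T = G.clN '' {v | ¬ G.IsCutVertex v} := by
    set f : Set V → V := fun B =>
      if h : ∃ v, ¬ G.IsCutVertex v ∧ G.clN v = B then h.choose else hne.some with hf
    have hkey : ∀ B ∈ G.clN '' {v | ¬ G.IsCutVertex v},
        ¬ G.IsCutVertex (f B) ∧ G.clN (f B) = B := by
      rintro B ⟨v, hv, rfl⟩
      have hex : ∃ w, ¬ G.IsCutVertex w ∧ G.clN w = G.clN v := ⟨v, hv, rfl⟩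
      rw [hf]
      simp only [dif_pos hex]
      exact hex.choose_spec
    refine ⟨f '' (G.clN '' {v | ¬ G.IsCutVertex v}), ?_, ?_, ?_⟩
    · rintro t ⟨B, hB, rfl⟩
      exact (hkey B hB).1
    · rintro t1 ⟨B1, hB1, rfl⟩ t2 ⟨B2, hB2, rfl⟩ heq
      rw [(hkey B1 hB1).2, (hkey B2 hB2).2] at heq
      rw [heq]
    · apply subset_antisymm
      · rintro B ⟨t, ⟨B', hB', rfl⟩, rfl⟩
        rw [(hkey B' hB').2]
        exact hB'
      · rintro B hB
        exact ⟨f B, ⟨B, hB, rfl⟩, (hkey B hB).2⟩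
  obtain ⟨T, hT, hinj, himg⟩ := hreps
  have hb : {B : Set V | G.IsBlock B ∧ ∃ u ∈ B, ¬ G.IsCutVertex u}.ncard = T.ncard := by
    rw [hbeq, ← himg, Set.ncard_image_of_injOn hinj]
  -- the complement of T is a connected zero forcing set
  obtain ⟨r, hr⟩ := SimpleGraph.compl_T_nonempty hG hblock hT hinj
  have hZFS : G.IsZeroForcingSet (Tᶜ : Set V) := by
    intro v
    by_cases hv : v ∈ T
    · exact SimpleGraph.forced_pick hG hblock hnp hT hinj hr v hv
    · exact SimpleGraph.Forced.init v hv
  have hconn : (G.induce (Tᶜ : Set V)).Connected :=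
    SimpleGraph.induce_connected_iff_cset.mpr
      ⟨⟨r, hr⟩, SimpleGraph.cset_compl_T hG hblock hT hinj⟩
  have hcards : T.ncard + (Tᶜ : Set V).ncard = Fintype.card V := by
    have := Set.ncard_add_ncard_compl T
    rwa [Nat.card_eq_fintype_card] at this
  have hmem : (Fintype.card V - T.ncard) ∈
      {n | ∃ S : Set V, G.IsConnectedZFS S ∧ S.ncard = n} :=
    ⟨Tᶜ, ⟨hZFS, hconn⟩, by omega⟩
  -- every connected zero forcing set has at least n - b vertices
  have hlb : ∀ k ∈ {n | ∃ S : Set V, G.IsConnectedZFS S ∧ S.ncard = n},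
      Fintype.card V - T.ncard ≤ k := by
    rintro k ⟨S, ⟨hSz, hSconn⟩, rfl⟩
    obtain ⟨hSne, hScset⟩ := SimpleGraph.induce_connected_iff_cset.mp hSconn
    have hSnc : ∀ u ∈ (Sᶜ : Set V), ¬ G.IsCutVertex u := by
      intro u huS hcut
      obtain ⟨C, hcomp, hCS, y0, hy0C, hy0adj⟩ :=
        SimpleGraph.extract_comp hG hScset hSne hcut huS
      obtain ⟨hCne, hCdisj, hCconn, hCclo⟩ := hcomp
      have hCcset := (SimpleGraph.induce_connected_iff_cset.mp hCconn).2
      have hCS' : ∀ s ∈ C, s ∉ S := fun s hs hsS => hCS s hsS hs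
      have hclo' : ∀ p ∈ C, ∀ z, G.Adj p z → z ≠ u → z ∈ C := by
        intro p hp z hadj hz
        exact hCclo p hp z hadj (by simpa using hz)
      by_cases h2 : 1 < (G.neighborSet u ∩ C).ncard
      · obtain ⟨z1, hz1, z2, hz2, hz12⟩ := (Set.one_lt_ncard (Set.toFinite _)).mp h2
        have hfort := SimpleGraph.not_forced_of_fort (G := G) (S := S) (F := C) hCS'
          ?_ z1 (hSz z1)
        · exact hfort hz1.2
        · intro w hw t ht hadj
          have hwu : w = u := by
            by_contra hnu
            exact hw (hclo' t ht w hadj.symm hnu)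
          subst hwu
          rcases eq_or_ne z1 t with rfl | hne'
          · exact ⟨z2, hz2.2, hz12.symm, hz2.1⟩
          · exact ⟨z1, hz1.2, hne', hz1.1⟩
      · push_neg at h2
        have hy0mem : y0 ∈ G.neighborSet u ∩ C := ⟨hy0adj, hy0C⟩
        have huniq : ∀ z, G.Adj u z → z ∈ C → z = y0 := by
          intro t hadj htC
          by_contra hne'
          have : 1 < (G.neighborSet u ∩ C).ncard := (Set.one_lt_ncard (Set.toFinite _)).mpr
            ⟨t, ⟨hadj, htC⟩, y0, hy0mem, hne'⟩
          omega
        have huC : u ∉ C := fun hu => (Set.disjoint_left.mp hCdisj hu) rfl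
        have hpp := SimpleGraph.comp_is_path hSz C.ncard C u y0 le_rfl hCS' hCcset hCne
          hclo' huC hy0C huniq
        exact hnp u C ⟨⟨hCne, hCdisj, hCconn, hCclo⟩, hpp.1, y0, hy0C, hy0adj, hpp.2⟩
    have hSinj : Set.InjOn G.clN (Sᶜ : Set V) := by
      intro p hp q hq heq
      by_contra hnepq
      have hpq : G.Adj p q := by
        have hpm : p ∈ G.clN q := heq ▸ SimpleGraph.self_mem_clN
        rcases SimpleGraph.mem_clN.mp hpm with h | h
        · exact absurd h hnepq
        · exact h.symm
      have hsecond : ∀ w, w ∉ ({p, q} : Set V) → ∀ t ∈ ({p, q} : Set V), G.Adj w t →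
          ∃ y', y' ∈ ({p, q} : Set V) ∧ y' ≠ t ∧ G.Adj w y' := by
        intro w hw t ht hadj
        rcases ht with rfl | rfl
        · refine ⟨q, Or.inr rfl, fun h => hnepq h.symm, ?_⟩
          have hwm : w ∈ G.clN q := heq ▸ SimpleGraph.mem_clN.mpr (Or.inr hadj.symm)
          rcases SimpleGraph.mem_clN.mp hwm with h | h
          · exact absurd (Or.inr h) hw
          · exact h.symm
        · refine ⟨p, Or.inl rfl, fun h => hnepq h, ?_⟩
          have hwm : w ∈ G.clN p := heq ▸ SimpleGraph.mem_clN.mpr (Or.inr hadj.symm)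
          rcases SimpleGraph.mem_clN.mp hwm with h | h
          · exact absurd (Or.inl h) hw
          · exact h.symm
      have hfort := SimpleGraph.not_forced_of_fort (G := G) (S := S) (F := {p, q})
        ?_ hsecond p (hSz p)
      · exact hfort (Or.inl rfl)
      · rintro t (rfl | rfl)
        · exact hp
        · exact hq
    have h1 : (Sᶜ : Set V).ncard = (G.clN '' (Sᶜ : Set V)).ncard :=
      (Set.ncard_image_of_injOn hSinj).symm
    have h2 : (G.clN '' (Sᶜ : Set V)) ⊆ G.clN '' {v | ¬ G.IsCutVertex v} :=
      Set.image_mono (fun u hu => hSnc u hu)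
    have h3 := Set.ncard_le_ncard h2 (Set.toFinite _)
    have h4 : T.ncard = (G.clN '' {v | ¬ G.IsCutVertex v}).ncard := by
      rw [← himg, Set.ncard_image_of_injOn hinj]
    have h5 : S.ncard + (Sᶜ : Set V).ncard = Fintype.card V := by
      have := Set.ncard_add_ncard_compl S
      rwa [Nat.card_eq_fintype_card] at this
    omega
  rw [hb]
  have hsetne : {n | ∃ S : Set V, G.IsConnectedZFS S ∧ S.ncard = n}.Nonempty := ⟨_, hmem⟩
  have hge := hlb _ (Nat.sInf_mem hsetne)
  have hle := Nat.sInf_le hmem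
  exact le_antisymm hle hge
end
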